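/- arXiv:2302.09058 — 8 statements merged into one kernel-verified Lean document; each statement's English description precedes it below -/
import Mathlib

section
/- Let N be a norm on ℝ². Then for every ε > 0 there exists n₀ such that for every n ≥ n₀ there is an injective map p : Fin n → EuclideanSpace ℝ (Fin 2) for which the number of unordered pairs {x, y} of distinct indices with N (p x − p y) = 1 is at least (1/log₂ 3 − ε)·n·log₂ n. -/
/-- A norm on `ℝ^d`. -/
def IsNorm {d : ℕ} (N : EuclideanSpace ℝ (Fin d) → ℝ) : Prop :=
  (∀ x, N x = 0 ↔ x = 0) ∧ (∀ (a : ℝ) (x), N (a • x) = |a| * N x) ∧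
    ∀ x y, N (x + y) ≤ N x + N y

open Real Set

local notation "E2" => EuclideanSpace ℝ (Fin 2)

section Basics
variable {N : E2 → ℝ}

lemma nzero (hN : IsNorm N) : N 0 = 0 := (hN.1 0).mpr rfl

lemma nneg' (hN : IsNorm N) (x : E2) : N (-x) = N x := by
  have h := hN.2.1 (-1) x
  simpa using h

lemma nnonneg (hN : IsNorm N) (x : E2) : 0 ≤ N x := by
  have h := hN.2.2 x (-x)
  rw [add_neg_cancel, nzero hN, nneg' hN] at h
  linarith

lemma npos (hN : IsNorm N) {x : E2} (hx : x ≠ 0) : 0 < N x := by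
  rcases lt_or_eq_of_le (nnonneg hN x) with h | h
  · exact h
  · exact absurd ((hN.1 x).mp h.symm) hx

lemma nsub_le (hN : IsNorm N) (x y : E2) : N x - N y ≤ N (x - y) := by
  have h := hN.2.2 (x - y) y
  rw [sub_add_cancel] at h
  linarith

lemma nsub_comm (hN : IsNorm N) (x y : E2) : N (x - y) = N (y - x) := by
  rw [← nneg' hN (x - y), neg_sub]

lemma nconvex (hN : IsNorm N) (a b : ℝ) (ha : 0 ≤ a) (hb : 0 ≤ b) (x y : E2) :
    N (a • x + b • y) ≤ a * N x + b * N y := by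
  have h := hN.2.2 (a • x) (b • y)
  rw [hN.2.1 a x, hN.2.1 b y, abs_of_nonneg ha, abs_of_nonneg hb] at h
  exact h

lemma coord_le_norm (z : E2) (i : Fin 2) : |z i| ≤ ‖z‖ := by
  rw [EuclideanSpace.norm_eq]
  have h1 : |z i| = Real.sqrt (‖z i‖ ^ 2) := by
    rw [Real.sqrt_sq_eq_abs]; simp
  rw [h1]
  apply Real.sqrt_le_sqrt
  apply Finset.single_le_sum (f := fun j => ‖z j‖ ^ 2)
  · intro j _; positivity
  · exact Finset.mem_univ i

lemma decomp (z : E2) :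
    z = z 0 • (EuclideanSpace.single (0 : Fin 2) (1:ℝ)) + z 1 • (EuclideanSpace.single (1 : Fin 2) (1:ℝ)) := by
  ext i
  fin_cases i <;>
    simp [EuclideanSpace.single_apply]

lemma nle_norm (hN : IsNorm N) (z : E2) :
    N z ≤ (N (EuclideanSpace.single (0 : Fin 2) (1:ℝ)) + N (EuclideanSpace.single (1 : Fin 2) (1:ℝ))) * ‖z‖ := by
  set s0 := EuclideanSpace.single (0 : Fin 2) (1:ℝ)
  set s1 := EuclideanSpace.single (1 : Fin 2) (1:ℝ)
  calc N z = N (z 0 • s0 + z 1 • s1) := by rw [← decomp]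
    _ ≤ N (z 0 • s0) + N (z 1 • s1) := hN.2.2 _ _
    _ = |z 0| * N s0 + |z 1| * N s1 := by rw [hN.2.1, hN.2.1]
    _ ≤ ‖z‖ * N s0 + ‖z‖ * N s1 := by
        apply add_le_add <;> apply mul_le_mul_of_nonneg_right (coord_le_norm z _) (nnonneg hN _)
    _ = (N s0 + N s1) * ‖z‖ := by ring

lemma ncont (hN : IsNorm N) : Continuous N := by
  set C := N (EuclideanSpace.single (0 : Fin 2) (1:ℝ)) + N (EuclideanSpace.single (1 : Fin 2) (1:ℝ)) with hC
  have hC0 : 0 ≤ C := add_nonneg (nnonneg hN _) (nnonneg hN _)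
  apply Metric.continuous_iff.mpr
  intro b ε hε
  rcases eq_or_lt_of_le hC0 with h0 | h0
  · refine ⟨1, one_pos, fun a _ => ?_⟩
    have h1 : N a - N b ≤ N (a - b) := nsub_le hN a b
    have h2 : N b - N a ≤ N (a - b) := by rw [nsub_comm hN]; exact nsub_le hN b a
    have h3 : N (a - b) ≤ C * ‖a - b‖ := nle_norm hN _
    rw [← h0] at h3
    rw [Real.dist_eq]
    rw [abs_lt]; constructor <;> nlinarith
  · refine ⟨ε / C, by positivity, fun a ha => ?_⟩
    have h1 : N a - N b ≤ N (a - b) := nsub_le hN a b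
    have h2 : N b - N a ≤ N (a - b) := by rw [nsub_comm hN]; exact nsub_le hN b a
    have h3 : N (a - b) ≤ C * ‖a - b‖ := nle_norm hN _
    have h4 : ‖a - b‖ < ε / C := by rw [← dist_eq_norm]; exact ha
    rw [Real.dist_eq, abs_lt]
    have : C * ‖a - b‖ < C * (ε / C) := by apply mul_lt_mul_of_pos_left h4 h0
    rw [mul_div_cancel₀ _ (ne_of_gt h0)] at this
    constructor <;> nlinarith

end Basics

section Curve
variable (N : E2 → ℝ)

noncomputable def ee (t : ℝ) : E2 :=
  EuclideanSpace.single (0 : Fin 2) (1:ℝ) + t • EuclideanSpace.single (1 : Fin 2) (1:ℝ)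

lemma ee_cont : Continuous (ee) := by
  unfold ee
  exact continuous_const.add (continuous_id.smul continuous_const)

lemma ee_apply0 (t : ℝ) : ee t 0 = 1 := by
  simp [ee, EuclideanSpace.single_apply]

lemma ee_apply1 (t : ℝ) : ee t 1 = t := by
  simp [ee, EuclideanSpace.single_apply]

lemma ee_ne (t : ℝ) : ee t ≠ 0 := by
  intro h
  have : ee t 0 = (0:E2) 0 := congrArg (fun v : E2 => v 0) h
  rw [ee_apply0] at this
  simpa using this

noncomputable def rr (t : ℝ) : ℝ := N (ee t)

variable {N}

lemma rr_pos (hN : IsNorm N) (t : ℝ) : 0 < rr N t := npos hN (ee_ne t)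

lemma rr_cont (hN : IsNorm N) : Continuous (rr N) := (ncont hN).comp (ee_cont)

variable (N)

noncomputable def uu (t : ℝ) : E2 := (rr N t)⁻¹ • ee t

variable {N}

lemma uu_unit (hN : IsNorm N) (t : ℝ) : N (uu N t) = 1 := by
  unfold uu
  rw [hN.2.1, abs_of_pos (inv_pos.mpr (rr_pos hN t))]
  exact inv_mul_cancel₀ (ne_of_gt (rr_pos hN t))

lemma uu_cont (hN : IsNorm N) : Continuous (uu N) := by
  unfold uu
  exact (((rr_cont hN).inv₀ (fun t => ne_of_gt (rr_pos hN t)))).smul (ee_cont)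

lemma uu_apply0 (hN : IsNorm N) (t : ℝ) : uu N t 0 = (rr N t)⁻¹ := by
  show (rr N t)⁻¹ * (ee t 0) = _
  rw [ee_apply0, mul_one]

lemma uu_apply1 (hN : IsNorm N) (t : ℝ) : uu N t 1 = (rr N t)⁻¹ * t := by
  show (rr N t)⁻¹ * (ee t 1) = _
  rw [ee_apply1]

lemma uu_inj (hN : IsNorm N) : Function.Injective (uu N) := by
  intro t s h
  have h0 : uu N t 0 = uu N s 0 := by rw [h]
  have h1 : uu N t 1 = uu N s 1 := by rw [h]
  rw [uu_apply0 hN, uu_apply0 hN] at h0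
  rw [uu_apply1 hN, uu_apply1 hN] at h1
  have ht : (rr N t)⁻¹ ≠ 0 := inv_ne_zero (ne_of_gt (rr_pos hN t))
  rw [h0] at h1
  exact mul_left_cancel₀ (h0 ▸ ht) h1

/-- every unit vector of the curve extends to a unit triangle -/
lemma exists_w (hN : IsNorm N) (t : ℝ) :
    ∃ w : E2, N w = 1 ∧ N (uu N t - w) = 1 := by
  set u := uu N t with hu
  set s1 := EuclideanSpace.single (1 : Fin 2) (1:ℝ) with hs1
  set d : ℝ → E2 := fun s => Real.cos (Real.pi * s) • u + Real.sin (Real.pi * s) • s1 with hd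
  have hdne : ∀ s, d s ≠ 0 := by
    intro s h
    have h0 : d s 0 = (0:E2) 0 := congrArg (fun v : E2 => v 0) h
    have h1 : d s 1 = (0:E2) 1 := congrArg (fun v : E2 => v 1) h
    have e0 : d s 0 = Real.cos (Real.pi * s) * (rr N t)⁻¹ := by
      show Real.cos (Real.pi * s) * (u 0) + Real.sin (Real.pi * s) * (s1 0) = _
      rw [hu, uu_apply0 hN]
      simp [hs1, EuclideanSpace.single_apply]
    have e1 : d s 1 = Real.cos (Real.pi * s) * (u 1) + Real.sin (Real.pi * s) := by
      show Real.cos (Real.pi * s) * (u 1) + Real.sin (Real.pi * s) * (s1 1) = _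
      simp [hs1, EuclideanSpace.single_apply]
    have hz : (0:E2) 0 = 0 := rfl
    have hz1 : (0:E2) 1 = 0 := rfl
    rw [e0, hz] at h0
    rw [e1, hz1] at h1
    have hc : Real.cos (Real.pi * s) = 0 := by
      rcases mul_eq_zero.mp h0 with h | h
      · exact h
      · exact absurd h (inv_ne_zero (ne_of_gt (rr_pos hN t)))
    rw [hc] at h1
    have hsin : Real.sin (Real.pi * s) = 0 := by linarith [h1]
    have := Real.sin_sq_add_cos_sq (Real.pi * s)
    rw [hc, hsin] at this
    norm_num at this
  have hdcont : Continuous d := by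
    apply Continuous.add
    · exact (Real.continuous_cos.comp (continuous_const.mul continuous_id)).smul continuous_const
    · exact (Real.continuous_sin.comp (continuous_const.mul continuous_id)).smul continuous_const
  set f : ℝ → ℝ := fun s => N (u - (N (d s))⁻¹ • d s) with hf
  have hfcont : Continuous f := by
    apply (ncont hN).comp
    apply Continuous.sub continuous_const
    exact (((ncont hN).comp hdcont).inv₀
      (fun s => ne_of_gt (npos hN (hdne s)))).smul hdcont
  have hd0 : d 0 = u := by
    rw [hd]; simp
  have hd1 : d 1 = -u := by
    rw [hd]; simp
  have hf0 : f 0 = 0 := by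
    rw [hf]; simp only [hd0, hu]
    rw [uu_unit hN]
    norm_num
    exact nzero hN
  have hnu : N (-u) = 1 := by rw [nneg' hN, hu, uu_unit hN]
  have hf1 : f 1 = 2 := by
    rw [hf]; simp only [hd1, hnu]
    norm_num
    rw [← two_smul ℝ, hN.2.1, hu, uu_unit hN]
    norm_num
  have : (1:ℝ) ∈ Set.Icc (f 0) (f 1) := by rw [hf0, hf1]; norm_num
  obtain ⟨s, _, hs⟩ := intermediate_value_Icc (by norm_num : (0:ℝ) ≤ 1) hfcont.continuousOn this
  refine ⟨(N (d s))⁻¹ • d s, ?_, hs⟩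
  rw [hN.2.1, abs_of_pos (inv_pos.mpr (npos hN (hdne s)))]
  exact inv_mul_cancel₀ (ne_of_gt (npos hN (hdne s)))

end Curve

def Flat (N : E2 → ℝ) : Prop :=
  ∃ x y : E2, x ≠ y ∧ ∀ l ∈ Set.Icc (0:ℝ) 1, N (l • x + (1 - l) • y) = 1

section LemS
variable {N : E2 → ℝ}

lemma seg_flat (hN : IsNorm N) {A B pt : E2} (hA : N A ≤ 1) (hB : N B ≤ 1)
    (hp : N pt = 1) {μ : ℝ} (h0 : 0 < μ) (h1 : μ < 1) (hAB : A ≠ B)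
    (hc : pt = μ • A + (1 - μ) • B) : Flat N := by
  have hcv := nconvex hN μ (1 - μ) (le_of_lt h0) (by linarith) A B
  rw [← hc, hp] at hcv
  have hNA : N A = 1 := by nlinarith [nnonneg hN A, nnonneg hN B]
  have hNB : N B = 1 := by nlinarith [nnonneg hN A, nnonneg hN B]
  refine ⟨A, B, hAB, ?_⟩
  rintro l ⟨hl0, hl1⟩
  have hub : N (l • A + (1 - l) • B) ≤ 1 := by
    have := nconvex hN l (1 - l) hl0 (by linarith) A B
    rw [hNA, hNB] at this; linarith
  by_cases hcase : l ≤ μ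
  · have hl1' : l < 1 := lt_of_le_of_lt hcase h1
    have hne : (1:ℝ) - l ≠ 0 := by linarith
    obtain ⟨a, ha⟩ : ∃ a : ℝ, a = (μ - l) / (1 - l) := ⟨_, rfl⟩
    have key : a * (1 - l) = μ - l := by
      rw [ha]; field_simp
    have ha0 : 0 ≤ a := by rw [ha]; exact div_nonneg (by linarith) (by linarith)
    have ha1 : a < 1 := by rw [ha, div_lt_one (by linarith)]; linarith
    have hid : pt = a • A + (1 - a) • (l • A + (1 - l) • B) := by
      rw [hc]; match_scalars
      · linear_combination -key
      · linear_combination key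
    have hcv2 := nconvex hN a (1 - a) ha0 (by linarith) A (l • A + (1 - l) • B)
    rw [← hid, hp, hNA] at hcv2
    nlinarith
  · push_neg at hcase
    have hl0' : 0 < l := lt_trans h0 hcase
    have hne : l ≠ 0 := ne_of_gt hl0'
    obtain ⟨b, hb⟩ : ∃ b : ℝ, b = (l - μ) / l := ⟨_, rfl⟩
    have key : b * l = l - μ := by rw [hb]; field_simp
    have hb0 : 0 ≤ b := by rw [hb]; exact div_nonneg (by linarith) (by linarith)
    have hb1 : b < 1 := by rw [hb, div_lt_one hl0']; linarith
    have hid : pt = b • B + (1 - b) • (l • A + (1 - l) • B) := by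
      rw [hc]; match_scalars
      · linear_combination key
      · linear_combination -key
    have hcv2 := nconvex hN b (1 - b) hb0 (by linarith) B (l • A + (1 - l) • B)
    rw [← hid, hp, hNB] at hcv2
    nlinarith

def wf (c p : E2) : ℝ := c 1 * p 0 - c 0 * p 1
def xf (c p : E2) : ℝ := c 0 * p 0 + c 1 * p 1

lemma pilp_add_apply (x y : E2) (i : Fin 2) : (x + y) i = x i + y i := rfl
lemma pilp_sub_apply (x y : E2) (i : Fin 2) : (x - y) i = x i - y i := rfl
lemma pilp_smul_apply (a : ℝ) (x : E2) (i : Fin 2) : (a • x) i = a * x i := rfl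

lemma wf_comb (c : E2) (a b : ℝ) (x y : E2) :
    wf c (a • x + b • y) = a * wf c x + b * wf c y := by
  unfold wf
  rw [pilp_add_apply, pilp_add_apply, pilp_smul_apply, pilp_smul_apply,
    pilp_smul_apply, pilp_smul_apply]
  ring

lemma xf_comb (c : E2) (a b : ℝ) (x y : E2) :
    xf c (a • x + b • y) = a * xf c x + b * xf c y := by
  unfold xf
  rw [pilp_add_apply, pilp_add_apply, pilp_smul_apply, pilp_smul_apply,
    pilp_smul_apply, pilp_smul_apply]
  ring

lemma wf_sub (c : E2) (x y : E2) : wf c (x - y) = wf c x - wf c y := by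
  unfold wf; rw [pilp_sub_apply, pilp_sub_apply]; ring

lemma xf_sub (c : E2) (x y : E2) : xf c (x - y) = xf c x - xf c y := by
  unfold xf; rw [pilp_sub_apply, pilp_sub_apply]; ring

lemma wf_self (c : E2) : wf c c = 0 := by unfold wf; ring

lemma xf_self (c : E2) : xf c c = c 0 ^ 2 + c 1 ^ 2 := by unfold xf; ring

lemma ss_pos {c : E2} (hc : c ≠ 0) : 0 < c 0 ^ 2 + c 1 ^ 2 := by
  rcases eq_or_ne (c 0) 0 with h0 | h0
  · rcases eq_or_ne (c 1) 0 with h1 | h1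
    · exfalso; apply hc; ext i; fin_cases i
      · exact h0
      · exact h1
    · nlinarith [sq_nonneg (c 0), sq_nonneg (c 1), sq_abs (c 1), abs_pos.mpr h1]
  · nlinarith [sq_nonneg (c 0), sq_nonneg (c 1), sq_abs (c 0), abs_pos.mpr h0]

lemma coords_eq {c : E2} (hc : c ≠ 0) {p q : E2}
    (hw : wf c p = wf c q) (hx : xf c p = xf c q) : p = q := by
  have hS := ss_pos hc
  have k0 : (c 0 ^ 2 + c 1 ^ 2) * (p 0 - q 0)
      = c 1 * (wf c p - wf c q) + c 0 * (xf c p - xf c q) := by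
    unfold wf xf; ring
  have k1 : (c 0 ^ 2 + c 1 ^ 2) * (p 1 - q 1)
      = - c 0 * (wf c p - wf c q) + c 1 * (xf c p - xf c q) := by
    unfold wf xf; ring
  rw [hw, hx] at k0 k1
  have z0 : (c 0 ^ 2 + c 1 ^ 2) * (p 0 - q 0) = 0 := by rw [k0]; ring
  have z1 : (c 0 ^ 2 + c 1 ^ 2) * (p 1 - q 1) = 0 := by rw [k1]; ring
  have e0 : p 0 = q 0 := by
    have := (mul_eq_zero.mp z0).resolve_left (ne_of_gt hS); linarith
  have e1 : p 1 = q 1 := by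
    have := (mul_eq_zero.mp z1).resolve_left (ne_of_gt hS); linarith
  ext i; fin_cases i
  · exact e0
  · exact e1

lemma lemS (hN : IsNorm N) {c : E2} (hc : c ≠ 0) {t0 t1 : ℝ} (ht : t0 < t1)
    (h : ∀ t ∈ Set.Icc t0 t1, N (uu N t - c) = 1) : Flat N := by
  set SS := c 0 ^ 2 + c 1 ^ 2 with hSS
  have hS : 0 < SS := ss_pos hc
  by_cases himp : ∃ t ∈ Set.Icc t0 t1, ∃ p : E2, N p ≤ 1 ∧ wf c p = wf c (uu N t) ∧
      (xf c (uu N t) < xf c p ∨ xf c p < xf c (uu N t) - SS)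
  · obtain ⟨t, htI, p, hp1, hpw, hcase⟩ := himp
    have hut : N (uu N t) = 1 := uu_unit hN t
    have hutc : N (uu N t - c) = 1 := h t htI
    have hxuc : xf c (uu N t - c) = xf c (uu N t) - SS := by rw [xf_sub, xf_self, hSS]
    have hwuc : wf c (uu N t - c) = wf c (uu N t) := by rw [wf_sub, wf_self, sub_zero]
    rcases hcase with hgt | hlt
    · set μ := (xf c p - xf c (uu N t)) / (xf c p - xf c (uu N t) + SS) with hμ
      have hnum : 0 < xf c p - xf c (uu N t) := by linarith
      have hden : 0 < xf c p - xf c (uu N t) + SS := by linarith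
      have hμ0 : 0 < μ := div_pos hnum hden
      have hμ1 : μ < 1 := by rw [hμ, div_lt_one hden]; linarith
      refine seg_flat hN (le_of_eq hutc) hp1 hut hμ0 hμ1 ?_ ?_
      · intro hAB
        have := congrArg (xf c) hAB
        rw [hxuc] at this; linarith
      · apply coords_eq hc
        · rw [wf_comb, hwuc, hpw]; ring
        · rw [xf_comb, hxuc, hμ]; field_simp; ring
    · set μ := SS / (xf c (uu N t) - xf c p) with hμ
      have hnum : SS < xf c (uu N t) - xf c p := by linarith
      have hden : 0 < xf c (uu N t) - xf c p := by linarith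
      have hμ0 : 0 < μ := div_pos hS hden
      have hμ1 : μ < 1 := by rw [hμ, div_lt_one hden]; linarith
      refine seg_flat hN hp1 (le_of_eq hut) hutc hμ0 hμ1 ?_ ?_
      · intro hAB
        have := congrArg (xf c) hAB; linarith
      · apply coords_eq hc
        · rw [hwuc, wf_comb, hpw]; ring
        · rw [hxuc, xf_comb, hμ]; field_simp; ring
  · push_neg at himp
    have hxy : uu N t0 ≠ uu N t1 := by
      intro hh; have := uu_inj hN hh; linarith
    refine ⟨uu N t0, uu N t1, hxy, ?_⟩
    rintro l ⟨hl0, hl1⟩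
    set Q := l • uu N t0 + (1 - l) • uu N t1 with hQ
    have hx1 : N (uu N t0) = 1 := uu_unit hN t0
    have hy1 : N (uu N t1) = 1 := uu_unit hN t1
    have hQ1 : N Q ≤ 1 := by
      have := nconvex hN l (1 - l) hl0 (by linarith) (uu N t0) (uu N t1)
      rw [hx1, hy1] at this; linarith
    have hxc : N (uu N t0 - c) = 1 := h t0 ⟨le_refl _, le_of_lt ht⟩
    have hyc : N (uu N t1 - c) = 1 := h t1 ⟨le_of_lt ht, le_refl _⟩
    have hQcid : Q - c = l • (uu N t0 - c) + (1 - l) • (uu N t1 - c) := by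
      rw [hQ]; module
    have hQc1 : N (Q - c) ≤ 1 := by
      rw [hQcid]
      have := nconvex hN l (1 - l) hl0 (by linarith) (uu N t0 - c) (uu N t1 - c)
      rw [hxc, hyc] at this; linarith
    -- intermediate value for the wf coordinate
    obtain ⟨g, hgdef⟩ : ∃ g : ℝ → ℝ, g = fun t => wf c (uu N t) := ⟨_, rfl⟩
    have hgform : ∀ t, g t = (rr N t)⁻¹ * (c 1 - c 0 * t) := by
      intro t
      rw [hgdef]
      show c 1 * (uu N t 0) - c 0 * (uu N t 1) = _
      rw [uu_apply0 hN, uu_apply1 hN]; ring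
    have hgcont : Continuous g := by
      have hcc : Continuous fun t => (rr N t)⁻¹ * (c 1 - c 0 * t) := by
        apply Continuous.mul
        · exact (rr_cont hN).inv₀ (fun t => ne_of_gt (rr_pos hN t))
        · continuity
      convert hcc using 1
      funext t; exact hgform t
    have hmem : l * g t0 + (1 - l) * g t1 ∈ Set.uIcc (g t0) (g t1) := by
      rcases le_total (g t0) (g t1) with hle | hle
      · rw [Set.uIcc_of_le hle]
        have h1 : 0 ≤ (1 - l) * (g t1 - g t0) := mul_nonneg (by linarith) (by linarith)
        have h2 : 0 ≤ l * (g t1 - g t0) := mul_nonneg hl0 (by linarith)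
        constructor <;> nlinarith
      · rw [Set.uIcc_of_ge hle]
        have h1 : 0 ≤ (1 - l) * (g t0 - g t1) := mul_nonneg (by linarith) (by linarith)
        have h2 : 0 ≤ l * (g t0 - g t1) := mul_nonneg hl0 (by linarith)
        constructor <;> nlinarith
    obtain ⟨ts, htsI, hts⟩ := intermediate_value_uIcc hgcont.continuousOn hmem
    rw [Set.uIcc_of_le (le_of_lt ht)] at htsI
    have hts' : wf c (uu N ts) = l * wf c (uu N t0) + (1 - l) * wf c (uu N t1) := by
      rw [hgdef] at hts; exact hts
    have hwQ : wf c Q = wf c (uu N ts) := by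
      rw [hQ, wf_comb, hts']
    have h1 := himp ts htsI Q hQ1 hwQ
    have hwQc : wf c (Q - c) = wf c (uu N ts) := by
      rw [wf_sub, wf_self, sub_zero]; exact hwQ
    have h2 := himp ts htsI (Q - c) hQc1 hwQc
    have hxQc : xf c (Q - c) = xf c Q - SS := by rw [xf_sub, xf_self, hSS]
    have hxeq : xf c Q = xf c (uu N ts) := by
      rcases h1 with ⟨ha, hb⟩
      rcases h2 with ⟨hc2, hd⟩
      rw [hxQc] at hc2 hd
      linarith
    have hQeq : Q = uu N ts := coords_eq hc hwQ hxeq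
    rw [hQeq]
    exact uu_unit hN ts

end LemS

section GoodT
variable {N : E2 → ℝ}

lemma exists_good_t (hN : IsNorm N) (hF : ¬ Flat N) {C : Set E2}
    (hfin : C.Finite) (h0 : (0:E2) ∉ C) :
    ∃ t : ℝ, uu N t ∉ C ∧ ∀ c ∈ C, N (uu N t - c) ≠ 1 := by
  rcases C.eq_empty_or_nonempty with rfl | hne
  · exact ⟨0, by simp, by simp⟩
  by_contra hcon
  push_neg at hcon
  -- the closed bad sets cover ℝ
  set F : hfin.toFinset → Set ℝ :=
    fun c => {t | uu N t = (c : E2) ∨ N (uu N t - (c : E2)) = 1} with hFdef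
  have hclosed : ∀ c, IsClosed (F c) := by
    intro c
    apply IsClosed.union
    · exact isClosed_singleton.preimage (uu_cont hN)
    · have : Continuous fun t => N (uu N t - (c : E2)) :=
        (ncont hN).comp ((uu_cont hN).sub continuous_const)
      exact isClosed_singleton.preimage this
  have hcover : (⋃ c, F c) = Set.univ := by
    apply Set.eq_univ_of_forall
    intro t
    rcases Classical.em (uu N t ∈ C) with hmem | hmem
    · exact Set.mem_iUnion.mpr ⟨⟨uu N t, hfin.mem_toFinset.mpr hmem⟩, Or.inl rfl⟩
    · obtain ⟨c, hcC, hc1⟩ := hcon t hmem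
      exact Set.mem_iUnion.mpr ⟨⟨c, hfin.mem_toFinset.mpr hcC⟩, Or.inr hc1⟩
  obtain ⟨c, hint⟩ := nonempty_interior_of_iUnion_of_closed hclosed hcover
  obtain ⟨t2, ht2⟩ := hint
  obtain ⟨δ, hδ, hball⟩ := Metric.mem_nhds_iff.mp (mem_interior_iff_mem_nhds.mp ht2)
  have hcC : (c : E2) ∈ C := hfin.mem_toFinset.mp c.2
  have hc0 : (c : E2) ≠ 0 := fun h => h0 (h ▸ hcC)
  -- find a nondegenerate interval inside the ball avoiding the unique root of uu = c
  have hkey : ∀ l r : ℝ, l < r → (∀ t ∈ Set.Icc l r, t ∈ Metric.ball t2 δ) →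
      (∀ t ∈ Set.Icc l r, uu N t ≠ (c : E2)) → False := by
    intro l r hlr hsub hnever
    apply hF
    apply lemS hN hc0 hlr
    intro t htI
    rcases hball (hsub t htI) with h | h
    · exact absurd h (hnever t htI)
    · exact h
  rcases Classical.em (∃ t3 ∈ Metric.ball t2 δ, uu N t3 = (c : E2)) with ⟨t3, ht3b, ht3⟩ | hex
  · have ht3lt : t3 < t2 + δ := by
      have := Real.ball_eq_Ioo t2 δ ▸ ht3b
      exact this.2
    obtain ⟨γ, hγdef⟩ : ∃ γ : ℝ, γ = (t2 + δ - t3) / 2 := ⟨_, rfl⟩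
    have hγ : 0 < γ := by rw [hγdef]; linarith
    apply hkey (t3 + γ / 2) (t3 + γ) (by linarith)
    · intro t htI
      rw [Real.ball_eq_Ioo]
      have ht3gt : t2 - δ < t3 := (Real.ball_eq_Ioo t2 δ ▸ ht3b).1
      constructor
      · have := htI.1; linarith
      · have h2 := htI.2; rw [hγdef] at h2; linarith

    · intro t htI hteq
      have : t = t3 := uu_inj hN (hteq.trans ht3.symm)
      have := htI.1; linarith
  · push_neg at hex
    apply hkey (t2 - δ / 2) (t2 + δ / 2) (by linarith)
    · intro t htI
      rw [Real.ball_eq_Ioo]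
      exact ⟨by linarith [htI.1], by linarith [htI.2]⟩
    · intro t htI
      exact hex t (by rw [Real.ball_eq_Ioo]; exact ⟨by linarith [htI.1], by linarith [htI.2]⟩)

end GoodT

section Greedy
variable {N : E2 → ℝ}

def DD : Set (ℝ × ℝ) := {(0,0), (1,0), (-1,0), (0,1), (0,-1), (1,-1), (-1,1)}

lemma DD_finite : DD.Finite := by
  unfold DD
  exact (((((((Set.finite_singleton _).insert _).insert _).insert _).insert _).insert _).insert _)

def Free (k : ℕ) (U W : Fin k → E2) : Prop :=
  ∀ α β : Fin k → ℝ, (∀ i, (α i, β i) ∈ DD) →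
    (∑ i, (α i • U i + β i • W i)) = 0 → ∀ i, α i = 0 ∧ β i = 0

def Csums (k : ℕ) (U W : Fin k → E2) : Set E2 :=
  {x | ∃ α β : Fin k → ℝ, (∀ i, (α i, β i) ∈ DD) ∧ x = ∑ i, (α i • U i + β i • W i)}

lemma csums_finite (k : ℕ) (U W : Fin k → E2) : (Csums k U W).Finite := by
  have h1 : Csums k U W ⊆
      (fun f : Fin k → ℝ × ℝ => ∑ i, ((f i).1 • U i + (f i).2 • W i)) ''
        (Set.pi Set.univ (fun _ : Fin k => DD)) := by
    rintro x ⟨α, β, hab, rfl⟩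
    exact ⟨fun i => (α i, β i), fun i _ => hab i, rfl⟩
  exact Set.Finite.subset (Set.Finite.image _ (Set.Finite.pi (fun _ => DD_finite))) h1

lemma csums_neg {k : ℕ} {U W : Fin k → E2} {x : E2} (hx : x ∈ Csums k U W) :
    -x ∈ Csums k U W := by
  obtain ⟨α, β, hab, rfl⟩ := hx
  refine ⟨fun i => -α i, fun i => -β i, ?_, ?_⟩
  · intro i
    have h := hab i
    simp only [DD, Set.mem_insert_iff, Set.mem_singleton_iff, Prod.ext_iff] at h ⊢
    rcases h with ⟨h1,h2⟩|⟨h1,h2⟩|⟨h1,h2⟩|⟨h1,h2⟩|⟨h1,h2⟩|⟨h1,h2⟩|⟨h1,h2⟩ <;>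
      rw [h1, h2] <;> norm_num
  · rw [← Finset.sum_neg_distrib]
    apply Finset.sum_congr rfl
    intro i _
    rw [neg_add, neg_smul, neg_smul]

lemma exists_triangles (hN : IsNorm N) (hF : ¬ Flat N) (k : ℕ) :
    ∃ U W : Fin k → E2,
      (∀ i, N (U i) = 1 ∧ N (W i) = 1 ∧ N (U i - W i) = 1) ∧ Free k U W := by
  induction k with
  | zero =>
    exact ⟨fun i => i.elim0, fun i => i.elim0, fun i => i.elim0,
      fun α β h hs i => i.elim0⟩
  | succ k ih =>
    obtain ⟨U, W, htri, hfree⟩ := ih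
    have hCfin : ((Csums k U W) \ {0}).Finite := (csums_finite k U W).diff
    obtain ⟨t, htC, htN⟩ := exists_good_t hN hF hCfin (by simp)
    obtain ⟨w, hw1, hw2⟩ := exists_w hN t
    have hu1 : N (uu N t) = 1 := uu_unit hN t
    have hune : uu N t ≠ 0 := by
      intro h; rw [h, nzero hN] at hu1; norm_num at hu1
    have hwne : w ≠ 0 := by
      intro h; rw [h, nzero hN] at hw1; norm_num at hw1
    have huwne : uu N t - w ≠ 0 := by
      intro h; rw [h, nzero hN] at hw2; norm_num at hw2
    refine ⟨Fin.cons (uu N t) U, Fin.cons w W, ?_, ?_⟩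
    · intro i
      refine Fin.cases ?_ ?_ i
      · simpa using ⟨hu1, hw1, hw2⟩
      · intro j; simpa using htri j
    · intro α β hmem hsum
      rw [Fin.sum_univ_succ] at hsum
      simp only [Fin.cons_zero, Fin.cons_succ] at hsum
      have hc0mem : (∑ i : Fin k, (α i.succ • U i + β i.succ • W i)) ∈ Csums k U W :=
        ⟨fun i => α i.succ, fun i => β i.succ, fun i => hmem i.succ, rfl⟩
      set c0 := ∑ i : Fin k, (α i.succ • U i + β i.succ • W i) with hc0
      have key : α 0 = 0 ∧ β 0 = 0 ∧ c0 = 0 := by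
        have h0m := hmem 0
        have hCmem : ∀ y : E2, y ∈ Csums k U W → y ≠ 0 → y ∈ (Csums k U W) \ {0} := by
          intro y hy hyne; exact ⟨hy, hyne⟩
        have h0m' : (α 0 = 0 ∧ β 0 = 0) ∨ (α 0 = 1 ∧ β 0 = 0) ∨ (α 0 = -1 ∧ β 0 = 0) ∨
            (α 0 = 0 ∧ β 0 = 1) ∨ (α 0 = 0 ∧ β 0 = -1) ∨ (α 0 = 1 ∧ β 0 = -1) ∨
            (α 0 = -1 ∧ β 0 = 1) := by
          simp only [DD, Set.mem_insert_iff, Set.mem_singleton_iff, Prod.ext_iff] at h0m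
          tauto
        rcases h0m' with ⟨ha,hb⟩|⟨ha,hb⟩|⟨ha,hb⟩|⟨ha,hb⟩|⟨ha,hb⟩|⟨ha,hb⟩|⟨ha,hb⟩
        · rw [ha, hb] at hsum
          simp only [zero_smul, zero_add] at hsum
          exact ⟨ha, hb, hsum⟩
        · exfalso
          rw [ha, hb] at hsum
          simp only [one_smul, zero_smul, add_zero] at hsum
          have hu : uu N t = -c0 := by
            have h' : uu N t + c0 = 0 := by linear_combination (norm := module) hsum
            exact eq_neg_of_add_eq_zero_left h'
          have hmem2 : -c0 ∈ (Csums k U W) \ {0} :=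
            hCmem _ (csums_neg hc0mem) (by rw [← hu]; exact hune)
          exact htC (hu ▸ hmem2)
        · exfalso
          rw [ha, hb] at hsum
          have hu : uu N t = c0 := by linear_combination (norm := module) -hsum
          have hmem2 : c0 ∈ (Csums k U W) \ {0} :=
            hCmem _ hc0mem (by rw [← hu]; exact hune)
          exact htC (hu ▸ hmem2)
        · exfalso
          rw [ha, hb] at hsum
          have hw : w = -c0 := by
            have h' : w + c0 = 0 := by linear_combination (norm := module) hsum
            exact eq_neg_of_add_eq_zero_left h'
          have hmem2 : -c0 ∈ (Csums k U W) \ {0} :=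
            hCmem _ (csums_neg hc0mem) (by rw [← hw]; exact hwne)
          apply htN _ hmem2
          rw [← hw]; exact hw2
        · exfalso
          rw [ha, hb] at hsum
          have hw : w = c0 := by linear_combination (norm := module) -hsum
          have hmem2 : c0 ∈ (Csums k U W) \ {0} :=
            hCmem _ hc0mem (by rw [← hw]; exact hwne)
          apply htN _ hmem2
          rw [← hw]; exact hw2
        · exfalso
          rw [ha, hb] at hsum
          have huw : uu N t - w = -c0 := by
            have h' : (uu N t - w) + c0 = 0 := by linear_combination (norm := module) hsum
            exact eq_neg_of_add_eq_zero_left h'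
          have hmem2 : -c0 ∈ (Csums k U W) \ {0} :=
            hCmem _ (csums_neg hc0mem) (by rw [← huw]; exact huwne)
          apply htN _ hmem2
          rw [← huw, sub_sub_cancel]; exact hw1
        · exfalso
          rw [ha, hb] at hsum
          have huw : uu N t - w = c0 := by linear_combination (norm := module) -hsum
          have hmem2 : c0 ∈ (Csums k U W) \ {0} :=
            hCmem _ hc0mem (by rw [← huw]; exact huwne)
          apply htN _ hmem2
          rw [← huw, sub_sub_cancel]; exact hw1
      obtain ⟨ha0, hb0, hc00⟩ := key
      have htail := hfree (fun i => α i.succ) (fun i => β i.succ)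
        (fun i => hmem i.succ) hc00
      intro i
      refine Fin.cases ?_ ?_ i
      · exact ⟨ha0, hb0⟩
      · intro j; exact htail j

end Greedy

section Counting
variable {N : E2 → ℝ}

def dvec {k : ℕ} (U W : Fin k → E2) (i : Fin k) (d : Fin 3) : E2 :=
  ![0, U i, W i] d

def pword {k : ℕ} (U W : Fin k → E2) (f : Fin k → Fin 3) : E2 :=
  ∑ i, dvec U W i (f i)

def Acoef (d : Fin 3) : ℝ := if d = 1 then 1 else 0
def Bcoef (d : Fin 3) : ℝ := if d = 2 then 1 else 0

lemma dvec_eq {k : ℕ} (U W : Fin k → E2) (i : Fin k) (d : Fin 3) :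
    dvec U W i d = Acoef d • U i + Bcoef d • W i := by
  fin_cases d <;> simp [dvec, Acoef, Bcoef]

lemma coef_mem_DD (a b : Fin 3) : (Acoef a - Acoef b, Bcoef a - Bcoef b) ∈ DD := by
  fin_cases a <;> fin_cases b <;> simp [Acoef, Bcoef, DD] <;> norm_num

lemma digit_eq {a b : Fin 3} (hA : Acoef a = Acoef b) (hB : Bcoef a = Bcoef b) : a = b := by
  fin_cases a <;> fin_cases b <;> simp_all [Acoef, Bcoef] <;> norm_num at hA hB

lemma nsum (hN : IsNorm N) {ι : Type*} (s : Finset ι) (v : ι → E2) :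
    N (∑ i ∈ s, v i) ≤ ∑ i ∈ s, N (v i) := by
  induction s using Finset.cons_induction with
  | empty => simp [nzero hN]
  | cons a s ha ih =>
    rw [Finset.sum_cons, Finset.sum_cons]
    exact le_trans (hN.2.2 _ _) (by linarith)

lemma ndvec_le (hN : IsNorm N) {k : ℕ} {U W : Fin k → E2}
    (htri : ∀ i, N (U i) = 1 ∧ N (W i) = 1 ∧ N (U i - W i) = 1) (i : Fin k) (d : Fin 3) :
    N (dvec U W i d) ≤ 1 := by
  fin_cases d <;> simp [dvec, nzero hN, (htri i).1, (htri i).2.1]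

lemma npword_le (hN : IsNorm N) {k : ℕ} {U W : Fin k → E2}
    (htri : ∀ i, N (U i) = 1 ∧ N (W i) = 1 ∧ N (U i - W i) = 1) (f : Fin k → Fin 3) :
    N (pword U W f) ≤ k := by
  refine le_trans (nsum hN _ _) ?_
  calc ∑ i : Fin k, N (dvec U W i (f i)) ≤ ∑ _i : Fin k, (1:ℝ) := by
        apply Finset.sum_le_sum
        intro i _
        exact ndvec_le hN htri i (f i)
    _ = k := by simp

lemma pword_inj {k : ℕ} {U W : Fin k → E2} (hfree : Free k U W)
    {f g : Fin k → Fin 3} (h : pword U W f = pword U W g) : f = g := by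
  have hz : ∑ i : Fin k, ((Acoef (f i) - Acoef (g i)) • U i
      + (Bcoef (f i) - Bcoef (g i)) • W i) = 0 := by
    have : ∑ i : Fin k, ((Acoef (f i) - Acoef (g i)) • U i
        + (Bcoef (f i) - Bcoef (g i)) • W i)
        = pword U W f - pword U W g := by
      rw [pword, pword, ← Finset.sum_sub_distrib]
      apply Finset.sum_congr rfl
      intro i _
      rw [dvec_eq, dvec_eq]
      module
    rw [this, h, sub_self]
  have hcc := hfree _ _ (fun i => coef_mem_DD (f i) (g i)) hz
  funext i
  obtain ⟨hA, hB⟩ := hcc i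
  exact digit_eq (by linarith) (by linarith)

lemma pword_single_diff {k : ℕ} (U W : Fin k → E2) {f g : Fin k → Fin 3} (i : Fin k)
    (hoff : ∀ l, l ≠ i → f l = g l) :
    pword U W f - pword U W g = dvec U W i (f i) - dvec U W i (g i) := by
  rw [pword, pword, ← Finset.sum_sub_distrib]
  apply Finset.sum_eq_single i
  · intro l _ hl
    rw [hoff l hl, sub_self]
  · intro h
    exact absurd (Finset.mem_univ i) h

lemma nsub_le' (hN : IsNorm N) (x y : E2) : N (x - y) ≤ N x + N y := by
  have := hN.2.2 x (-y)
  rw [nneg' hN] at this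
  rw [sub_eq_add_neg]
  exact le_trans (hN.2.2 x (-y)) (by rw [nneg' hN])

lemma nadd_ge (hN : IsNorm N) (a b : E2) : N a - N b ≤ N (a + b) := by
  have h := hN.2.2 (a + b) (-b)
  rw [add_neg_cancel_right, nneg' hN] at h
  linarith

lemma nat_cast_diff_ge_one {j j' : ℕ} (h : j ≠ j') : (1:ℝ) ≤ |(j:ℝ) - (j':ℝ)| := by
  rcases lt_or_gt_of_ne h with hlt | hlt
  · rw [abs_sub_comm, abs_of_nonneg (by
      simp only [sub_nonneg]; exact_mod_cast le_of_lt hlt)]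
    have : (j + 1 : ℕ) ≤ j' := hlt
    have := (Nat.cast_le (α := ℝ)).mpr this
    push_cast at this
    linarith
  · rw [abs_of_nonneg (by simp only [sub_nonneg]; exact_mod_cast le_of_lt hlt)]
    have : (j' + 1 : ℕ) ≤ j := hlt
    have := (Nat.cast_le (α := ℝ)).mpr this
    push_cast at this
    linarith

end Counting

lemma card_term (k : ℕ) (hk : 1 ≤ k) (i : Fin k) :
    Fintype.card (({ j : Fin k // j ≠ i } → Fin 3) × Fin 3) = 3 ^ k := by
  have hsub : Fintype.card { j : Fin k // j ≠ i } = k - 1 := by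
    rw [Fintype.card_subtype_compl, Fintype.card_subtype_eq, Fintype.card_fin]
  rw [Fintype.card_prod, Fintype.card_fun, hsub, Fintype.card_fin,
    ← pow_succ, Nat.sub_add_cancel hk]

def paf : Fin 3 → Fin 3 := ![0, 1, 0]
def pas : Fin 3 → Fin 3 := ![1, 2, 2]

lemma paf_lt : ∀ c, paf c < pas c := by decide

lemma paf_ne : ∀ c, paf c ≠ pas c := by decide

lemma pa_inj : ∀ c c', paf c = paf c' → pas c = pas c' → c = c' := by decide

def wordOf {k : ℕ} (i : Fin k) (h : {j : Fin k // j ≠ i} → Fin 3) (d : Fin 3) :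
    Fin k → Fin 3 :=
  fun l => if e : l = i then d else h ⟨l, e⟩

lemma wordOf_at {k : ℕ} (i : Fin k) (h : {j : Fin k // j ≠ i} → Fin 3) (d : Fin 3) :
    wordOf i h d i = d := by simp [wordOf]

lemma wordOf_ne {k : ℕ} (i : Fin k) (h : {j : Fin k // j ≠ i} → Fin 3) (d : Fin 3)
    (l : Fin k) (hl : l ≠ i) : wordOf i h d l = h ⟨l, hl⟩ := by simp [wordOf, hl]

section Counting2
variable {N : E2 → ℝ}

lemma counting (hN : IsNorm N) {k q n : ℕ} (hk : 1 ≤ k) (hqn : q * 3 ^ k ≤ n)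
    {U W : Fin k → E2} (htri : ∀ i, N (U i) = 1 ∧ N (W i) = 1 ∧ N (U i - W i) = 1)
    (hfree : Free k U W) :
    ∃ p : Fin n → E2, Function.Injective p ∧
      q * (k * 3 ^ k) ≤
        Set.ncard {z : Fin n × Fin n | z.1 < z.2 ∧ N (p z.1 - p z.2) = 1} := by
  classical
  have h3k : 0 < 3 ^ k := pow_pos (by norm_num) k
  set R : ℝ := 2 * k + 1 with hR
  have hRpos : 0 < R := by rw [hR]; positivity
  set v0 := U ⟨0, hk⟩ with hv0
  have hv01 : N v0 = 1 := (htri _).1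
  set cp : ℕ → (Fin k → Fin 3) → E2 :=
    fun j f => ((j:ℝ) * R) • v0 + pword U W f with hcp
  set fp : ℕ → E2 := fun s => (((q + 1 + s : ℕ) : ℝ) * R) • v0 with hfp
  have hsmulv0 : ∀ a : ℝ, N (a • v0) = |a| := by
    intro a; rw [hN.2.1, hv01, mul_one]
  have hpw2k : ∀ f f', N (pword U W f - pword U W f') ≤ 2 * k := by
    intro f f'
    have := nsub_le' hN (pword U W f) (pword U W f')
    have h1 := npword_le hN htri f
    have h2 := npword_le hN htri f'
    linarith
  have hclu_ne : ∀ j j' f f', j ≠ j' → cp j f ≠ cp j' f' := by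
    intro j j' f f' hjj heq
    have h0 : N (cp j f - cp j' f') = 0 := by rw [heq, sub_self, nzero hN]
    have hdiff : cp j f - cp j' f' =
        (((j:ℝ) - (j':ℝ)) * R) • v0 + (pword U W f - pword U W f') := by
      simp only [hcp]; module
    have h1 := nadd_ge hN ((((j:ℝ) - (j':ℝ)) * R) • v0) (pword U W f - pword U W f')
    rw [← hdiff, h0] at h1
    rw [hsmulv0, abs_mul, abs_of_pos hRpos] at h1
    have h2 := nat_cast_diff_ge_one hjj
    have h3 := hpw2k f f'
    nlinarith
  have hcl_inj : ∀ j j' f f', cp j f = cp j' f' → j = j' ∧ f = f' := by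
    intro j j' f f' heq
    rcases eq_or_ne j j' with rfl | hne
    · refine ⟨rfl, ?_⟩
      apply pword_inj hfree
      have := add_left_cancel (heq : ((j:ℝ) * R) • v0 + pword U W f = _)
      exact this
    · exact absurd heq (hclu_ne _ _ _ _ hne)
  have hfar_cl : ∀ j f s, j < q → cp j f ≠ fp s := by
    intro j f s hj heq
    have h0 : N (fp s - cp j f) = 0 := by rw [heq, sub_self, nzero hN]
    have hdiff : fp s - cp j f =
        ((((q + 1 + s : ℕ) : ℝ) - (j:ℝ)) * R) • v0 + (-(pword U W f)) := by
      simp only [hfp, hcp]; module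
    have h1 := nadd_ge hN (((((q + 1 + s : ℕ) : ℝ) - (j:ℝ)) * R) • v0) (-(pword U W f))
    rw [← hdiff, h0, nneg' hN] at h1
    have hjq : (j:ℝ) + 1 ≤ (q:ℝ) := by exact_mod_cast hj
    have hcast : ((q + 1 + s : ℕ) : ℝ) = (q:ℝ) + 1 + (s:ℝ) := by push_cast; ring
    have hge2 : (2:ℝ) ≤ ((q + 1 + s : ℕ) : ℝ) - (j:ℝ) := by
      rw [hcast]
      have : (0:ℝ) ≤ (s:ℝ) := Nat.cast_nonneg s
      linarith
    rw [hsmulv0, abs_mul, abs_of_pos hRpos, abs_of_nonneg (by linarith)] at h1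
    have h2 := npword_le hN htri f
    nlinarith
  have hfar_inj : ∀ s s', fp s = fp s' → s = s' := by
    intro s s' heq
    by_contra hne
    have h0 : N (fp s - fp s') = 0 := by rw [heq, sub_self, nzero hN]
    have hdiff : fp s - fp s' =
        ((((q + 1 + s : ℕ) : ℝ) - ((q + 1 + s' : ℕ) : ℝ)) * R) • v0 := by
      simp only [hfp]; module
    rw [hdiff, hsmulv0, abs_mul, abs_of_pos hRpos] at h0
    have h2 : q + 1 + s ≠ q + 1 + s' := by omega
    have h3 := nat_cast_diff_ge_one h2
    nlinarith
  -- the configuration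
  set p : Fin n → E2 := fun x => if h : (x : ℕ) < q * 3 ^ k
    then cp ((x:ℕ) / 3 ^ k) (finFunctionFinEquiv.symm ⟨(x:ℕ) % 3 ^ k, Nat.mod_lt _ h3k⟩)
    else fp ((x:ℕ) - q * 3 ^ k) with hp
  have hdivlt : ∀ m : ℕ, m < q * 3 ^ k → m / 3 ^ k < q := by
    intro m hm
    exact Nat.div_lt_of_lt_mul (by rw [mul_comm] at hm; exact hm)
  have hpinj : Function.Injective p := by
    intro x y hxy
    simp only [hp] at hxy
    by_cases hx : (x:ℕ) < q * 3^k <;> by_cases hy : (y:ℕ) < q*3^k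
    · rw [dif_pos hx, dif_pos hy] at hxy
      obtain ⟨hj, hf⟩ := hcl_inj _ _ _ _ hxy
      have hf2 := congrArg (fun z => (finFunctionFinEquiv z : ℕ)) hf
      simp only [Equiv.apply_symm_apply] at hf2
      apply Fin.ext
      calc (x:ℕ) = 3^k * ((x:ℕ)/3^k) + (x:ℕ)%3^k := (Nat.div_add_mod _ _).symm
        _ = 3^k * ((y:ℕ)/3^k) + (y:ℕ)%3^k := by rw [hj, hf2]
        _ = (y:ℕ) := Nat.div_add_mod _ _
    · rw [dif_pos hx, dif_neg hy] at hxy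
      exact absurd hxy (hfar_cl _ _ _ (hdivlt _ hx))
    · rw [dif_neg hx, dif_pos hy] at hxy
      exact absurd hxy.symm (hfar_cl _ _ _ (hdivlt _ hy))
    · rw [dif_neg hx, dif_neg hy] at hxy
      have := hfar_inj _ _ hxy
      apply Fin.ext
      omega
  refine ⟨p, hpinj, ?_⟩
  -- encoding of cluster indices
  have hidx : ∀ (j : Fin q) (f : Fin k → Fin 3),
      (finFunctionFinEquiv f : ℕ) + (j:ℕ) * 3 ^ k < q * 3 ^ k := by
    intro j f
    have h1 : (finFunctionFinEquiv f : ℕ) < 3 ^ k := (finFunctionFinEquiv f).2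
    have h2 : (j:ℕ) + 1 ≤ q := j.2
    calc (finFunctionFinEquiv f : ℕ) + (j:ℕ) * 3 ^ k < 3^k + (j:ℕ) * 3^k := by omega
      _ = ((j:ℕ) + 1) * 3^k := by ring
      _ ≤ q * 3^k := Nat.mul_le_mul_right _ h2
  set enc : Fin q → (Fin k → Fin 3) → Fin n :=
    fun j f => ⟨(finFunctionFinEquiv f : ℕ) + (j:ℕ) * 3 ^ k,
      lt_of_lt_of_le (hidx j f) hqn⟩ with henc
  have hdiv : ∀ (j : Fin q) (f : Fin k → Fin 3),
      ((finFunctionFinEquiv f : ℕ) + (j:ℕ) * 3 ^ k) / 3 ^ k = (j:ℕ) := by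
    intro j f
    rw [Nat.add_mul_div_right _ _ h3k, Nat.div_eq_of_lt (finFunctionFinEquiv f).2, zero_add]
  have hmod : ∀ (j : Fin q) (f : Fin k → Fin 3),
      ((finFunctionFinEquiv f : ℕ) + (j:ℕ) * 3 ^ k) % 3 ^ k = (finFunctionFinEquiv f : ℕ) := by
    intro j f
    rw [Nat.add_mul_mod_self_right, Nat.mod_eq_of_lt (finFunctionFinEquiv f).2]
  have hpenc : ∀ (j : Fin q) (f : Fin k → Fin 3), p (enc j f) = cp (j:ℕ) f := by
    intro j f
    have hlt : ((enc j f : Fin n) : ℕ) < q * 3 ^ k := hidx j f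
    simp only [hp]
    rw [dif_pos hlt]
    have e2 : (⟨((enc j f : Fin n) : ℕ) % 3 ^ k, Nat.mod_lt _ h3k⟩ : Fin (3^k))
        = finFunctionFinEquiv f := Fin.ext (hmod j f)
    have e1 : ((enc j f : Fin n) : ℕ) / 3 ^ k = (j:ℕ) := hdiv j f
    rw [e1, e2, Equiv.symm_apply_apply]
  have henc_inj : ∀ j j' f f', enc j f = enc j' f' → j = j' ∧ f = f' := by
    intro j j' f f' he
    have hv := congrArg (fun z : Fin n => (z:ℕ)) he
    simp only [henc] at hv
    have hj : (j:ℕ) = (j':ℕ) := by rw [← hdiv j f, ← hdiv j' f', hv]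
    have hval : (finFunctionFinEquiv f : ℕ) = (finFunctionFinEquiv f' : ℕ) := by
      rw [hj] at hv; omega
    exact ⟨Fin.ext hj, finFunctionFinEquiv.injective (Fin.ext hval)⟩
  set S := {z : Fin n × Fin n | z.1 < z.2 ∧ N (p z.1 - p z.2) = 1} with hS
  set Φ : Fin q × (Σ i : Fin k, ({ j : Fin k // j ≠ i } → Fin 3) × Fin 3) → Fin n × Fin n :=
    fun a =>
      if (enc a.1 (wordOf a.2.1 a.2.2.1 (paf a.2.2.2)) : ℕ)
          < (enc a.1 (wordOf a.2.1 a.2.2.1 (pas a.2.2.2)) : ℕ)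
      then (enc a.1 (wordOf a.2.1 a.2.2.1 (paf a.2.2.2)),
            enc a.1 (wordOf a.2.1 a.2.2.1 (pas a.2.2.2)))
      else (enc a.1 (wordOf a.2.1 a.2.2.1 (pas a.2.2.2)),
            enc a.1 (wordOf a.2.1 a.2.2.1 (paf a.2.2.2))) with hΦ
  have hword_ne : ∀ (i : Fin k) (h : { j : Fin k // j ≠ i } → Fin 3) (c : Fin 3),
      wordOf i h (paf c) ≠ wordOf i h (pas c) := by
    intro i h c heq
    have := congrFun heq i
    rw [wordOf_at, wordOf_at] at this
    exact paf_ne c this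
  have hNdiff : ∀ (j : Fin q) (i : Fin k) (h : { j : Fin k // j ≠ i } → Fin 3) (c : Fin 3),
      N (p (enc j (wordOf i h (paf c))) - p (enc j (wordOf i h (pas c)))) = 1 := by
    intro j i h c
    rw [hpenc, hpenc]
    have hid : cp (j:ℕ) (wordOf i h (paf c)) - cp (j:ℕ) (wordOf i h (pas c))
        = pword U W (wordOf i h (paf c)) - pword U W (wordOf i h (pas c)) := by
      simp only [hcp]
      abel
    rw [hid]
    rw [pword_single_diff U W i (fun l hl => by rw [wordOf_ne _ _ _ _ hl, wordOf_ne _ _ _ _ hl])]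
    rw [wordOf_at, wordOf_at]
    fin_cases c
    · simp only [paf, pas, dvec]
      norm_num
      rw [nneg' hN]
      exact (htri i).1
    · simp only [paf, pas, dvec]
      norm_num
      exact (htri i).2.2
    · simp only [paf, pas, dvec]
      norm_num
      rw [nneg' hN]
      exact (htri i).2.1
  have hrange : Set.range Φ ⊆ S := by
    rintro z ⟨a, rfl⟩
    obtain ⟨j, i, h, c⟩ := a
    have hne : (enc j (wordOf i h (paf c)) : ℕ) ≠ (enc j (wordOf i h (pas c)) : ℕ) := by
      intro heq
      exact hword_ne i h c (henc_inj _ _ _ _ (Fin.ext heq)).2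
    simp only [hΦ, hS]
    by_cases hlt : (enc j (wordOf i h (paf c)) : ℕ) < (enc j (wordOf i h (pas c)) : ℕ)
    · rw [if_pos hlt]
      exact ⟨Fin.lt_def.mpr hlt, hNdiff j i h c⟩
    · rw [if_neg hlt]
      refine ⟨Fin.lt_def.mpr (lt_of_le_of_ne (not_lt.mp hlt) (Ne.symm hne)) , ?_⟩
      rw [← nneg' hN, neg_sub]
      exact hNdiff j i h c
  have hΦinj : Function.Injective Φ := by
    rintro ⟨j, i, h, c⟩ ⟨j', i', h', c'⟩ heq
    simp only [hΦ] at heq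
    -- extract the unordered pair equality
    have hpair : (enc j (wordOf i h (paf c)) = enc j' (wordOf i' h' (paf c'))
          ∧ enc j (wordOf i h (pas c)) = enc j' (wordOf i' h' (pas c')))
        ∨ (enc j (wordOf i h (paf c)) = enc j' (wordOf i' h' (pas c'))
          ∧ enc j (wordOf i h (pas c)) = enc j' (wordOf i' h' (paf c'))) := by
      by_cases h1 : (enc j (wordOf i h (paf c)) : ℕ) < (enc j (wordOf i h (pas c)) : ℕ) <;>
        by_cases h2 : (enc j' (wordOf i' h' (paf c')) : ℕ) < (enc j' (wordOf i' h' (pas c')) : ℕ)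
      · rw [if_pos h1, if_pos h2] at heq
        exact Or.inl ⟨congrArg Prod.fst heq, congrArg Prod.snd heq⟩
      · rw [if_pos h1, if_neg h2] at heq
        exact Or.inr ⟨congrArg Prod.fst heq, congrArg Prod.snd heq⟩
      · rw [if_neg h1, if_pos h2] at heq
        exact Or.inr ⟨(congrArg Prod.snd heq), (congrArg Prod.fst heq)⟩
      · rw [if_neg h1, if_neg h2] at heq
        exact Or.inl ⟨(congrArg Prod.snd heq), (congrArg Prod.fst heq)⟩
    have main : j = j' ∧ i = i' ∧ HEq h h' ∧ c = c' := by
      rcases hpair with ⟨e1, e2⟩ | ⟨e1, e2⟩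
      · obtain ⟨hj, hw1⟩ := henc_inj _ _ _ _ e1
        obtain ⟨-, hw2⟩ := henc_inj _ _ _ _ e2
        have hii : i = i' := by
          by_contra hii
          have ha := congrFun hw1 i'
          have hb := congrFun hw2 i'
          rw [wordOf_at] at ha hb
          rw [wordOf_ne i h _ i' (Ne.symm hii)] at ha
          rw [wordOf_ne i h _ i' (Ne.symm hii)] at hb
          exact paf_ne c' (ha.symm.trans hb)
        subst hii
        have hcc : c = c' := by
          apply pa_inj
          · have := congrFun hw1 i; rw [wordOf_at, wordOf_at] at this; exact this
          · have := congrFun hw2 i; rw [wordOf_at, wordOf_at] at this; exact this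
        have hhh : h = h' := by
          funext l
          obtain ⟨lv, hlne⟩ := l
          have := congrFun hw1 lv
          rw [wordOf_ne _ _ _ _ hlne, wordOf_ne _ _ _ _ hlne] at this
          exact this
        exact ⟨hj, rfl, heq_of_eq hhh, hcc⟩
      · exfalso
        obtain ⟨hj, hw1⟩ := henc_inj _ _ _ _ e1
        obtain ⟨-, hw2⟩ := henc_inj _ _ _ _ e2
        have hii : i = i' := by
          by_contra hii
          have ha := congrFun hw1 i
          have hb := congrFun hw2 i
          rw [wordOf_at] at ha hb
          rw [wordOf_ne i' h' _ i hii] at ha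
          rw [wordOf_ne i' h' _ i hii] at hb
          exact paf_ne c (ha.trans hb.symm)
        subst hii
        have ha := congrFun hw1 i
        have hb := congrFun hw2 i
        rw [wordOf_at, wordOf_at] at ha hb
        have l1 := paf_lt c
        have l2 := paf_lt c'
        rw [ha] at l1
        rw [← hb] at l2
        exact absurd (lt_trans l1 l2) (lt_irrefl _)
    obtain ⟨hj, hi, hh, hc⟩ := main
    subst hj; subst hi; subst hc
    rw [eq_of_heq hh]
  have hfin : S.Finite := Set.toFinite _
  have h1 : (Set.range Φ).ncard = Fintype.card
      (Fin q × (Σ i : Fin k, ({ j : Fin k // j ≠ i } → Fin 3) × Fin 3)) := by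
    rw [← Set.image_univ, Set.ncard_image_of_injective _ hΦinj, Set.ncard_univ,
      Nat.card_eq_fintype_card]
  have hcard : Fintype.card
      (Fin q × (Σ i : Fin k, ({ j : Fin k // j ≠ i } → Fin 3) × Fin 3))
      = q * (k * 3 ^ k) := by
    rw [Fintype.card_prod, Fintype.card_fin]
    congr 1
    rw [Fintype.card_sigma]
    rw [Finset.sum_congr rfl (fun i _ => card_term k hk i)]
    rw [Finset.sum_const, Finset.card_univ, Fintype.card_fin, smul_eq_mul]
  calc q * (k * 3 ^ k) = (Set.range Φ).ncard := by rw [h1, hcard]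
    _ ≤ S.ncard := Set.ncard_le_ncard hrange hfin

end Counting2

section FlatCase
variable {N : E2 → ℝ}

lemma flat_case (hN : IsNorm N) (hF : Flat N) (n : ℕ) (hn : 2 ≤ n) :
    ∃ p : Fin n → E2, Function.Injective p ∧
      (n / 2) * (n - n / 2) ≤
        Set.ncard {z : Fin n × Fin n | z.1 < z.2 ∧ N (p z.1 - p z.2) = 1} := by
  classical
  obtain ⟨x, y, hxy, hflat⟩ := hF
  set d := y - x with hd
  have hdne : d ≠ 0 := sub_ne_zero.mpr (Ne.symm hxy)
  set z : E2 := (1/2 : ℝ) • x + (1/2 : ℝ) • y with hz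
  have hnpos : (0:ℝ) < (n:ℝ) := by
    have : 0 < n := lt_of_lt_of_le (by norm_num) hn
    exact_mod_cast this
  set ε : ℝ := 1 / (2 * n) with hε
  have hεpos : 0 < ε := by rw [hε]; positivity
  set v : E2 := ε • d with hv
  have hvne : v ≠ 0 := smul_ne_zero (ne_of_gt hεpos) hdne
  have key : ∀ t : ℝ, |t| ≤ (n:ℝ) → N (z + t • v) = 1 := by
    intro t ht
    have hta := abs_le.mp ht
    have h1 : |t * ε| ≤ 1/2 := by
      rw [abs_mul, abs_of_pos hεpos]
      have h2 : |t| * ε ≤ (n:ℝ) * ε :=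
        mul_le_mul_of_nonneg_right ht (le_of_lt hεpos)
      have h3 : (n:ℝ) * ε = 1/2 := by
        rw [hε]; field_simp
      linarith
    have h1' := abs_le.mp h1
    have hl := hflat (1/2 - t * ε) ⟨by linarith [h1'.1, h1'.2], by linarith [h1'.1, h1'.2]⟩
    have hid : (1/2 - t*ε) • x + (1 - (1/2 - t*ε)) • y = z + t • v := by
      rw [hz, hv, hd]
      match_scalars <;> ring
    rw [← hid]
    exact hl
  have hmix : ∀ (i j : ℕ), i ≤ n → j ≤ n → N ((z + (j:ℝ) • v) - (i:ℝ) • v) = 1 := by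
    intro i j hi hj
    have hid : (z + (j:ℝ) • v) - (i:ℝ) • v = z + ((j:ℝ) - (i:ℝ)) • v := by module
    rw [hid]
    apply key
    rw [abs_le]
    have c1 : (0:ℝ) ≤ (i:ℝ) := Nat.cast_nonneg i
    have c2 : (0:ℝ) ≤ (j:ℝ) := Nat.cast_nonneg j
    have c3 : (i:ℝ) ≤ (n:ℝ) := by exact_mod_cast hi
    have c4 : (j:ℝ) ≤ (n:ℝ) := by exact_mod_cast hj
    constructor <;> linarith
  set m := n / 2 with hm
  set p : Fin n → E2 := fun w => if (w:ℕ) < m then ((w:ℕ):ℝ) • v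
    else z + ((((w:ℕ) - m : ℕ)):ℝ) • v with hp
  have hcast_inj : ∀ a b : ℕ, ((a:ℝ)) • v = ((b:ℝ)) • v → a = b := by
    intro a b hab
    have h0 : (((a:ℝ)) - ((b:ℝ))) • v = 0 := by rw [sub_smul, hab, sub_self]
    rcases smul_eq_zero.mp h0 with h | h
    · have : (a:ℝ) = (b:ℝ) := by linarith [sub_eq_zero.mp h]
      exact_mod_cast this
    · exact absurd h hvne
  have hpinj : Function.Injective p := by
    intro a b hab
    simp only [hp] at hab
    by_cases ha : (a:ℕ) < m <;> by_cases hb : (b:ℕ) < m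
    · rw [if_pos ha, if_pos hb] at hab
      exact Fin.ext (hcast_inj _ _ hab)
    · rw [if_pos ha, if_neg hb] at hab
      exfalso
      have h1 : N ((z + ((((b:ℕ) - m : ℕ)):ℝ) • v) - ((a:ℕ):ℝ) • v) = 1 := by
        apply hmix
        · omega
        · omega
      rw [← hab, sub_self, nzero hN] at h1
      norm_num at h1
    · rw [if_neg ha, if_pos hb] at hab
      exfalso
      have h1 : N ((z + ((((a:ℕ) - m : ℕ)):ℝ) • v) - ((b:ℕ):ℝ) • v) = 1 := by
        apply hmix
        · omega
        · omega
      rw [hab, sub_self, nzero hN] at h1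
      norm_num at h1
    · rw [if_neg ha, if_neg hb] at hab
      have h2 := add_left_cancel hab
      have h3 := hcast_inj _ _ h2
      apply Fin.ext
      omega
  refine ⟨p, hpinj, ?_⟩
  set S := {w : Fin n × Fin n | w.1 < w.2 ∧ N (p w.1 - p w.2) = 1} with hS
  have hmlt : ∀ (i : Fin m), (i:ℕ) < n := by
    intro i
    have := i.2
    omega
  have hmlt2 : ∀ (j : Fin (n - m)), m + (j:ℕ) < n := by
    intro j
    have := j.2
    omega
  set Φ : Fin m × Fin (n - m) → Fin n × Fin n :=
    fun a => (⟨(a.1 : ℕ), hmlt a.1⟩, ⟨m + (a.2 : ℕ), hmlt2 a.2⟩) with hΦ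
  have hrange : Set.range Φ ⊆ S := by
    rintro w ⟨a, rfl⟩
    obtain ⟨i, j⟩ := a
    constructor
    · show (⟨(i:ℕ), hmlt i⟩ : Fin n) < (⟨m + (j:ℕ), hmlt2 j⟩ : Fin n)
      rw [Fin.mk_lt_mk]
      have := i.2
      omega
    · show N (p ⟨(i:ℕ), hmlt i⟩ - p ⟨m + (j:ℕ), hmlt2 j⟩) = 1
      have hlow : ((⟨(i:ℕ), hmlt i⟩ : Fin n) : ℕ) < m := i.2
      have hhigh : ¬ ((⟨m + (j:ℕ), hmlt2 j⟩ : Fin n) : ℕ) < m := by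
        show ¬ (m + (j:ℕ) < m)
        omega
      rw [← nneg' hN, neg_sub]
      simp only [hp]
      rw [if_pos hlow, if_neg hhigh]
      have hsub : (((⟨m + (j:ℕ), hmlt2 j⟩ : Fin n) : ℕ) - m : ℕ) = (j:ℕ) := by
        show (m + (j:ℕ)) - m = (j:ℕ)
        omega
      rw [hsub]
      apply hmix
      · have := i.2; omega
      · have := j.2; omega
  have hΦinj : Function.Injective Φ := by
    rintro ⟨i, j⟩ ⟨i', j'⟩ heq
    simp only [hΦ, Prod.mk.injEq] at heq
    obtain ⟨h1, h2⟩ := heq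
    rw [Fin.mk.injEq] at h1 h2
    have h3 : (j:ℕ) = (j':ℕ) := by omega
    exact Prod.ext (Fin.ext h1) (Fin.ext h3)
  have h1 : (Set.range Φ).ncard = Fintype.card (Fin m × Fin (n - m)) := by
    rw [← Set.image_univ, Set.ncard_image_of_injective _ hΦinj, Set.ncard_univ,
      Nat.card_eq_fintype_card]
  calc m * (n - m) = (Set.range Φ).ncard := by
        rw [h1, Fintype.card_prod, Fintype.card_fin, Fintype.card_fin]
    _ ≤ S.ncard := Set.ncard_le_ncard hrange (Set.toFinite _)

end FlatCase

section Arith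

lemma log2_pos : (0:ℝ) < Real.log 2 := Real.log_pos (by norm_num)
lemma log3_pos : (0:ℝ) < Real.log 3 := Real.log_pos (by norm_num)

lemma logb23_pos : (0:ℝ) < Real.logb 2 3 := Real.logb_pos (by norm_num) (by norm_num)

lemma logb23_ge_one : (1:ℝ) ≤ Real.logb 2 3 := by
  rw [Real.logb, le_div_iff₀ log2_pos, one_mul]
  exact Real.log_le_log (by norm_num) (by norm_num)

lemma logbn_nonneg (n : ℕ) : 0 ≤ Real.logb 2 n := by
  rcases Nat.eq_zero_or_pos n with rfl | hpos
  · simp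
  · exact Real.logb_nonneg (by norm_num) (by exact_mod_cast hpos)

lemma logn_le_sqrt (n : ℕ) (h : 1 ≤ n) : Real.log n ≤ 2 * Real.sqrt n := by
  have h0 : (0:ℝ) < (n:ℝ) := by exact_mod_cast h
  have h1 : Real.log (Real.sqrt n) = Real.log n / 2 := Real.log_sqrt (le_of_lt h0)
  have h2 : Real.log (Real.sqrt n) ≤ Real.sqrt n - 1 :=
    Real.log_le_sub_one_of_pos (Real.sqrt_pos.mpr h0)
  rw [h1] at h2
  linarith

lemma flat_arith (ε : ℝ) (hε : 0 < ε) (n : ℕ) (hn : 4096 ≤ n) :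
    (1 / Real.logb 2 3 - ε) * n * Real.logb 2 n
      ≤ ((n / 2) * (n - n / 2) : ℕ) := by
  have hn1 : (1:ℕ) ≤ n := by omega
  have hnR : (4096:ℝ) ≤ (n:ℝ) := by exact_mod_cast hn
  have hnpos : (0:ℝ) < n := by linarith
  have hs : Real.sqrt n * Real.sqrt n = (n:ℝ) :=
    Real.mul_self_sqrt (by positivity)
  have hs64 : (64:ℝ) ≤ Real.sqrt n := by
    have h1 : (64:ℝ) = Real.sqrt 4096 := by
      rw [show (4096:ℝ) = 64^2 by norm_num, Real.sqrt_sq (by norm_num)]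
    rw [h1]
    exact Real.sqrt_le_sqrt hnR
  have hspos : (0:ℝ) < Real.sqrt n := by linarith
  -- LHS ≤ 3 n sqrt n
  have hc : 1 / Real.logb 2 3 - ε ≤ 1 := by
    have h1 : 1 / Real.logb 2 3 ≤ 1 := by
      rw [div_le_one logb23_pos]; exact logb23_ge_one
    linarith
  have hlogb : Real.logb 2 n ≤ 3 * Real.sqrt n := by
    rw [Real.logb]
    rw [div_le_iff₀ log2_pos]
    have h1 := logn_le_sqrt n hn1
    have h2 := Real.log_two_gt_d9
    nlinarith
  have hL : (1 / Real.logb 2 3 - ε) * n * Real.logb 2 n ≤ 3 * n * Real.sqrt n := by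
    have h1 : (1 / Real.logb 2 3 - ε) * n ≤ n := by nlinarith
    have h2 : 0 ≤ Real.logb 2 n := logbn_nonneg n
    nlinarith
  -- RHS ≥ n^2/16
  have hm1 : ((n:ℝ) - 1) / 2 ≤ ((n / 2 : ℕ) : ℝ) := by
    have h1 : n ≤ 2 * (n / 2) + 1 := by omega
    have h2 : (n:ℝ) ≤ 2 * ((n / 2 : ℕ):ℝ) + 1 := by exact_mod_cast h1
    linarith
  have hm2 : (n:ℝ) / 2 ≤ ((n - n / 2 : ℕ) : ℝ) := by
    have h1 : n ≤ 2 * (n - n / 2) := by omega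
    have h2 : (n:ℝ) ≤ 2 * ((n - n/2 : ℕ):ℝ) := by exact_mod_cast h1
    linarith
  have hq : (n:ℝ)/4 ≤ ((n / 2 : ℕ) : ℝ) := by linarith
  have hfin : 3 * (n:ℝ) * Real.sqrt n ≤ ((n / 2 : ℕ) : ℝ) * ((n - n / 2 : ℕ) : ℝ) := by
    have key : 3 * (n:ℝ) * Real.sqrt n ≤ ((n:ℝ)/4) * ((n:ℝ)/2) := by nlinarith
    have h5 : (0:ℝ) ≤ (n:ℝ)/4 := by linarith
    have h6 : (0:ℝ) ≤ (n:ℝ)/2 := by linarith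
    nlinarith [hm1, hm2, hq]
  calc (1 / Real.logb 2 3 - ε) * n * Real.logb 2 n ≤ 3 * n * Real.sqrt n := hL
    _ ≤ ((n / 2 : ℕ) : ℝ) * ((n - n / 2 : ℕ) : ℝ) := hfin
    _ = (((n / 2) * (n - n / 2) : ℕ) : ℝ) := by push_cast; ring

end Arith

set_option maxHeartbeats 2000000 in
/-- For every norm `N` on `ℝ²` and every `ε > 0`, for all sufficiently large `n`
there are `n` points in `ℝ²` determining at least `(1/log₂ 3 - ε)·n·log₂ n`
unit distances according to `N`. -/
theorem thm_planar_unit_distances_lower_bound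
    (N : EuclideanSpace ℝ (Fin 2) → ℝ) (hN : IsNorm N) (ε : ℝ) (hε : 0 < ε) :
    ∃ n₀ : ℕ, ∀ n : ℕ, n₀ ≤ n →
      ∃ p : Fin n → EuclideanSpace ℝ (Fin 2), Function.Injective p ∧
        (1 / Real.logb 2 3 - ε) * n * Real.logb 2 n ≤
          (Set.ncard {q : Fin n × Fin n | q.1 < q.2 ∧ N (p q.1 - p q.2) = 1} : ℝ) := by
  by_cases hF : Flat N
  · refine ⟨4096, fun n hn => ?_⟩
    obtain ⟨p, hpinj, hcount⟩ := flat_case hN hF n (by omega)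
    refine ⟨p, hpinj, ?_⟩
    have h1 := flat_arith ε hε n hn
    have h2 : (((n/2) * (n - n/2) : ℕ) : ℝ) ≤
        (Set.ncard {q : Fin n × Fin n | q.1 < q.2 ∧ N (p q.1 - p q.2) = 1} : ℝ) := by
      exact_mod_cast hcount
    linarith
  · by_cases hδ : 1 ≤ ε * Real.logb 2 3
    · refine ⟨1, fun n hn => ?_⟩
      obtain ⟨U, W, htri, hfree⟩ := exists_triangles hN hF 1
      obtain ⟨p, hpinj, hcount⟩ := counting hN (le_refl 1)
        (by omega : 0 * 3 ^ 1 ≤ n) htri hfree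
      refine ⟨p, hpinj, ?_⟩
      have hc : 1 / Real.logb 2 3 - ε ≤ 0 := by
        rw [sub_nonpos, div_le_iff₀ logb23_pos]
        nlinarith
      have h2 : 0 ≤ Real.logb 2 n := logbn_nonneg n
      have h3 : (0:ℝ) ≤ (n:ℝ) := Nat.cast_nonneg n
      have h4 : (1 / Real.logb 2 3 - ε) * n * Real.logb 2 n ≤ 0 := by
        rw [mul_assoc]
        exact mul_nonpos_iff.mpr (Or.inr ⟨hc, mul_nonneg h3 h2⟩)
      have h5 : (0:ℝ) ≤
          (Set.ncard {q : Fin n × Fin n | q.1 < q.2 ∧ N (p q.1 - p q.2) = 1} : ℝ) :=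
        Nat.cast_nonneg _
      linarith
    · push_neg at hδ
      obtain ⟨δ, hδdef⟩ : ∃ δ : ℝ, δ = ε * Real.logb 2 3 := ⟨_, rfl⟩
      have hδpos : 0 < δ := by rw [hδdef]; exact mul_pos hε logb23_pos
      have hδ1 : δ < 1 := by rw [hδdef]; exact hδ
      obtain ⟨t, ht⟩ := pow_unbounded_of_one_lt (4/δ) (by norm_num : (1:ℝ) < 3)
      obtain ⟨M, hM⟩ := exists_nat_ge (4*((t:ℝ)+1)/(3*δ))
      refine ⟨3 ^ (M + t + 1), fun n hn => ?_⟩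
      have hn0 : n ≠ 0 := by
        have h1 : 1 ≤ 3 ^ (M + t + 1) := Nat.one_le_pow _ _ (by norm_num)
        omega
      have hlogn : M + t + 1 ≤ Nat.log 3 n :=
        (Nat.le_log_iff_pow_le (by norm_num) hn0).mpr hn
      obtain ⟨k, hk⟩ : ∃ k : ℕ, k = Nat.log 3 n - t := ⟨_, rfl⟩
      have hkt : k + t = Nat.log 3 n := by omega
      have hkM : M + 1 ≤ k := by omega
      have hk1 : 1 ≤ k := by omega
      have h3kn : 3 ^ (k + t) ≤ n := by
        rw [hkt]; exact Nat.pow_log_le_self 3 hn0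
      have hn3 : n < 3 ^ (k + t + 1) := by
        have := Nat.lt_pow_succ_log_self (by norm_num : 1 < 3) n
        rw [← hkt] at this
        exact this
      obtain ⟨q, hq⟩ : ∃ q : ℕ, q = n / 3 ^ k := ⟨_, rfl⟩
      have hqn : q * 3 ^ k ≤ n := by rw [hq]; exact Nat.div_mul_le_self n _
      obtain ⟨U, W, htri, hfree⟩ := exists_triangles hN hF k
      obtain ⟨p, hpinj, hcount⟩ := counting hN hk1 hqn htri hfree
      refine ⟨p, hpinj, ?_⟩
      -- real arithmetic
      have hL2 := log2_pos
      have hL3 := log3_pos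
      have hnR1 : (1:ℝ) ≤ (n:ℝ) := by exact_mod_cast Nat.one_le_iff_ne_zero.mpr hn0
      have hnRpos : (0:ℝ) < n := by linarith
      have hlogb23 : Real.logb 2 3 = Real.log 3 / Real.log 2 := by rw [Real.logb]
      have hδform : δ = ε * (Real.log 3 / Real.log 2) := by rw [hδdef, hlogb23]
      have hA : 1 / Real.logb 2 3 - ε = (1 - δ) * (Real.log 2 / Real.log 3) := by
        rw [hlogb23, hδform]
        field_simp
      have hLHS : (1 / Real.logb 2 3 - ε) * n * Real.logb 2 n
          = (1 - δ) * n * Real.log n / Real.log 3 := by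
        rw [hA, Real.logb]
        field_simp
      -- log n ≤ (k+t+1) log 3
      have hlogn_le : Real.log n ≤ ((k:ℝ) + t + 1) * Real.log 3 := by
        have h1 : (n:ℝ) < 3 ^ (k + t + 1) := by
          exact_mod_cast hn3
        have h2 : Real.log n ≤ Real.log ((3:ℝ) ^ (k + t + 1)) :=
          Real.log_le_log hnRpos (le_of_lt h1)
        rw [Real.log_pow] at h2
        have h3 : ((k + t + 1 : ℕ):ℝ) = (k:ℝ) + t + 1 := by push_cast; ring
        rw [h3] at h2
        exact h2
      have hlogn0 : 0 ≤ Real.log n := Real.log_nonneg hnR1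
      have h1δ : 0 < 1 - δ := by linarith
      have step1 : (1 - δ) * n * Real.log n / Real.log 3
          ≤ (1 - δ) * n * ((k:ℝ) + t + 1) := by
        rw [div_le_iff₀ hL3]
        have hnn : 0 ≤ (1 - δ) * (n:ℝ) := by positivity
        nlinarith [mul_le_mul_of_nonneg_left hlogn_le hnn]
      -- lower bound on the count
      have f3 : (n:ℝ) - (3:ℝ)^k < ((q * 3 ^ k : ℕ) : ℝ) := by
        have h1 : n < q * 3 ^ k + 3 ^ k := by
          rw [hq, mul_comm]
          conv_lhs => rw [← Nat.div_add_mod n (3 ^ k)]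
          exact Nat.add_lt_add_left (Nat.mod_lt _ (by positivity)) _
        have h2 : (n:ℝ) < ((q * 3 ^ k + 3 ^ k : ℕ):ℝ) := by exact_mod_cast h1
        push_cast at h2
        push_cast
        linarith
      obtain ⟨γ, hγdef⟩ : ∃ γ : ℝ, γ = ((3:ℝ)^t)⁻¹ := ⟨_, rfl⟩
      have h3tpos : (0:ℝ) < (3:ℝ)^t := by positivity
      have hγpos : 0 < γ := by rw [hγdef]; positivity
      have hγδ : γ < δ/4 := by
        rw [div_lt_iff₀ hδpos] at ht
        have hmul : ((3:ℝ)^t)⁻¹ * ((3:ℝ)^t) = 1 := inv_mul_cancel₀ (ne_of_gt h3tpos)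
        rw [hγdef]
        nlinarith [hmul, h3tpos, hδpos]
      have f5 : (3:ℝ)^k ≤ γ * n := by
        have h1 : ((3:ℝ)^k) * ((3:ℝ)^t) ≤ n := by
          have := h3kn
          have h2 : ((3 ^ (k+t) : ℕ):ℝ) ≤ (n:ℝ) := by exact_mod_cast this
          push_cast at h2
          rw [pow_add] at h2
          exact h2
        rw [hγdef, inv_mul_eq_div, le_div_iff₀ h3tpos]
        exact h1
      have f6 : 4*((t:ℝ)+1) ≤ 3*δ*k := by
        have h1 : 4*((t:ℝ)+1)/(3*δ) ≤ (k:ℝ) := by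
          have h2 : (M:ℝ) ≤ (k:ℝ) := by
            have : M ≤ k := by omega
            exact_mod_cast this
          linarith
        rw [div_le_iff₀ (by positivity)] at h1
        linarith
      have hcast : ((q * (k * 3 ^ k) : ℕ) : ℝ) = (q:ℝ) * ((k:ℝ) * (3:ℝ)^k) := by
        push_cast; ring
      have hcount2 : ((q * (k * 3 ^ k) : ℕ) : ℝ) ≤
          (Set.ncard {w : Fin n × Fin n | w.1 < w.2 ∧ N (p w.1 - p w.2) = 1} : ℝ) := by
        exact_mod_cast hcount
      have hkR0 : (0:ℝ) ≤ (k:ℝ) := Nat.cast_nonneg k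
      have hq3cast : ((q * 3 ^ k : ℕ) : ℝ) = (q:ℝ) * (3:ℝ)^k := by push_cast; ring
      have step2 : (1 - δ) * n * ((k:ℝ) + t + 1) ≤ (k:ℝ) * ((n:ℝ) - γ * n) := by
        have hδt : (0:ℝ) ≤ δ * t := by positivity
        have hkγ : (k:ℝ) * γ ≤ (k:ℝ) * (δ/4) :=
          mul_le_mul_of_nonneg_left (le_of_lt hγδ) hkR0
        have key : (1 - δ) * ((k:ℝ) + t + 1) ≤ (k:ℝ) * (1 - δ/4) := by nlinarith [f6, hδt]
        have hmain : (1 - δ) * ((k:ℝ) + t + 1) ≤ (k:ℝ) * (1 - γ) := by nlinarith [hkγ]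
        calc (1 - δ) * n * ((k:ℝ) + t + 1) = ((1 - δ) * ((k:ℝ) + t + 1)) * n := by ring
          _ ≤ ((k:ℝ) * (1 - γ)) * n := mul_le_mul_of_nonneg_right hmain (le_of_lt hnRpos)
          _ = (k:ℝ) * ((n:ℝ) - γ * n) := by ring
      have step3 : (k:ℝ) * ((n:ℝ) - γ * n) ≤ ((q * (k * 3 ^ k) : ℕ) : ℝ) := by
        rw [hcast]
        have h1 : (n:ℝ) - γ * n ≤ (q:ℝ) * (3:ℝ)^k := by
          have h2 := f3
          rw [hq3cast] at h2
          linarith [f5]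
        calc (k:ℝ) * ((n:ℝ) - γ * n) ≤ (k:ℝ) * ((q:ℝ) * (3:ℝ)^k) :=
              mul_le_mul_of_nonneg_left h1 hkR0
          _ = (q:ℝ) * ((k:ℝ) * (3:ℝ)^k) := by ring
      calc (1 / Real.logb 2 3 - ε) * n * Real.logb 2 n
          = (1 - δ) * n * Real.log n / Real.log 3 := hLHS
        _ ≤ (1 - δ) * n * ((k:ℝ) + t + 1) := step1
        _ ≤ (k:ℝ) * ((n:ℝ) - γ * n) := step2
        _ ≤ ((q * (k * 3 ^ k) : ℕ) : ℝ) := step3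
        _ ≤ _ := hcount2
end

section
/- For every integer d ≥ 1, every B ∈ 𝓑_d and every μ > 0 there exists B' ∈ 𝓑_d such that B' is the convex hull of a finite set of points, the Hausdorff distance d_H(B, B') is less than μ, and every supporting-hyperplane section of B' has Euclidean diameter less than μ; that is, for every nonzero a ∈ ℝ^d and every b ∈ ℝ such that ⟨a, x⟩ ≤ b for all x ∈ B', the set {x ∈ B' : ⟨a, x⟩ = b} has Euclidean diameter less than μ. (Since B' has 0 in its interior, this says exactly that all facets of the polytope B' have diameter less than μ.) -/
open Metric Set

set_option maxHeartbeats 1000000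

private lemma sq_combo (a b θ : ℝ) (h0 : 0 ≤ θ) (h1 : θ ≤ 1) :
    (θ*a+(1-θ)*b)^2 ≤ θ*a^2+(1-θ)*b^2 := by
  nlinarith [sq_nonneg (a - b), mul_nonneg h0 (sub_nonneg.2 h1)]

private lemma one_sub_le_inv_sqrt (s : ℝ) (hs : 0 ≤ s) : 1 - s ≤ (Real.sqrt (1+s))⁻¹ := by
  have h1 : (1:ℝ) ≤ Real.sqrt (1+s) := by
    have := Real.sqrt_le_sqrt (show (1:ℝ) ≤ 1+s by linarith)
    rwa [Real.sqrt_one] at this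
  have h0 : 0 < Real.sqrt (1+s) := lt_of_lt_of_le one_pos h1
  rw [← one_div, le_div_iff₀ h0]
  have hsq : Real.sqrt (1+s) ^ 2 = 1 + s := Real.sq_sqrt (by linarith)
  nlinarith [h1, hsq, sq_nonneg (Real.sqrt (1+s) - 1)]

private lemma mem_of_near {E : Type*} [NormedAddCommGroup E] [InnerProductSpace ℝ E]
    [CompleteSpace E] (C : Set E) (hC : Convex ℝ C) (hCc : IsClosed C)
    (η ρ : ℝ) (hη : 0 ≤ η)
    (happrox : ∀ x : E, ‖x‖ ≤ ρ → ∃ c ∈ C, dist x c ≤ η) :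
    ∀ y : E, ‖y‖ + η ≤ ρ → y ∈ C := by
  intro y hy
  by_contra hyC
  obtain ⟨f, u, hfC, hfy⟩ := geometric_hahn_banach_closed_point hC hCc hyC
  obtain ⟨a, ha⟩ : ∃ a : E, ∀ x : E, (inner ℝ a x : ℝ) = f x :=
    ⟨(InnerProductSpace.toDual ℝ E).symm f, fun x => InnerProductSpace.toDual_symm_apply⟩
  have hρ0 : 0 ≤ ρ := le_trans (by positivity) hy
  obtain ⟨c0, hc0C, _⟩ := happrox 0 (by simpa using hρ0)
  have haz : a ≠ 0 := by
    rintro rfl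
    have h1 : f y = 0 := by rw [← ha]; simp
    have h2 : f c0 = 0 := by rw [← ha]; simp
    have := hfC c0 hc0C
    rw [h2] at this; rw [h1] at hfy; linarith
  have hna : 0 < ‖a‖ := norm_pos_iff.2 haz
  set p : E := y + (η / ‖a‖) • a with hp_def
  have hpnorm : ‖p‖ ≤ ρ := by
    calc ‖p‖ ≤ ‖y‖ + ‖(η / ‖a‖) • a‖ := norm_add_le _ _
    _ = ‖y‖ + η := by
        rw [norm_smul, Real.norm_eq_abs, abs_of_nonneg (div_nonneg hη hna.le)]
        field_simp
    _ ≤ ρ := hy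
  obtain ⟨c, hcC, hcd⟩ := happrox p hpnorm
  have h1 : f p = f y + η * ‖a‖ := by
    rw [← ha, ← ha, hp_def, inner_add_right, real_inner_smul_right,
      real_inner_self_eq_norm_sq]
    field_simp
  have h2 : f p ≤ f c + η * ‖a‖ := by
    have : f p - f c = (inner ℝ a (p - c) : ℝ) := by rw [ha]; simp [map_sub]
    have h3 : (inner ℝ a (p - c) : ℝ) ≤ ‖a‖ * ‖p - c‖ := real_inner_le_norm a (p - c)
    have h4 : ‖p - c‖ ≤ η := by rwa [← dist_eq_norm]
    nlinarith [mul_le_mul_of_nonneg_left h4 hna.le]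
  have := hfC c hcC
  linarith

private lemma facet_arith (h η ε ρ q n μ : ℝ) (hh : ρ ≤ h) (hρ : 0 < ρ)
    (hη : 0 < η) (hηρ : η ≤ ρ/4) (hηε : η ≤ ε*ρ*μ^2/64) (hε : 0 < ε) (hμ : 0 < μ)
    (hq0 : 0 < q) (hq : q ≤ 1 - ε*n^2/4) (hn : 0 ≤ n)
    (hlow : h - η ≤ Real.sqrt q * h) : n ≤ μ/2 := by
  have hh0 : 0 < h := lt_of_lt_of_le hρ hh
  have hhη : 0 ≤ h - η := by linarith
  have hs2 : Real.sqrt q ^ 2 = q := Real.sq_sqrt hq0.le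
  have h8 : (h - η)^2 ≤ q * h^2 := by nlinarith [mul_self_le_mul_self hhη hlow, hs2]
  have e1 : q * h^2 ≤ h^2 - ε*n^2*h^2/4 := by nlinarith [hq, sq_nonneg h]
  have e2 : ε*n^2*h^2/4 ≤ 2*η*h := by nlinarith
  have e3 : ε*n^2*h/4 ≤ 2*η := by
    nlinarith [e2, hh0, mul_nonneg (mul_nonneg hε.le (sq_nonneg n)) hh0.le]
  have e4 : ε*ρ*n^2 ≤ 8*η := by
    nlinarith [e3, hh, mul_nonneg (mul_nonneg hε.le (sq_nonneg n)) (sub_nonneg.2 hh)]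
  have e5 : n^2 ≤ μ^2/8 := by nlinarith [e4, hηε, mul_pos hε hρ]
  nlinarith [e5, sq_nonneg (n - μ/2)]

private lemma aux_main {E : Type*} [NormedAddCommGroup E] [InnerProductSpace ℝ E]
    [FiniteDimensional ℝ E] [Nontrivial E]
    (B : Set E) (hcomp : IsCompact B) (hconv : Convex ℝ B) (hsymm : -B = B)
    (h0int : (0:E) ∈ interior B) (μ : ℝ) (hμ : 0 < μ) :
    ∃ B' : Set E, (IsCompact B' ∧ Convex ℝ B' ∧ -B' = B' ∧ (0:E) ∈ interior B') ∧
      (∃ S : Finset E, B' = convexHull ℝ (S : Set E)) ∧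
      Metric.hausdorffDist B B' < μ ∧
      ∀ a : E, a ≠ 0 → ∀ b : ℝ,
        (∀ x ∈ B', (inner ℝ a x : ℝ) ≤ b) →
        Metric.diam {x ∈ B' | (inner ℝ a x : ℝ) = b} < μ := by
  have hnhds : B ∈ nhds (0:E) := mem_interior_iff_mem_nhds.mp h0int
  have habs : Absorbent ℝ B := absorbent_nhds_zero hnhds
  have hBcl : IsClosed B := hcomp.isClosed
  -- inner radius r
  obtain ⟨r, hr0, hrB⟩ : ∃ r > 0, Metric.ball (0:E) r ⊆ B := by
    obtain ⟨r, hr0, h⟩ := Metric.mem_nhds_iff.mp hnhds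
    exact ⟨r, hr0, h⟩
  -- outer radius R
  obtain ⟨R0, hR0⟩ := hcomp.isBounded.subset_closedBall 0
  set R : ℝ := max R0 1 with hR_def
  have hR1 : (1:ℝ) ≤ R := le_max_right _ _
  have hR0' : (0:ℝ) < R := lt_of_lt_of_le one_pos hR1
  have hRB : B ⊆ Metric.closedBall 0 R :=
    hR0.trans (Metric.closedBall_subset_closedBall (le_max_left _ _))
  have hnormB : ∀ x ∈ B, ‖x‖ ≤ R := by
    intro x hx
    have := hRB hx
    rwa [Metric.mem_closedBall, dist_zero_right] at this
  clear_value R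
  -- gauge facts
  set γ : E → ℝ := gauge B with hγ_def
  have hγ0 : ∀ x, 0 ≤ γ x := fun x => gauge_nonneg x
  have hγ_mem : ∀ x, x ∈ B ↔ γ x ≤ 1 := by
    intro x
    constructor
    · exact fun h => gauge_le_one_of_mem h
    · intro h
      have := (gauge_le_one_iff_mem_closure hconv hnhds).mp h
      rwa [hBcl.closure_eq] at this
  have hγ_add : ∀ x y, γ (x + y) ≤ γ x + γ y := gauge_add_le hconv habs
  have hγ_smul : ∀ (t : ℝ) x, 0 ≤ t → γ (t • x) = t * γ x := by
    intro t x ht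
    simpa using gauge_smul_of_nonneg ht x
  have hγ_neg : ∀ x, γ (-x) = γ x := by
    intro x
    refine gauge_neg (fun y hy => ?_) x
    rw [← hsymm]; simpa using hy
  have hγ_le : ∀ x, γ x ≤ ‖x‖ / r := by
    intro x
    have h1 : γ x ≤ gauge (Metric.ball (0:E) r) x :=
      gauge_mono (absorbent_ball_zero hr0) hrB x
    rwa [gauge_ball hr0.le] at h1
  have hγ_cont : Continuous γ := continuous_gauge hconv hnhds
  have hγ_zero : γ (0:E) = 0 := gauge_zero
  clear_value γ
  -- epsilon
  set ε : ℝ := min 1 (μ / (4 * R^3)) with hε_def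
  have hε0 : 0 < ε := lt_min one_pos (by positivity)
  have hε1 : ε ≤ 1 := min_le_left _ _
  have hεμ : ε * R^3 ≤ μ/4 := by
    have h1 : ε ≤ μ / (4 * R^3) := min_le_right _ _
    have h2 : ε * R^3 ≤ (μ / (4 * R^3)) * R^3 := by
      apply mul_le_mul_of_nonneg_right h1 (by positivity)
    calc ε * R^3 ≤ (μ / (4 * R^3)) * R^3 := h2
      _ = μ/4 := by field_simp
  clear_value ε
  -- the function g and the body K
  set g : E → ℝ := fun x => (γ x)^2 + ε * ‖x‖^2 with hg_def
  have hg0 : ∀ x, 0 ≤ g x := by intro x; have := hγ0 x; positivity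
  have hg_pos : ∀ x : E, x ≠ 0 → 0 < g x := by
    intro x hx
    have h1 : 0 < ‖x‖ := norm_pos_iff.2 hx
    have := hγ0 x
    have : 0 < ε * ‖x‖^2 := by positivity
    simp only [hg_def]
    nlinarith [sq_nonneg (γ x)]
  have hg_smul : ∀ (t : ℝ) (x : E), 0 ≤ t → g (t • x) = t^2 * g x := by
    intro t x ht
    simp only [hg_def, hγ_smul t x ht, norm_smul, Real.norm_eq_abs, abs_of_nonneg ht]
    ring
  have hg_neg : ∀ x, g (-x) = g x := by
    intro x; simp only [hg_def, hγ_neg, norm_neg]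
  have hg_cont : Continuous g := by
    apply Continuous.add
    · exact (hγ_cont.pow 2)
    · exact continuous_const.mul ((continuous_norm).pow 2)
  set K : Set E := {x | g x ≤ 1} with hK_def
  have hKB : K ⊆ B := by
    intro x hx
    rw [hγ_mem]
    have h1 : (γ x)^2 ≤ 1 := by
      have : ε * ‖x‖^2 ≥ 0 := by positivity
      have hx' : g x ≤ 1 := hx
      simp only [hg_def] at hx'
      linarith
    nlinarith [hγ0 x]
  have hKconv : Convex ℝ K := by
    intro x hx y hy θ τ hθ hτ hθτ
    have hτ' : τ = 1 - θ := by linarith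
    subst hτ'
    have hθ1 : θ ≤ 1 := by linarith
    have h1 : γ (θ • x + (1-θ) • y) ≤ θ * γ x + (1-θ) * γ y := by
      calc γ (θ • x + (1-θ) • y) ≤ γ (θ • x) + γ ((1-θ) • y) := hγ_add _ _
        _ = θ * γ x + (1-θ) * γ y := by
            rw [hγ_smul θ x hθ, hγ_smul (1-θ) y (by linarith)]
    have h2 : ‖θ • x + (1-θ) • y‖ ≤ θ * ‖x‖ + (1-θ) * ‖y‖ := by
      calc ‖θ • x + (1-θ) • y‖ ≤ ‖θ • x‖ + ‖(1-θ) • y‖ := norm_add_le _ _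
        _ = θ * ‖x‖ + (1-θ) * ‖y‖ := by
            rw [norm_smul, norm_smul, Real.norm_eq_abs, Real.norm_eq_abs,
              abs_of_nonneg hθ, abs_of_nonneg (by linarith : (0:ℝ) ≤ 1-θ)]
    have hγc : (γ (θ • x + (1-θ) • y))^2 ≤ θ * (γ x)^2 + (1-θ) * (γ y)^2 := by
      have := sq_combo (γ x) (γ y) θ hθ hθ1
      nlinarith [hγ0 (θ • x + (1-θ) • y), mul_nonneg hθ (hγ0 x),
        mul_nonneg (by linarith : (0:ℝ) ≤ 1-θ) (hγ0 y)]
    have hnc : ‖θ • x + (1-θ) • y‖^2 ≤ θ * ‖x‖^2 + (1-θ) * ‖y‖^2 := by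
      have := sq_combo ‖x‖ ‖y‖ θ hθ hθ1
      nlinarith [norm_nonneg (θ • x + (1-θ) • y), mul_nonneg hθ (norm_nonneg x),
        mul_nonneg (by linarith : (0:ℝ) ≤ 1-θ) (norm_nonneg y)]
    have hx' : g x ≤ 1 := hx
    have hy' : g y ≤ 1 := hy
    simp only [hg_def] at hx' hy' ⊢
    show (γ (θ • x + (1-θ) • y))^2 + ε * ‖θ • x + (1-θ) • y‖^2 ≤ 1
    nlinarith [hε0.le]
  have hKcl : IsClosed K := isClosed_le hg_cont continuous_const
  have hKcomp : IsCompact K := hcomp.of_isClosed_subset hKcl hKB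
  -- midpoint strict convexity
  have hg_mid : ∀ x y : E, g ((1/2:ℝ) • (x+y)) ≤ (g x + g y)/2 - ε * ‖x-y‖^2/4 := by
    intro x y
    have hpar : ‖x+y‖^2 + ‖x-y‖^2 = 2 * (‖x‖^2 + ‖y‖^2) := by
      have := parallelogram_law_with_norm ℝ x y
      nlinarith [this]
    have h1 : γ ((1/2:ℝ) • (x+y)) ≤ (γ x + γ y)/2 := by
      calc γ ((1/2:ℝ) • (x+y)) = (1/2) * γ (x+y) := hγ_smul _ _ (by norm_num)
        _ ≤ (1/2) * (γ x + γ y) := by nlinarith [hγ_add x y]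
        _ = (γ x + γ y)/2 := by ring
    have h1' : (γ ((1/2:ℝ) • (x+y)))^2 ≤ ((γ x)^2 + (γ y)^2)/2 := by
      nlinarith [h1, hγ0 ((1/2:ℝ) • (x+y)), hγ0 x, hγ0 y, sq_nonneg (γ x - γ y)]
    have h2 : ‖(1/2:ℝ) • (x+y)‖^2 = (‖x‖^2 + ‖y‖^2)/2 - ‖x-y‖^2/4 := by
      rw [norm_smul]
      simp only [Real.norm_eq_abs]
      rw [abs_of_nonneg (by norm_num : (0:ℝ) ≤ 1/2)]
      nlinarith [hpar]
    simp only [hg_def]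
    nlinarith [h1', h2, hε0.le]
  have hKmem : ∀ x : E, x ∈ K ↔ g x ≤ 1 := fun _ => Iff.rfl
  have hg_zero : g (0:E) = 0 := by simp only [hg_def]; rw [hγ_zero]; simp
  clear_value g K
  -- inner radius of K
  set ρ : ℝ := (Real.sqrt (1/r^2 + ε))⁻¹ with hρ_def
  have hsq_pos : 0 < Real.sqrt (1/r^2 + ε) := Real.sqrt_pos.2 (by positivity)
  have hρ0 : 0 < ρ := by positivity
  have hball : ∀ x : E, ‖x‖ ≤ ρ → x ∈ K := by
    intro x hx
    rw [hKmem]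
    have h1 : γ x ≤ ‖x‖ / r := hγ_le x
    have h2 : (γ x)^2 ≤ (‖x‖/r)^2 := by nlinarith [hγ0 x, h1]
    have h2' : (‖x‖/r)^2 = ‖x‖^2 * (1/r^2) := by ring
    have h2'' : (γ x)^2 ≤ ‖x‖^2 * (1/r^2) := h2.trans_eq h2'
    have hexp : ‖x‖^2 * (1/r^2 + ε) = ‖x‖^2 * (1/r^2) + ε * ‖x‖^2 := by ring
    have h3 : g x ≤ ‖x‖^2 * (1/r^2 + ε) := by
      simp only [hg_def]
      rw [hexp]
      linarith
    have h4 : ‖x‖^2 ≤ ρ^2 := by nlinarith [norm_nonneg x, hρ0.le]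
    have hc : (0:ℝ) ≤ 1/r^2 + ε := add_nonneg (by positivity) hε0.le
    have h5 : ρ^2 * (1/r^2 + ε) = 1 := by
      rw [hρ_def, inv_pow, Real.sq_sqrt hc]
      field_simp
    have h6 : ‖x‖^2 * (1/r^2+ε) ≤ ρ^2 * (1/r^2+ε) := mul_le_mul_of_nonneg_right h4 hc
    exact h3.trans (h6.trans h5.le)
  clear_value ρ
  -- eta
  set η : ℝ := min (μ/4) (min (ρ/4) (ε*ρ*μ^2/64)) with hη_def
  have hη0 : 0 < η := lt_min (by positivity) (lt_min (by positivity) (by positivity))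
  have hημ : η ≤ μ/4 := min_le_left _ _
  have hηρ : η ≤ ρ/4 := le_trans (min_le_right _ _) (min_le_left _ _)
  have hηε : η ≤ ε*ρ*μ^2/64 := le_trans (min_le_right _ _) (min_le_right _ _)
  clear_value η
  -- the radial map φ
  set φ : E → E := fun u => (Real.sqrt (g u))⁻¹ • u with hφ_def
  have hφ_memK : ∀ x : E, x ≠ 0 → g (φ x) = 1 := by
    intro x hx
    have hgx := hg_pos x hx
    simp only [hφ_def]
    rw [hg_smul _ _ (by positivity)]
    rw [inv_pow, Real.sq_sqrt hgx.le]
    exact inv_mul_cancel₀ hgx.ne'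
  have hφ_hom : ∀ (t : ℝ) (x : E), 0 < t → φ (t • x) = φ x := by
    intro t x ht
    simp only [hφ_def]
    rw [hg_smul _ _ ht.le]
    rw [Real.sqrt_mul (by positivity) (g x), Real.sqrt_sq ht.le]
    rw [smul_smul, mul_inv, mul_comm t⁻¹, mul_assoc, inv_mul_cancel₀ ht.ne', mul_one]
  have hφ_eq : ∀ x : E, φ x = (Real.sqrt (g x))⁻¹ • x := fun x => by rw [hφ_def]
  -- continuity of φ on the sphere, uniform continuity, δ
  have hφ_contOn : ContinuousOn φ (Metric.sphere (0:E) 1) := by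
    apply ContinuousOn.smul
    · apply ContinuousOn.inv₀
      · exact (Real.continuous_sqrt.comp hg_cont).continuousOn
      · intro u hu
        have hu1 : ‖u‖ = 1 := by rwa [mem_sphere_zero_iff_norm] at hu
        have : u ≠ 0 := by intro h; rw [h] at hu1; simp at hu1
        exact ne_of_gt (Real.sqrt_pos.2 (hg_pos u this))
    · exact continuousOn_id
  have huc := (isCompact_sphere (0:E) 1).uniformContinuousOn_of_continuous hφ_contOn
  rw [Metric.uniformContinuousOn_iff] at huc
  obtain ⟨δ, hδ0, hδ⟩ := huc η hη0
  -- finite net on the sphere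
  obtain ⟨T0, hT0s, hT0fin, hT0cov⟩ :=
    finite_approx_of_totallyBounded (isCompact_sphere (0:E) 1).totallyBounded δ hδ0
  -- the finite symmetric vertex set
  set S : Set E := (φ '' T0) ∪ (-(φ '' T0)) with hS_def
  have hSfin : S.Finite := by
    apply Set.Finite.union (hT0fin.image φ)
    exact (hT0fin.image φ).neg
  have hS_symm : -S = S := by
    show -(φ '' T0 ∪ -(φ '' T0)) = φ '' T0 ∪ -(φ '' T0)
    rw [Set.union_neg, neg_neg]
    exact Set.union_comm _ _
  have hS_sub_K : S ⊆ K := by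
    rintro y (⟨u, hu, rfl⟩ | hy)
    · have hu1' := hT0s hu
      have hu1 : ‖u‖ = 1 := by rwa [mem_sphere_zero_iff_norm] at hu1'
      have : u ≠ 0 := by intro h; rw [h] at hu1; simp at hu1
      rw [hKmem, hφ_memK u this]
    · rw [Set.mem_neg] at hy
      obtain ⟨u, hu, huy⟩ := hy
      have hu1' := hT0s hu
      have hu1 : ‖u‖ = 1 := by rwa [mem_sphere_zero_iff_norm] at hu1'
      have hune : u ≠ 0 := by intro h; rw [h] at hu1; simp at hu1
      rw [hKmem, show y = -(φ u) by rw [huy, neg_neg], hg_neg, hφ_memK u hune]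
  -- net property of S
  have hSnet : ∀ x : E, x ≠ 0 → ∃ s ∈ S, dist (φ x) s ≤ η := by
    intro x hx
    set u₀ : E := ‖x‖⁻¹ • x with hu₀_def
    have hu₀ : ‖u₀‖ = 1 := norm_smul_inv_norm hx
    have hu₀s : u₀ ∈ Metric.sphere (0:E) 1 := by rwa [mem_sphere_zero_iff_norm]
    obtain ⟨u, hu, hud⟩ : ∃ u ∈ T0, u₀ ∈ Metric.ball u δ := by
      have := hT0cov hu₀s
      simpa using this
    have hus : u ∈ Metric.sphere (0:E) 1 := hT0s hu
    have hd : dist u₀ u < δ := by rwa [Metric.mem_ball] at hud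
    have hdφ : dist (φ u₀) (φ u) < η := hδ u₀ hu₀s u hus hd
    have hφx : φ x = φ u₀ := by
      have hxx : ‖x‖ • u₀ = x := smul_inv_smul₀ (norm_ne_zero_iff.2 hx) x
      calc φ x = φ (‖x‖ • u₀) := by rw [hxx]
        _ = φ u₀ := hφ_hom _ _ (norm_pos_iff.2 hx)
    exact ⟨φ u, Set.mem_union_left _ ⟨u, hu, rfl⟩, by rw [hφx]; exact hdφ.le⟩
  clear_value φ S
  -- the polytope
  set P : Set E := convexHull ℝ S with hP_def
  have hPcomp : IsCompact P := hSfin.isCompact_convexHull (𝕜 := ℝ)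
  have hPconv : Convex ℝ P := convex_convexHull ℝ S
  have hPcl : IsClosed P := hPcomp.isClosed
  have hSP : S ⊆ P := subset_convexHull ℝ S
  have hPK : P ⊆ K := convexHull_min hS_sub_K hKconv
  have hPsymm : -P = P := by
    rw [hP_def, ← convexHull_neg, hS_symm]
  obtain ⟨x₁, hx₁⟩ := exists_ne (0:E)
  obtain ⟨s₁, hs₁S, _⟩ := hSnet x₁ hx₁
  have h0P : (0:E) ∈ P := by
    have hns₁S : -s₁ ∈ S := by
      have : -s₁ ∈ -S := by rw [Set.mem_neg, neg_neg]; exact hs₁S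
      rwa [hS_symm] at this
    have := hPconv (hSP hs₁S) (hSP hns₁S) (by norm_num : (0:ℝ) ≤ 1/2)
      (by norm_num : (0:ℝ) ≤ 1/2) (by norm_num : (1/2:ℝ) + 1/2 = 1)
    simpa using this
  -- every point of K is η-close to P
  have hnet : ∀ x ∈ K, ∃ c ∈ P, dist x c ≤ η := by
    intro x hxK
    rcases eq_or_ne x 0 with rfl | hx0
    · exact ⟨0, h0P, by simp [hη0.le]⟩
    · obtain ⟨s, hsS, hsd⟩ := hSnet x hx0
      have hgx := hg_pos x hx0
      have hgx1 : g x ≤ 1 := (hKmem x).1 hxK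
      have ht0 : 0 < Real.sqrt (g x) := Real.sqrt_pos.2 hgx
      have ht1 : Real.sqrt (g x) ≤ 1 := Real.sqrt_le_one.2 hgx1
      have hc : Real.sqrt (g x) • s ∈ P := by
        have := hPconv (hSP hsS) h0P ht0.le
          (by linarith : (0:ℝ) ≤ 1 - Real.sqrt (g x)) (by ring)
        simpa using this
      refine ⟨Real.sqrt (g x) • s, hc, ?_⟩
      have hxt : Real.sqrt (g x) • φ x = x := by
        rw [hφ_eq]
        exact smul_inv_smul₀ ht0.ne' x
      calc dist x (Real.sqrt (g x) • s)
          = dist (Real.sqrt (g x) • φ x) (Real.sqrt (g x) • s) := by rw [hxt]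
        _ = Real.sqrt (g x) * dist (φ x) s := by
            rw [dist_smul₀, Real.norm_eq_abs, abs_of_pos ht0]
        _ ≤ 1 * η := mul_le_mul ht1 hsd dist_nonneg zero_le_one
        _ = η := one_mul η
  have hPB : P ⊆ B := hPK.trans hKB
  -- Hausdorff distance
  have hBapprox : ∀ x ∈ B, ∃ y ∈ P, dist x y ≤ μ/2 := by
    intro x hxB
    have hγx : γ x ≤ 1 := (hγ_mem x).1 hxB
    have hxR : ‖x‖ ≤ R := hnormB x hxB
    have hgxle : g x ≤ 1 + ε * R^2 := by
      simp only [hg_def]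
      have hx2 : ‖x‖^2 ≤ R^2 := by nlinarith [hxR, norm_nonneg x]
      have hεx : ε * ‖x‖^2 ≤ ε * R^2 := mul_le_mul_of_nonneg_left hx2 hε0.le
      have hγ2 : γ x ^ 2 ≤ 1 := by nlinarith [hγx, hγ0 x]
      linarith
    by_cases hgx1 : g x ≤ 1
    · obtain ⟨c, hcP, hcd⟩ := hnet x ((hKmem x).2 hgx1)
      exact ⟨c, hcP, by linarith [hημ]⟩
    · push_neg at hgx1
      have hgx0 : 0 < g x := lt_trans one_pos hgx1
      have hsq0 : 0 < Real.sqrt (g x) := Real.sqrt_pos.2 hgx0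
      have hx0 : x ≠ 0 := by
        intro h0
        rw [h0] at hgx1
        rw [hg_zero] at hgx1; linarith
      have hyK : (Real.sqrt (g x))⁻¹ • x ∈ K := by
        rw [hKmem]
        rw [hg_smul _ _ (by positivity), inv_pow, Real.sq_sqrt hgx0.le]
        rw [inv_mul_cancel₀ hgx0.ne']
      have hsq1 : 1 ≤ Real.sqrt (g x) := by
        rw [show (1:ℝ) = Real.sqrt 1 from (Real.sqrt_one).symm]
        exact Real.sqrt_le_sqrt hgx1.le
      have htlow : 1 - ε * R^2 ≤ (Real.sqrt (g x))⁻¹ := by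
        have h1 : Real.sqrt (g x) ≤ Real.sqrt (1 + ε*R^2) := Real.sqrt_le_sqrt hgxle
        have h2 : (Real.sqrt (1 + ε*R^2))⁻¹ ≤ (Real.sqrt (g x))⁻¹ :=
          inv_anti₀ hsq0 h1
        have h3 := one_sub_le_inv_sqrt (ε*R^2) (by positivity)
        linarith
      have ht1 : (Real.sqrt (g x))⁻¹ ≤ 1 := by
        rw [show (1:ℝ) = (1:ℝ)⁻¹ from (inv_one).symm]
        exact inv_anti₀ one_pos hsq1
      have hdist : dist x ((Real.sqrt (g x))⁻¹ • x) ≤ μ/4 := by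
        rw [dist_eq_norm]
        have he : x - (Real.sqrt (g x))⁻¹ • x = (1 - (Real.sqrt (g x))⁻¹) • x := by
          rw [sub_smul, one_smul]
        rw [he, norm_smul, Real.norm_eq_abs, abs_of_nonneg (by linarith)]
        have hstep : (1 - (Real.sqrt (g x))⁻¹) * ‖x‖ ≤ (ε*R^2) * R :=
          mul_le_mul (by linarith) hxR (norm_nonneg x) (by positivity)
        have hR3 : (ε*R^2) * R = ε * R^3 := by ring
        linarith [hεμ, hstep.trans_eq hR3]
      obtain ⟨c, hcP, hcd⟩ := hnet _ hyK
      refine ⟨c, hcP, ?_⟩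
      calc dist x c ≤ dist x ((Real.sqrt (g x))⁻¹ • x) + dist ((Real.sqrt (g x))⁻¹ • x) c :=
            dist_triangle _ _ _
        _ ≤ μ/4 + η := add_le_add hdist hcd
        _ ≤ μ/2 := by linarith [hημ]
  have hhaus : Metric.hausdorffDist B P < μ := by
    have h1 : Metric.hausdorffDist B P ≤ μ/2 := by
      apply Metric.hausdorffDist_le_of_mem_dist (by linarith : (0:ℝ) ≤ μ/2)
      · exact hBapprox
      · exact fun y hy => ⟨y, hPB hy, by rw [dist_self]; linarith⟩
    linarith
  -- interior
  have hball2 : ∀ y : E, ‖y‖ ≤ ρ/2 → y ∈ P := by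
    intro y hy
    exact mem_of_near P hPconv hPcl η ρ hη0.le
      (fun x hxρ => hnet x (hball x hxρ)) y (by linarith [hηρ])
  have h0intP : (0:E) ∈ interior P := by
    rw [mem_interior]
    refine ⟨Metric.ball 0 (ρ/2), ?_, Metric.isOpen_ball, Metric.mem_ball_self (by positivity)⟩
    intro y hy
    rw [mem_ball_zero_iff] at hy
    exact hball2 y hy.le
  refine ⟨P, ⟨hPcomp, hPconv, hPsymm, h0intP⟩,
    ⟨hSfin.toFinset, by rw [hP_def, hSfin.coe_toFinset]⟩, hhaus, ?_⟩
  -- facets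
  intro a ha b hab
  have hna : 0 < ‖a‖ := norm_pos_iff.2 ha
  set A : E := ‖a‖⁻¹ • a with hA_def
  have hA1 : ‖A‖ = 1 := norm_smul_inv_norm ha
  set b' : ℝ := ‖a‖⁻¹ * b with hb'_def
  have habA : ∀ x ∈ P, (inner ℝ A x : ℝ) ≤ b' := by
    intro x hx
    rw [hA_def, real_inner_smul_left]
    exact mul_le_mul_of_nonneg_left (hab x hx) (inv_nonneg.2 hna.le)
  have hFA : ∀ x ∈ P, (inner ℝ a x : ℝ) = b → (inner ℝ A x : ℝ) = b' := by
    intro x hx hxb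
    rw [hA_def, real_inner_smul_left, hxb]
  clear_value A b'
  have hcont : Continuous fun x : E => (inner ℝ A x : ℝ) := continuous_const.inner continuous_id
  have hKne : K.Nonempty := ⟨0, (hKmem 0).2 (by rw [hg_zero]; norm_num)⟩
  obtain ⟨z, hzK, hzmax'⟩ := hKcomp.exists_isMaxOn hKne hcont.continuousOn
  have hzmax : ∀ w ∈ K, (inner ℝ A w : ℝ) ≤ (inner ℝ A z : ℝ) := fun w hw => hzmax' hw
  have hρA : ρ • A ∈ K := by
    apply hball
    rw [norm_smul, Real.norm_eq_abs, abs_of_pos hρ0, hA1, mul_one]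
  have hρh : ρ ≤ (inner ℝ A z : ℝ) := by
    have h := hzmax _ hρA
    rwa [real_inner_smul_right, real_inner_self_eq_norm_sq, hA1, one_pow, mul_one] at h
  have hh0 : (0:ℝ) < inner ℝ A z := lt_of_lt_of_le hρ0 hρh
  have hz0 : z ≠ 0 := by
    intro h0
    rw [h0] at hh0
    simp at hh0
  obtain ⟨s, hsS, hsd⟩ := hSnet z hz0
  have hgz0 : 0 < g z := hg_pos z hz0
  have hgz1 : g z ≤ 1 := (hKmem z).1 hzK
  have hsqz : 0 < Real.sqrt (g z) := Real.sqrt_pos.2 hgz0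
  have hsqz1 : Real.sqrt (g z) ≤ 1 := Real.sqrt_le_one.2 hgz1
  have hw_inner : (inner ℝ A z : ℝ) ≤ (inner ℝ A (φ z) : ℝ) := by
    rw [hφ_eq, real_inner_smul_right]
    have h2 : 1 ≤ (Real.sqrt (g z))⁻¹ := by
      rw [show (1:ℝ) = (1:ℝ)⁻¹ from (inv_one).symm]
      exact inv_anti₀ hsqz hsqz1
    nlinarith [hh0]
  have hb'low : (inner ℝ A z : ℝ) - η ≤ b' := by
    have h1 : (inner ℝ A s : ℝ) ≤ b' := habA s (hSP hsS)
    have h3 : (inner ℝ A (φ z - s) : ℝ) ≤ ‖A‖ * ‖φ z - s‖ := real_inner_le_norm _ _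
    have h4 : ‖φ z - s‖ ≤ η := by rwa [← dist_eq_norm]
    rw [hA1, one_mul, inner_sub_right] at h3
    linarith [hw_inner]
  have hhη : (0:ℝ) ≤ (inner ℝ A z : ℝ) - η := by linarith [hρh, hηρ]
  have hdiam : ∀ x ∈ {x ∈ P | (inner ℝ a x : ℝ) = b}, ∀ y ∈ {x ∈ P | (inner ℝ a x : ℝ) = b},
      dist x y ≤ μ/2 := by
    rintro x ⟨hxP, hxb⟩ y ⟨hyP, hyb⟩
    have hxA : (inner ℝ A x : ℝ) = b' := hFA x hxP hxb
    have hyA : (inner ℝ A y : ℝ) = b' := hFA y hyP hyb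
    have hxK : g x ≤ 1 := (hKmem x).1 (hPK hxP)
    have hyK : g y ≤ 1 := (hKmem y).1 (hPK hyP)
    have hmA : (inner ℝ A ((1/2:ℝ) • (x + y)) : ℝ) = b' := by
      rw [real_inner_smul_right, inner_add_right, hxA, hyA]; ring
    have hmg : g ((1/2:ℝ) • (x + y)) ≤ 1 - ε * ‖x - y‖^2/4 := by
      have := hg_mid x y
      have hn : (0:ℝ) ≤ ε * ‖x - y‖^2/4 := by positivity
      linarith
    have hb'pos : 0 < b' := by linarith [hb'low, hρh, hηρ, hρ0]
    have hm0 : (1/2:ℝ) • (x + y) ≠ 0 := by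
      intro h0
      rw [h0] at hmA
      simp at hmA
      linarith [hb'pos, hmA]
    have hgm0 : 0 < g ((1/2:ℝ) • (x + y)) := hg_pos _ hm0
    have hsqm : 0 < Real.sqrt (g ((1/2:ℝ) • (x + y))) := Real.sqrt_pos.2 hgm0
    have hw'K : (Real.sqrt (g ((1/2:ℝ) • (x + y))))⁻¹ • ((1/2:ℝ) • (x + y)) ∈ K := by
      rw [hKmem]
      rw [hg_smul _ _ (by positivity), inv_pow, Real.sq_sqrt hgm0.le,
        inv_mul_cancel₀ hgm0.ne']
    have h5 := hzmax _ hw'K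
    rw [real_inner_smul_right, hmA] at h5
    have h6 : b' ≤ Real.sqrt (g ((1/2:ℝ) • (x + y))) * (inner ℝ A z : ℝ) := by
      have := mul_le_mul_of_nonneg_left h5 hsqm.le
      rwa [← mul_assoc, mul_inv_cancel₀ hsqm.ne', one_mul] at this
    have h7 : (inner ℝ A z : ℝ) - η ≤ Real.sqrt (g ((1/2:ℝ) • (x + y))) * (inner ℝ A z : ℝ) := by
      linarith [hb'low, h6]
    rw [dist_eq_norm]
    exact facet_arith (inner ℝ A z) η ε ρ (g ((1/2:ℝ) • (x + y))) ‖x - y‖ μ hρh hρ0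
      hη0 hηρ hηε hε0 hμ hgm0 hmg (norm_nonneg _) h7
  calc Metric.diam {x ∈ P | (inner ℝ a x : ℝ) = b}
      ≤ μ/2 := Metric.diam_le_of_forall_dist_le (by linarith : (0:ℝ) ≤ μ/2) hdiam
    _ < μ := by linarith


/-- Membership in `𝓑_d`: a compact, convex, `0`-symmetric body in `ℝ^d`
with `0` in its interior. -/
def IsUnitBall {d : ℕ} (B : Set (EuclideanSpace ℝ (Fin d))) : Prop :=
  IsCompact B ∧ Convex ℝ B ∧ -B = B ∧ (0 : EuclideanSpace ℝ (Fin d)) ∈ interior B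

/-- Every `B ∈ 𝓑_d` can be approximated, within Hausdorff distance `< μ`, by a
bounded `0`-symmetric polytope `B' ∈ 𝓑_d` (a convex hull of finitely many points)
all of whose supporting-hyperplane sections (in particular, all of whose facets)
have Euclidean diameter `< μ`. -/
theorem thm_approximating_polytope_small_facets (d : ℕ) (hd : 1 ≤ d)
    (B : Set (EuclideanSpace ℝ (Fin d))) (hB : IsUnitBall B) (μ : ℝ) (hμ : 0 < μ) :
    ∃ B' : Set (EuclideanSpace ℝ (Fin d)), IsUnitBall B' ∧
      (∃ S : Finset (EuclideanSpace ℝ (Fin d)),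
        B' = convexHull ℝ (S : Set (EuclideanSpace ℝ (Fin d)))) ∧
      Metric.hausdorffDist B B' < μ ∧
      ∀ a : EuclideanSpace ℝ (Fin d), a ≠ 0 → ∀ b : ℝ,
        (∀ x ∈ B', (inner ℝ a x : ℝ) ≤ b) →
        Metric.diam {x ∈ B' | (inner ℝ a x : ℝ) = b} < μ := by
  haveI : Nonempty (Fin d) := ⟨⟨0, hd⟩⟩
  haveI : Nontrivial (EuclideanSpace ℝ (Fin d)) := inferInstance
  obtain ⟨hc, hv, hs, hi⟩ := hB
  obtain ⟨B', ⟨h1, h2, h3, h4⟩, hS, hdist, hfacet⟩ := aux_main B hc hv hs hi μ hμ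
  exact ⟨B', ⟨h1, h2, h3, h4⟩, hS, hdist, hfacet⟩
end

section
/- Let d ≥ 1 be an integer, let δ > 0, and let B, B' ∈ 𝓑_d satisfy d_H(B, B') ≤ δ. Then for every point x in the topological boundary (frontier) of B there exists a point y in the topological boundary of B' with ‖x − y‖₂ ≤ δ. -/
/-- If `B, B' ∈ 𝓑_d` are at Hausdorff distance at most `δ`, then every boundary
point of `B` is within Euclidean distance `δ` of some boundary point of `B'`. -/
theorem thm_hausdorff_distance_boundary (d : ℕ) (hd : 1 ≤ d) (δ : ℝ) (hδ : 0 < δ)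
    (B B' : Set (EuclideanSpace ℝ (Fin d))) (hB : IsUnitBall B) (hB' : IsUnitBall B')
    (hdist : Metric.hausdorffDist B B' ≤ δ) :
    ∀ x ∈ frontier B, ∃ y ∈ frontier B', ‖x - y‖ ≤ δ := by
  classical
  obtain ⟨hBc, hBconv, hBsym, hB0⟩ := hB
  obtain ⟨hB'c, hB'conv, hB'sym, hB'0⟩ := hB'
  have hBne : B.Nonempty := ⟨0, interior_subset hB0⟩
  have hB'ne : B'.Nonempty := ⟨0, interior_subset hB'0⟩
  have hBcl : IsClosed B := hBc.isClosed
  have hB'cl : IsClosed B' := hB'c.isClosed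
  have hfin : EMetric.hausdorffEdist B B' ≠ ⊤ :=
    Metric.hausdorffEdist_ne_top_of_nonempty_of_bounded hBne hB'ne hBc.isBounded hB'c.isBounded
  intro x hx
  by_contra hcon
  push_neg at hcon
  -- the closed ball of radius δ around x avoids the frontier of B'
  have hsub : Metric.closedBall x δ ⊆ interior B' ∪ (closure B')ᶜ := by
    intro y hy
    by_cases hyi : y ∈ interior B'
    · exact Or.inl hyi
    by_cases hyc : y ∈ closure B'
    · exfalso
      have hyf : y ∈ frontier B' := ⟨hyc, hyi⟩
      have := hcon y hyf
      have hxy : ‖x - y‖ ≤ δ := by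
        have := Metric.mem_closedBall.1 hy
        rwa [dist_comm, dist_eq_norm] at this
      linarith
    · exact Or.inr hyc
  have hdisjoint : Disjoint (interior B') ((closure B')ᶜ) :=
    (disjoint_compl_right (a := closure B')).mono_left interior_subset_closure
  rcases (convex_closedBall x δ).isPreconnected.subset_or_subset isOpen_interior
      isClosed_closure.isOpen_compl hdisjoint hsub with hin | hout
  · -- closed ball inside the interior of B' : contradiction via separation
    have hxni : x ∉ interior B := hx.2
    obtain ⟨f, hf⟩ := geometric_hahn_banach_open_point hBconv.interior isOpen_interior hxni
    have hfx : 0 < f x := by simpa using hf 0 hB0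
    have hfb : ∀ b ∈ B, f b ≤ f x := by
      intro b hb
      by_contra hlt
      push_neg at hlt
      set t : ℝ := (f x + f b) / (2 * f b) with ht
      have hfbpos : 0 < f b := lt_trans hfx hlt
      have ht0 : 0 < t := by positivity
      have ht1 : 1 - t > 0 := by
        rw [ht]
        rw [gt_iff_lt, sub_pos, div_lt_one (by positivity)]
        linarith
      have hmem : (1 - t) • (0 : (EuclideanSpace ℝ (Fin d))) + t • b ∈ interior B :=
        hBconv.combo_interior_closure_mem_interior hB0 (subset_closure hb) ht1 ht0.le
          (by ring)
      have hval := hf _ hmem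
      have : f ((1 - t) • (0 : (EuclideanSpace ℝ (Fin d))) + t • b) = t * f b := by
        simp [map_add, map_smul, smul_eq_mul]
      rw [this] at hval
      have : t * f b = (f x + f b) / 2 := by
        rw [ht]; field_simp
      rw [this] at hval
      linarith
    -- Riesz representation
    set v : (EuclideanSpace ℝ (Fin d)) := (InnerProductSpace.toDual ℝ (EuclideanSpace ℝ (Fin d))).symm f with hv
    have hvw : ∀ w : (EuclideanSpace ℝ (Fin d)), inner ℝ v w = f w := fun w => InnerProductSpace.toDual_symm_apply
    have hv0 : v ≠ 0 := by
      intro h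
      have := hvw x
      rw [h] at this
      simp at this
      rw [← this] at hfx
      exact lt_irrefl 0 hfx
    have hvn : 0 < ‖v‖ := norm_pos_iff.2 hv0
    set u : (EuclideanSpace ℝ (Fin d)) := ‖v‖⁻¹ • v with hu
    have hun : ‖u‖ = 1 := by
      rw [hu, norm_smul]
      simp [abs_of_pos (inv_pos.2 hvn)]
      field_simp
    have hfu : f u = ‖v‖ := by
      rw [← hvw, hu, real_inner_smul_right, real_inner_self_eq_norm_sq]
      field_simp
    -- the point p on the sphere of radius δ
    have hp : x + δ • u ∈ interior B' := by
      apply hin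
      rw [Metric.mem_closedBall, dist_eq_norm]
      simp [norm_smul, hun, abs_of_pos hδ]
    obtain ⟨ε, hε, hball⟩ := Metric.isOpen_iff.1 isOpen_interior _ hp
    set η : ℝ := ε / 2 with hη
    have hηpos : 0 < η := by positivity
    set w : (EuclideanSpace ℝ (Fin d)) := x + (δ + η) • u with hw
    have hwB' : w ∈ B' := by
      apply interior_subset
      apply hball
      rw [Metric.mem_ball, dist_eq_norm]
      have : w - (x + δ • u) = η • u := by
        rw [hw]
        rw [add_sub_add_left_eq_sub, ← sub_smul]
        ring_nf
      rw [this, norm_smul, hun]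
      simp [abs_of_pos hηpos]
      linarith
    -- upper bound on infDist w B
    have hfin' : EMetric.hausdorffEdist B' B ≠ ⊤ := by
      convert hfin using 1; exact EMetric.hausdorffEdist_comm
    have hup : Metric.infDist w B ≤ δ := by
      refine le_trans (Metric.infDist_le_hausdorffDist_of_mem hwB' hfin') ?_
      rwa [Metric.hausdorffDist_comm]
    -- lower bound: every point of B is at distance ≥ δ + η from w
    have hlow : ∀ b ∈ B, δ + η ≤ dist w b := by
      intro b hb
      have h1 : inner ℝ v (w - b) = f w - f b := by
        rw [hvw (w - b)]
        simp [map_sub]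
      have hfw : f w = f x + (δ + η) * ‖v‖ := by
        rw [hw]
        simp [map_add, map_smul, smul_eq_mul, hfu]
      have h2 : (δ + η) * ‖v‖ ≤ inner ℝ v (w - b) := by
        rw [h1, hfw]
        have := hfb b hb
        linarith
      have h3 : (inner ℝ v (w - b) : ℝ) ≤ ‖v‖ * ‖w - b‖ := real_inner_le_norm v (w - b)
      have h4 : (δ + η) * ‖v‖ ≤ ‖v‖ * ‖w - b‖ := le_trans h2 h3
      rw [dist_eq_norm]
      nlinarith
    have : δ + η ≤ Metric.infDist w B := by
      by_contra h
      push_neg at h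
      obtain ⟨b, hb, hbd⟩ := (Metric.infDist_lt_iff hBne).1 h
      exact absurd hbd (not_lt.2 (hlow b hb))
    linarith
  · -- closed ball outside the closure of B' : contradiction via Hausdorff distance
    have hxB : x ∈ B := hBcl.frontier_subset hx
    have h1 : Metric.infDist x B' ≤ δ :=
      le_trans (Metric.infDist_le_hausdorffDist_of_mem hxB hfin) hdist
    obtain ⟨y, hyB', hyd⟩ := hB'c.exists_infDist_eq_dist hB'ne x
    have hyball : y ∈ Metric.closedBall x δ := by
      rw [Metric.mem_closedBall, dist_comm, ← hyd]
      exact h1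
    exact (hout hyball) (subset_closure hyB')
end

section
/- Let F be a field and V a vector space over F. Let u₁, …, u_k ∈ V be linearly independent vectors and let p₁, …, pₙ ∈ V be distinct vectors (n ≥ 1). Let G be a simple graph on vertex set {1, …, n} such that (i) for every edge xy of G there is some i ∈ {1, …, k} with p_x − p_y ∈ span_F(u_i), and (ii) for each i ∈ {1, …, k}, the subgraph of G consisting of all edges xy with p_x − p_y ∈ span_F(u_i) contains no cycle. Then G has at most (1/2)·n·log₂ n edges. -/
open Finset
open scoped Classical

section Aux

variable {α β γ δ : Type*} [Fintype α]

noncomputable def fcnt (f : α → β) (x : α) : ℕ :=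
  (Finset.univ.filter (fun y => f y = f x)).card

lemma fcnt_pos (f : α → β) (x : α) : 0 < fcnt f x := by
  apply Finset.card_pos.2 ⟨x, by simp [fcnt]⟩

lemma fcnt_congr (f : α → β) {x y : α} (hxy : f x = f y) : fcnt f x = fcnt f y := by
  unfold fcnt; congr 1; apply Finset.filter_congr; intro z _; simp [hxy]

lemma fcnt_le (f : α → β) (x : α) : fcnt f x ≤ Fintype.card α := by
  simpa [fcnt] using Finset.card_filter_le Finset.univ _

lemma gibbs_key (f : α → β) (g : α → γ) (h : α → δ)
    (Hfg : ∀ x y, f x = f y → g x = g y)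
    (Hhg : ∀ x y, h x = h y → g x = g y)
    (Hfh : ∀ x y, f x = f y → h x = h y → x = y) :
    ∑ x : α, (fcnt f x * fcnt h x : ℝ) / (fcnt g x) ≤ Fintype.card α := by
  set S : α → Finset (α × α) := fun x =>
    (univ.filter (fun y => f y = f x)) ×ˢ (univ.filter (fun z => h z = h x)) with hS
  have hstep1 : ∀ x : α, (fcnt f x * fcnt h x : ℝ) / (fcnt g x)
      = ∑ q ∈ S x, 1 / (fcnt g q.1 : ℝ) := by
    intro x
    have : ∀ q ∈ S x, 1 / (fcnt g q.1 : ℝ) = 1 / (fcnt g x : ℝ) := by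
      intro q hq
      rw [hS] at hq
      simp only [Finset.mem_product, Finset.mem_filter, Finset.mem_univ, true_and] at hq
      rw [fcnt_congr g (Hfg _ _ hq.1)]
    rw [Finset.sum_congr rfl this, Finset.sum_const, hS]
    simp only [Finset.card_product]
    rw [fcnt, fcnt]
    ring
  rw [Finset.sum_congr rfl (fun x _ => hstep1 x)]
  have hdisj : (↑(univ : Finset α) : Set α).PairwiseDisjoint S := by
    intro x _ x' _ hne
    refine Finset.disjoint_left.2 ?_
    intro q hq hq'
    rw [hS] at hq hq'
    simp only [Finset.mem_product, Finset.mem_filter, Finset.mem_univ, true_and] at hq hq'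
    exact hne (Hfh x x' (hq.1.symm.trans hq'.1) (hq.2.symm.trans hq'.2))
  rw [← Finset.sum_biUnion hdisj]
  have hsub : univ.biUnion S ⊆ univ.filter (fun q : α × α => g q.1 = g q.2) := by
    intro q hq
    simp only [Finset.mem_biUnion] at hq
    obtain ⟨x, -, hq⟩ := hq
    rw [hS] at hq
    simp only [Finset.mem_product, Finset.mem_filter, Finset.mem_univ, true_and] at hq ⊢
    exact (Hfg _ _ hq.1).trans (Hhg _ _ hq.2).symm
  have hle : ∑ q ∈ univ.biUnion S, 1 / (fcnt g q.1 : ℝ)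
      ≤ ∑ q ∈ univ.filter (fun q : α × α => g q.1 = g q.2), 1 / (fcnt g q.1 : ℝ) := by
    apply Finset.sum_le_sum_of_subset_of_nonneg hsub
    intro q _ _; positivity
  refine hle.trans ?_
  have : ∑ q ∈ univ.filter (fun q : α × α => g q.1 = g q.2), 1 / (fcnt g q.1 : ℝ)
      = ∑ y : α, (1 : ℝ) := by
    rw [Finset.sum_filter, ← Finset.univ_product_univ, Finset.sum_product]
    refine Finset.sum_congr rfl (fun y _ => ?_)
    have : ∑ z : α, (if g y = g z then 1 / (fcnt g y : ℝ) else 0)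
        = (fcnt g y : ℝ) * (1 / (fcnt g y : ℝ)) := by
      rw [← Finset.sum_filter, Finset.sum_const, fcnt]
      have : (univ.filter fun z => g y = g z) = (univ.filter fun z => g z = g y) := by
        apply Finset.filter_congr; intro z _; simp [eq_comm]
      rw [this]; simp [mul_comm]
    rw [this, mul_one_div, div_self (by exact_mod_cast (fcnt_pos g y).ne')]
  rw [this, Finset.sum_const]
  simp

lemma gibbs (f : α → β) (g : α → γ) (h : α → δ)
    (Hfg : ∀ x y, f x = f y → g x = g y)
    (Hhg : ∀ x y, h x = h y → g x = g y)
    (Hfh : ∀ x y, f x = f y → h x = h y → x = y) :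
    ∑ x : α, (Real.log (fcnt f x) + Real.log (fcnt h x)) ≤ ∑ x : α, Real.log (fcnt g x) := by
  have key := gibbs_key f g h Hfg Hhg Hfh
  have h1 : ∀ x : α, Real.log (fcnt f x) + Real.log (fcnt h x) - Real.log (fcnt g x)
      ≤ (fcnt f x * fcnt h x : ℝ) / (fcnt g x) - 1 := by
    intro x
    have ha : (0:ℝ) < fcnt f x := by exact_mod_cast fcnt_pos f x
    have hb : (0:ℝ) < fcnt h x := by exact_mod_cast fcnt_pos h x
    have hc : (0:ℝ) < fcnt g x := by exact_mod_cast fcnt_pos g x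
    have hpos : (0:ℝ) < (fcnt f x * fcnt h x : ℝ) / (fcnt g x) := by positivity
    have := Real.log_le_sub_one_of_pos hpos
    rwa [Real.log_div (by positivity) hc.ne', Real.log_mul ha.ne' hb.ne'] at this
  have h2 : ∑ x : α, (Real.log (fcnt f x) + Real.log (fcnt h x) - Real.log (fcnt g x))
      ≤ ∑ x : α, ((fcnt f x * fcnt h x : ℝ) / (fcnt g x) - 1) :=
    Finset.sum_le_sum (fun x _ => h1 x)
  rw [Finset.sum_sub_distrib, Finset.sum_sub_distrib] at h2
  have hsum1 : ∑ _x : α, (1:ℝ) = Fintype.card α := by simp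
  linarith

/-- An acyclic graph satisfies #edges + #components ≤ #vertices. -/
lemma acyclic_count : ∀ (N : ℕ) (H : SimpleGraph α), H.IsAcyclic → H.edgeSet.ncard = N →
    N + Nat.card H.ConnectedComponent ≤ Fintype.card α := by
  intro N
  induction N using Nat.strong_induction_on with
  | _ N IH =>
    intro H hac hN
    match N, hN with
    | 0, hN =>
      simp only [Nat.zero_add]
      rw [Nat.card_eq_fintype_card]
      exact Fintype.card_le_of_surjective H.connectedComponentMk
        (fun c => c.exists_rep)
    | (N+1), hN =>
      have hne : H.edgeSet.Nonempty := by
        rw [← Set.ncard_pos (Set.toFinite _), hN]; omega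
      obtain ⟨e, he⟩ := hne
      induction e using Sym2.ind with
      | _ x y =>
      have hxy : H.Adj x y := he
      set H' := H.deleteEdges {s(x,y)} with hH'
      have hle : H' ≤ H := SimpleGraph.deleteEdges_le _
      have hac' : H'.IsAcyclic := by
        intro v c hc
        exact hac (c.mapLe hle) ((SimpleGraph.Walk.mapLe_isCycle hle).2 hc)
      have hcard' : H'.edgeSet.ncard = N := by
        rw [hH', SimpleGraph.edgeSet_deleteEdges,
          Set.ncard_diff_singleton_of_mem he, hN]
        omega
      have hbridge : ¬ H'.Reachable x y := by
        have := (SimpleGraph.isAcyclic_iff_forall_adj_isBridge.1 hac) hxy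
        exact SimpleGraph.isBridge_iff.1 this
      set φ : H'.ConnectedComponent → H.ConnectedComponent :=
        SimpleGraph.ConnectedComponent.map (SimpleGraph.Hom.ofLE hle) with hφ
      have hsurj : Function.Surjective φ := by
        intro c
        obtain ⟨v, rfl⟩ := c.exists_rep
        exact ⟨H'.connectedComponentMk v, rfl⟩
      have hninj : ¬ Function.Injective φ := by
        intro hinj
        have h1 : φ (H'.connectedComponentMk x) = φ (H'.connectedComponentMk y) := by
          simp only [hφ, SimpleGraph.ConnectedComponent.map_mk,
            SimpleGraph.Hom.ofLE_apply]
          exact SimpleGraph.ConnectedComponent.sound hxy.reachable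
        exact hbridge (SimpleGraph.ConnectedComponent.exact (hinj h1))
      have hlt : Fintype.card H.ConnectedComponent < Fintype.card H'.ConnectedComponent :=
        Fintype.card_lt_of_surjective_not_injective φ hsurj hninj
      have hIH := IH N (Nat.lt_succ_self N) H' hac' hcard'
      rw [Nat.card_eq_fintype_card] at hIH ⊢
      omega

lemma reachable_f_eq {H : SimpleGraph α} (f : α → β) (hf : ∀ x y, H.Adj x y → f x = f y)
    {x y : α} (h : H.Reachable x y) : f x = f y := by
  obtain ⟨w⟩ := h
  induction w with
  | nil => rfl
  | cons h p ih => exact (hf _ _ h).trans ih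

lemma forest_le (H : SimpleGraph α) (hac : H.IsAcyclic) (f : α → β)
    (hf : ∀ x y, H.Adj x y → f x = f y) :
    (H.edgeSet.ncard : ℝ) ≤ ∑ x : α, (1 - 1/(fcnt f x : ℝ)) := by
  have himg : (univ.image f).card ≤ Nat.card H.ConnectedComponent := by
    rw [Nat.card_eq_fintype_card]
    have hsub : univ.image f ⊆ univ.image
        (fun c : H.ConnectedComponent => f c.out) := by
      intro b hb
      obtain ⟨x, -, rfl⟩ := Finset.mem_image.1 hb
      refine Finset.mem_image.2 ⟨H.connectedComponentMk x, Finset.mem_univ _, ?_⟩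
      refine reachable_f_eq f hf (SimpleGraph.ConnectedComponent.exact ?_)
      exact Quot.out_eq _
    calc (univ.image f).card ≤ (univ.image (fun c : H.ConnectedComponent => f c.out)).card :=
          Finset.card_le_card hsub
      _ ≤ (univ : Finset H.ConnectedComponent).card := Finset.card_image_le
      _ = Fintype.card H.ConnectedComponent := Finset.card_univ
  have hsum : ∑ x : α, (1/(fcnt f x : ℝ)) = (univ.image f).card := by
    rw [← Finset.sum_fiberwise_of_maps_to
      (fun x _ => Finset.mem_image_of_mem f (Finset.mem_univ x))
      (fun x => 1/(fcnt f x : ℝ))]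
    rw [Finset.card_eq_sum_ones, Nat.cast_sum]
    refine Finset.sum_congr rfl (fun b hb => ?_)
    obtain ⟨x0, -, rfl⟩ := Finset.mem_image.1 hb
    have hcnt : ∀ x ∈ univ.filter (fun i => f i = f x0), fcnt f x = fcnt f x0 := by
      intro x hx
      exact fcnt_congr f (Finset.mem_filter.1 hx).2
    have hcard : (univ.filter (fun i => f i = f x0)).card = fcnt f x0 := rfl
    rw [Finset.sum_congr rfl (fun x hx => by rw [hcnt x hx])]
    rw [Finset.sum_const, hcard]
    have : (fcnt f x0 : ℝ) ≠ 0 := by exact_mod_cast (fcnt_pos f x0).ne'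
    simp only [nsmul_eq_mul, Nat.cast_one]
    field_simp
  have hcount := acyclic_count H.edgeSet.ncard H hac rfl
  have hRHS : ∑ x : α, (1 - 1/(fcnt f x : ℝ))
      = (Fintype.card α : ℝ) - (univ.image f).card := by
    rw [Finset.sum_sub_distrib, hsum]
    simp [Finset.card_univ]
  rw [hRHS]
  have h1 : (H.edgeSet.ncard : ℝ) + (univ.image f).card
      ≤ (Fintype.card α : ℝ) := by
    have : H.edgeSet.ncard + (univ.image f).card ≤ Fintype.card α := by
      have := himg; omega
    exact_mod_cast this
  linarith

lemma one_sub_inv_le (s : ℕ) (hs : 1 ≤ s) :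
    1 - 1/(s:ℝ) ≤ Real.log s / (2 * Real.log 2) := by
  have l2 : 0 < Real.log 2 := Real.log_pos (by norm_num)
  match s, hs with
  | 1, _ => simp
  | 2, _ =>
    have : Real.log 2 / (2 * Real.log 2) = 1/2 := by field_simp
    rw [show ((2:ℕ):ℝ) = 2 by norm_num, this]; norm_num
  | 3, _ =>
    rw [le_div_iff₀ (by positivity)]
    have hl : Real.log 16 ≤ Real.log 27 := Real.log_le_log (by norm_num) (by norm_num)
    have h16 : Real.log 16 = 4 * Real.log 2 := by
      rw [show (16:ℝ) = 2^4 by norm_num, Real.log_pow]; push_cast; ring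
    have h27 : Real.log 27 = 3 * Real.log 3 := by
      rw [show (27:ℝ) = 3^3 by norm_num, Real.log_pow]; push_cast; ring
    have h3 : ((3:ℕ):ℝ) = 3 := by norm_num
    rw [h3]
    nlinarith
  | (m+4), _ =>
    have hs4 : (4:ℝ) ≤ ((m+4 : ℕ):ℝ) := by push_cast; linarith
    have hlog : 2 * Real.log 2 ≤ Real.log ((m+4 : ℕ):ℝ) := by
      have : Real.log 4 ≤ Real.log ((m+4:ℕ):ℝ) := Real.log_le_log (by norm_num) hs4
      have h4 : Real.log 4 = 2 * Real.log 2 := by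
        rw [show (4:ℝ) = 2^2 by norm_num, Real.log_pow]; push_cast; ring
      linarith
    have h1 : 1 - 1/((m+4:ℕ):ℝ) ≤ 1 := by
      have : (0:ℝ) ≤ 1/((m+4:ℕ):ℝ) := by positivity
      linarith
    have h2 : (1:ℝ) ≤ Real.log ((m+4:ℕ):ℝ) / (2 * Real.log 2) := by
      rw [le_div_iff₀ (by positivity)]; linarith
    linarith

lemma ncard_biUnion_le {ι γ : Type*} [Fintype γ] (s : ι → Set γ) (t : Finset ι) :
    (⋃ i ∈ t, s i).ncard ≤ ∑ i ∈ t, (s i).ncard := by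
  induction t using Finset.induction with
  | empty => simp
  | @insert a t h ih =>
    rw [Finset.sum_insert h]
    refine le_trans (le_of_eq (by rw [Finset.set_biUnion_insert])) ?_
    exact le_trans (Set.ncard_union_le _ _) (Nat.add_le_add_left ih _)

end Aux

/-- If `u₁, …, u_k` are linearly independent over `F`, `p₁, …, pₙ` are distinct, and
`G` is a graph on `{1, …, n}` whose every edge `xy` satisfies `p x - p y ∈ span_F(uᵢ)`
for some `i`, and for each `i` the subgraph of edges with `p x - p y ∈ span_F(uᵢ)` is a
forest, then `G` has at most `(1/2)·n·log₂ n` edges. -/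
theorem thm_point_sets_lin_independent (F : Type*) [Field F]
    (V : Type*) [AddCommGroup V] [Module F V]
    (k n : ℕ) (hn : 1 ≤ n) (u : Fin k → V) (hu : LinearIndependent F u)
    (p : Fin n → V) (hp : Function.Injective p)
    (G : SimpleGraph (Fin n))
    (h1 : ∀ x y : Fin n, G.Adj x y →
      ∃ i : Fin k, p x - p y ∈ Submodule.span F ({u i} : Set V))
    (h2 : ∀ i : Fin k,
      (SimpleGraph.fromRel (fun x y =>
        G.Adj x y ∧ p x - p y ∈ Submodule.span F ({u i} : Set V))).IsAcyclic) :
    (Set.ncard G.edgeSet : ℝ) ≤ 1 / 2 * n * Real.logb 2 n := by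
  classical
  have l2 : (0:ℝ) < Real.log 2 := Real.log_pos (by norm_num)
  set spanLT : ℕ → Submodule F V :=
    fun m => Submodule.span F (u '' {j : Fin k | (j:ℕ) < m}) with hspanLT
  set spanEQ : ℕ → Submodule F V :=
    fun m => Submodule.span F (u '' {j : Fin k | (j:ℕ) = m}) with hspanEQ
  set A : ℕ → ℝ := fun m => ∑ x : Fin n,
    Real.log (fcnt (fun y => (Submodule.Quotient.mk (p y) : V ⧸ spanLT m)) x) with hA
  set B : ℕ → ℝ := fun m => ∑ x : Fin n,
    Real.log (fcnt (fun y => (Submodule.Quotient.mk (p y) : V ⧸ spanEQ m)) x) with hB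
  have hstep : ∀ m : ℕ, A m + B m ≤ A (m+1) := by
    intro m
    have hg := gibbs (α := Fin n)
      (fun y => (Submodule.Quotient.mk (p y) : V ⧸ spanLT m))
      (fun y => (Submodule.Quotient.mk (p y) : V ⧸ spanLT (m+1)))
      (fun y => (Submodule.Quotient.mk (p y) : V ⧸ spanEQ m))
      (by
        intro x y hxy
        rw [Submodule.Quotient.eq] at hxy ⊢
        refine Submodule.span_mono (Set.image_mono ?_) hxy
        intro j hj
        simp only [Set.mem_setOf_eq] at *
        omega)
      (by
        intro x y hxy
        rw [Submodule.Quotient.eq] at hxy ⊢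
        refine Submodule.span_mono (Set.image_mono ?_) hxy
        intro j hj
        simp only [Set.mem_setOf_eq] at *
        omega)
      (by
        intro x y hf hh
        rw [Submodule.Quotient.eq] at hf hh
        have hdis : Disjoint {j : Fin k | (j:ℕ) < m} {j : Fin k | (j:ℕ) = m} := by
          rw [Set.disjoint_left]
          intro j hj1 hj2
          simp only [Set.mem_setOf_eq] at *
          omega
        have hd := hu.disjoint_span_image hdis
        have h0 : p x - p y = 0 := Submodule.disjoint_def.1 hd _ hf hh
        exact hp (sub_eq_zero.1 h0))
    rw [Finset.sum_add_distrib] at hg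
    exact hg
  have htel : ∀ m : ℕ, ∑ i ∈ Finset.range m, B i ≤ A m := by
    intro m
    induction m with
    | zero =>
      simp only [Finset.range_zero, Finset.sum_empty, hA]
      apply Finset.sum_nonneg
      intro x _
      apply Real.log_nonneg
      exact_mod_cast fcnt_pos _ x
    | succ m ih =>
      rw [Finset.sum_range_succ]
      linarith [hstep m]
  have hAk : A k ≤ n * Real.log n := by
    rw [hA]
    calc ∑ x : Fin n, Real.log (fcnt (fun y =>
          (Submodule.Quotient.mk (p y) : V ⧸ spanLT k)) x)
        ≤ ∑ _x : Fin n, Real.log n := by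
          apply Finset.sum_le_sum
          intro x _
          apply Real.log_le_log (by exact_mod_cast fcnt_pos _ x)
          have := fcnt_le (fun y => (Submodule.Quotient.mk (p y) : V ⧸ spanLT k)) x
          rw [Fintype.card_fin] at this
          exact_mod_cast this
      _ = n * Real.log n := by
          rw [Finset.sum_const, Finset.card_univ, Fintype.card_fin, nsmul_eq_mul]
  set Hg : Fin k → SimpleGraph (Fin n) := fun i => SimpleGraph.fromRel (fun x y =>
    G.Adj x y ∧ p x - p y ∈ Submodule.span F ({u i} : Set V)) with hHg
  have hsubE : G.edgeSet ⊆ ⋃ i ∈ (Finset.univ : Finset (Fin k)), (Hg i).edgeSet := by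
    intro e he
    induction e using Sym2.ind with
    | _ x y =>
      rw [SimpleGraph.mem_edgeSet] at he
      obtain ⟨i, hi⟩ := h1 x y he
      refine Set.mem_biUnion (Finset.mem_univ i) ?_
      rw [SimpleGraph.mem_edgeSet, hHg]
      rw [SimpleGraph.fromRel_adj]
      exact ⟨he.ne, Or.inl ⟨he, hi⟩⟩
  have hspanEQi : ∀ i : Fin k, spanEQ (i : ℕ) = Submodule.span F ({u i} : Set V) := by
    intro i
    have himg : u '' {j : Fin k | (j:ℕ) = (i:ℕ)} = {u i} := by
      ext v
      simp only [Set.mem_image, Set.mem_setOf_eq, Set.mem_singleton_iff]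
      constructor
      · rintro ⟨j, hj, rfl⟩
        rw [Fin.ext hj]
      · rintro rfl
        exact ⟨i, rfl, rfl⟩
    rw [hspanEQ]
    show Submodule.span F (u '' {j : Fin k | (j:ℕ) = (i:ℕ)}) = _
    rw [himg]
  have hperI : ∀ i : Fin k, ((Hg i).edgeSet.ncard : ℝ) ≤ B (i:ℕ) / (2 * Real.log 2) := by
    intro i
    have hforest := forest_le (Hg i) (h2 i)
      (fun y => (Submodule.Quotient.mk (p y) : V ⧸ spanEQ (i:ℕ)))
      (by
        intro x y hxy
        rw [hHg, SimpleGraph.fromRel_adj] at hxy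
        rw [Submodule.Quotient.eq, hspanEQi i]
        rcases hxy.2 with ⟨-, hm⟩ | ⟨-, hm⟩
        · exact hm
        · have := Submodule.neg_mem (Submodule.span F ({u i} : Set V)) hm
          rwa [neg_sub] at this)
    refine hforest.trans ?_
    rw [hB, Finset.sum_div]
    refine Finset.sum_le_sum (fun x _ => ?_)
    exact one_sub_inv_le _ (fcnt_pos _ x)
  have h0 : (G.edgeSet.ncard : ℝ) ≤ ∑ i : Fin k, ((Hg i).edgeSet.ncard : ℝ) := by
    have ha := Set.ncard_le_ncard hsubE (Set.toFinite _)
    have hb := ncard_biUnion_le (fun i => (Hg i).edgeSet) (Finset.univ : Finset (Fin k))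
    have : G.edgeSet.ncard ≤ ∑ i : Fin k, (Hg i).edgeSet.ncard := le_trans ha hb
    exact_mod_cast this
  have hmain : (G.edgeSet.ncard : ℝ) ≤ (n * Real.log n) / (2 * Real.log 2) := by
    have hc : ∑ i : Fin k, ((Hg i).edgeSet.ncard : ℝ)
        ≤ (∑ i ∈ Finset.range k, B i) / (2 * Real.log 2) := by
      rw [Finset.sum_div, ← Fin.sum_univ_eq_sum_range (fun i => B i / (2 * Real.log 2))]
      exact Finset.sum_le_sum (fun i _ => hperI i)
    have hd : (∑ i ∈ Finset.range k, B i) / (2 * Real.log 2)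
        ≤ (n * Real.log n) / (2 * Real.log 2) := by
      apply div_le_div_of_nonneg_right ?_ (by positivity)
      exact le_trans (htel k) hAk
    linarith
  have heq : (n : ℝ) * Real.log n / (2 * Real.log 2) = 1 / 2 * n * Real.logb 2 n := by
    rw [← Real.log_div_log]
    field_simp
  linarith [hmain, le_of_eq heq]
end

section
/- For any integer ℓ ≥ 1 and any positive integers n₁ ≥ n₂ ≥ … ≥ n_ℓ ≥ 1 with n = n₁ + … + n_ℓ, one has the real inequality n₁ − (1/2)·Σ_{i=1}^{ℓ} n_i·log₂ n_i ≥ n − (1/2)·n·log₂ n. -/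
open Real Finset

lemma log_one_add_ge (t : ℝ) (h0 : 0 ≤ t) (h1 : t ≤ 1) :
    t * Real.log 2 ≤ Real.log (1 + t) := by
  have hc := (StrictConcaveOn.concaveOn strictConcaveOn_log_Ioi).2
    (Set.mem_Ioi.2 (by norm_num : (0:ℝ) < 1)) (Set.mem_Ioi.2 (by norm_num : (0:ℝ) < 2))
    (by linarith : (0:ℝ) ≤ 1 - t) h0 (by ring)
  simp only [smul_eq_mul, Real.log_one, mul_zero, zero_add] at hc
  rw [show (1-t)*1 + t*2 = 1+t by ring] at hc
  linarith

lemma key_ineq (a b : ℝ) (hb : 1 ≤ b) (hab : b ≤ a) :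
    a * Real.logb 2 a + b * Real.logb 2 b + 2 * b ≤ (a + b) * Real.logb 2 (a + b) := by
  have ha : (0:ℝ) < a := by linarith
  have hb0 : (0:ℝ) < b := by linarith
  have hL : (0:ℝ) < Real.log 2 := Real.log_pos one_lt_two
  have key1 : b * Real.log 2 ≤ a * (Real.log (a+b) - Real.log a) := by
    have ht := log_one_add_ge (b/a) (by positivity) (by rw [div_le_one ha]; exact hab)
    have he : Real.log (a+b) - Real.log a = Real.log (1 + b/a) := by
      rw [← Real.log_div (by linarith) (ne_of_gt ha)]
      congr 1; field_simp
    rw [he]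
    calc b * Real.log 2 = a * ((b/a) * Real.log 2) := by field_simp
      _ ≤ a * Real.log (1 + b/a) := mul_le_mul_of_nonneg_left ht ha.le
  have key2 : b * Real.log 2 ≤ b * (Real.log (a+b) - Real.log b) := by
    have h2 : Real.log 2 ≤ Real.log (a+b) - Real.log b := by
      rw [← Real.log_div (by linarith) (ne_of_gt hb0)]
      apply Real.log_le_log (by norm_num)
      rw [le_div_iff₀ hb0]; linarith
    nlinarith
  have H : a * Real.log a + b * Real.log b + 2 * b * Real.log 2 ≤ (a+b) * Real.log (a+b) := by
    nlinarith [key1, key2]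
  have e1 : a * Real.logb 2 a = (a * Real.log a) / Real.log 2 := by rw [Real.logb]; ring
  have e2 : b * Real.logb 2 b = (b * Real.log b) / Real.log 2 := by rw [Real.logb]; ring
  have e3 : (a+b) * Real.logb 2 (a+b) = ((a+b) * Real.log (a+b)) / Real.log 2 := by
    rw [Real.logb]; ring
  have e4 : 2 * b = (2 * b * Real.log 2) / Real.log 2 := by field_simp
  rw [e1, e2, e3, e4, ← add_div, ← add_div, div_le_div_iff₀ hL hL]
  nlinarith [H]

lemma aux_entropy : ∀ ℓ : ℕ, ∀ (hℓ : 1 ≤ ℓ) (a : Fin ℓ → ℕ), Antitone a → (∀ i, 1 ≤ a i) →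
    ((∑ i, a i : ℕ) : ℝ) - 1/2 * (∑ i, a i : ℕ) * Real.logb 2 (∑ i, a i : ℕ) ≤
      (a ⟨0, hℓ⟩ : ℝ) - 1/2 * ∑ i, (a i : ℝ) * Real.logb 2 (a i) := by
  intro ℓ hℓ
  induction ℓ, hℓ using Nat.le_induction with
  | base =>
    intro a _ _
    simp [Fin.sum_univ_one]
    ring_nf
    try exact le_rfl
  | succ k hk ih =>
    intro a hmono hpos
    set a' : Fin k → ℕ := fun i => a i.castSucc with ha'
    have hmono' : Antitone a' := hmono.comp_monotone (fun _ _ h => h)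
    have hpos' : ∀ i, 1 ≤ a' i := fun i => hpos _
    have h1 := ih a' hmono' hpos'
    set n' : ℕ := ∑ i, a' i with hn'
    set b : ℕ := a (Fin.last k) with hb
    have hsum : ∑ i : Fin (k+1), a i = n' + b := by
      rw [Fin.sum_univ_castSucc]
    have hsumR : ∑ i : Fin (k+1), (a i : ℝ) * Real.logb 2 (a i) =
        (∑ i : Fin k, (a' i : ℝ) * Real.logb 2 (a' i)) + (b : ℝ) * Real.logb 2 b := by
      rw [Fin.sum_univ_castSucc]
    have hb1 : 1 ≤ b := hpos _
    have hn'b : b ≤ n' := by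
      calc b ≤ a' ⟨0, hk⟩ := hmono (Fin.le_last _)
        _ ≤ n' := Finset.single_le_sum (fun i _ => Nat.zero_le _) (Finset.mem_univ _)
    have hkey := key_ineq (n' : ℝ) (b : ℝ) (by exact_mod_cast hb1) (by exact_mod_cast hn'b)
    rw [hsum, hsumR]
    push_cast
    have ha0' : (a ⟨0, by omega⟩ : ℝ) = (a' ⟨0, hk⟩ : ℝ) := by norm_cast
    rw [ha0']
    linarith [h1, hkey]

/-- Entropy-like inequality: for positive integers `n₁ ≥ n₂ ≥ … ≥ n_ℓ ≥ 1` summing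
to `n`, one has `n₁ - (1/2)·Σᵢ nᵢ·log₂ nᵢ ≥ n - (1/2)·n·log₂ n`. -/
theorem thm_entropy_like_inequality (ℓ : ℕ) (hℓ : 1 ≤ ℓ) (a : Fin ℓ → ℕ)
    (hmono : Antitone a) (hpos : ∀ i, 1 ≤ a i) (n : ℕ) (hn : n = ∑ i, a i) :
    (n : ℝ) - 1 / 2 * n * Real.logb 2 n ≤
      (a ⟨0, hℓ⟩ : ℝ) - 1 / 2 * ∑ i, (a i : ℝ) * Real.logb 2 (a i) := by
  subst hn
  have := aux_entropy ℓ hℓ a hmono hpos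
  convert this using 2 <;> norm_num
end

section
/- Let V be a vector space over a field F and let u₁, …, u_k ∈ V be nonzero vectors. Let d ≥ 1 and m ≥ 0 be integers, and suppose that for every subset I ⊆ {1, …, k}, the number of indices ℓ ∈ {1, …, k} with u_ℓ ∈ span_F(u_i : i ∈ I) is at most d·|I| + m. Let M > 0 be a real number and let λ₁, …, λ_k be real numbers in [0, M]. Then there exists a subset J ⊆ {1, …, k} such that the family (u_j)_{j∈J} is linearly independent over F and Σ_{j∈J} λ_j ≥ (λ₁ + … + λ_k − m·M)/d. -/
open Classical in
noncomputable def greedySet (F : Type*) [Field F] (V : Type*) [AddCommGroup V] [Module F V]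
    (k : ℕ) (u : Fin k → V) (σ : Equiv.Perm (Fin k)) : ℕ → Finset (Fin k)
  | 0 => ∅
  | (t+1) =>
      if h : t < k then
        if u (σ ⟨t, h⟩) ∈ Submodule.span F
            (u '' ((greedySet F V k u σ t : Finset (Fin k)) : Set (Fin k))) then
          greedySet F V k u σ t
        else insert (σ ⟨t, h⟩) (greedySet F V k u σ t)
      else greedySet F V k u σ t


/-- Greedy linear-algebra lemma: if for every subset `I ⊆ {1, …, k}` at most
`d·|I| + m` of the nonzero vectors `u₁, …, u_k` lie in `span_F(uᵢ : i ∈ I)`, then for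
any weights `λᵢ ∈ [0, M]` there is a subset `J` with `(u_j)_{j ∈ J}` linearly
independent and `Σ_{j∈J} λ_j ≥ (λ₁ + … + λ_k - m·M)/d`. -/
theorem thm_linear_algebra_greedy (F : Type*) [Field F]
    (V : Type*) [AddCommGroup V] [Module F V]
    (k : ℕ) (u : Fin k → V) (hu : ∀ i, u i ≠ 0) (d m : ℕ) (hd : 1 ≤ d)
    (hspan : ∀ I : Finset (Fin k),
      Set.ncard {ℓ : Fin k | u ℓ ∈ Submodule.span F (u '' (I : Set (Fin k)))} ≤
        d * I.card + m)
    (M : ℝ) (hM : 0 < M) (lam : Fin k → ℝ) (hlam : ∀ i, lam i ∈ Set.Icc 0 M) :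
    ∃ J : Finset (Fin k),
      LinearIndependent F (fun j : J => u (j : Fin k)) ∧
        ((∑ i, lam i) - m * M) / d ≤ ∑ j ∈ J, lam j := by
    classical
  set σ : Equiv.Perm (Fin k) := Tuple.sort (fun i => -lam i) with hσdef
  set g : ℕ → Finset (Fin k) := greedySet F V k u σ with hgdef
  have hg0 : g 0 = ∅ := rfl
  have hgstep : ∀ t (h : t < k),
      g (t+1) = if u (σ ⟨t, h⟩) ∈ Submodule.span F (u '' ((g t : Set (Fin k)))) then g t
        else insert (σ ⟨t, h⟩) (g t) := by
    intro t h
    simp [hgdef, greedySet, h]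
  -- monotonicity
  have hmono : ∀ t, g t ⊆ g (t+1) := by
    intro t
    by_cases h : t < k
    · rw [hgstep t h]
      split
      · exact subset_rfl
      · exact Finset.subset_insert _ _
    · simp [hgdef, greedySet, h]
  have hmono' : ∀ s t, s ≤ t → g s ⊆ g t := by
    intro s t hst
    induction t with
    | zero => simp_all
    | succ n ih =>
      rcases Nat.lt_or_ge s (n+1) with h | h
      · exact (ih (Nat.lt_succ_iff.mp h)).trans (hmono n)
      · have : s = n + 1 := le_antisymm hst h
        simp [this]
  -- indices in g t come from earlier steps
  have hidx : ∀ t, ∀ j ∈ g t, ∃ s : Fin k, (s : ℕ) < t ∧ σ s = j := by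
    intro t
    induction t with
    | zero => simp [hg0]
    | succ n ih =>
      intro j hj
      by_cases h : n < k
      · rw [hgstep n h] at hj
        split at hj
        · obtain ⟨s, hs, rfl⟩ := ih j hj
          exact ⟨s, hs.trans (Nat.lt_succ_self n), rfl⟩
        · rcases Finset.mem_insert.mp hj with rfl | hj
          · exact ⟨⟨n, h⟩, Nat.lt_succ_self n, rfl⟩
          · obtain ⟨s, hs, rfl⟩ := ih j hj
            exact ⟨s, hs.trans (Nat.lt_succ_self n), rfl⟩
      · have : g (n+1) = g n := by simp [hgdef, greedySet, h]
        rw [this] at hj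
        obtain ⟨s, hs, rfl⟩ := ih j hj
        exact ⟨s, hs.trans (Nat.lt_succ_self n), rfl⟩
  have hnotmem : ∀ t (h : t < k), σ ⟨t, h⟩ ∉ g t := by
    intro t h hmem
    obtain ⟨s, hs, heq⟩ := hidx t _ hmem
    have hst : s = ⟨t, h⟩ := σ.injective heq
    rw [hst] at hs
    exact lt_irrefl t hs
  -- all earlier sorted vectors are in the span of g t
  have hspan3 : ∀ t, ∀ s : Fin k, (s : ℕ) < t →
      u (σ s) ∈ Submodule.span F (u '' ((g t : Set (Fin k)))) := by
    intro t
    induction t with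
    | zero => intro s hs; omega
    | succ n ih =>
      intro s hs
      have hsub : u '' (g n : Set (Fin k)) ⊆ u '' (g (n+1) : Set (Fin k)) :=
        Set.image_mono (by exact_mod_cast hmono n)
      rcases Nat.lt_or_ge (s : ℕ) n with h' | h'
      · exact Submodule.span_mono hsub (ih s h')
      · have hsn : (s : ℕ) = n := by omega
        have hnk : n < k := by omega
        have hseq : s = ⟨n, hnk⟩ := Fin.ext hsn
        rw [hgstep n hnk]
        split
        · rw [hseq]; assumption
        · apply Submodule.subset_span
          exact ⟨σ ⟨n, hnk⟩, by simp [hseq], by rw [hseq]⟩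
  -- counting bound
  have fact4 : ∀ t, t ≤ k → t ≤ d * (g t).card + m := by
    intro t ht
    have hinj2 : Function.Injective (fun s : Fin t => σ (Fin.castLE ht s)) :=
      σ.injective.comp (Fin.castLE_injective ht)
    have hsub : ((Finset.univ.image (fun s : Fin t => σ (Fin.castLE ht s))) : Set (Fin k)) ⊆
        {ℓ : Fin k | u ℓ ∈ Submodule.span F (u '' ((g t : Set (Fin k))))} := by
      intro x hx
      simp only [Finset.coe_image, Set.mem_image, Finset.coe_univ, Set.mem_univ] at hx
      obtain ⟨s, -, rfl⟩ := hx
      exact hspan3 t (Fin.castLE ht s) s.isLt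
    have h1 : t ≤ Set.ncard {ℓ : Fin k | u ℓ ∈ Submodule.span F (u '' ((g t : Set (Fin k))))} := by
      calc t = (Finset.univ.image (fun s : Fin t => σ (Fin.castLE ht s))).card := by
              rw [Finset.card_image_of_injective _ hinj2, Finset.card_univ, Fintype.card_fin]
        _ = Set.ncard ((Finset.univ.image (fun s : Fin t => σ (Fin.castLE ht s))) :
              Set (Fin k)) := (Set.ncard_coe_finset _).symm
        _ ≤ _ := Set.ncard_le_ncard hsub (Set.toFinite _)
    exact h1.trans (hspan (g t))
  -- linear independence
  have hLI : ∀ t, (LinearIndependent F (fun x : (u '' ((g t : Set (Fin k)))) => (x : V))) ∧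
      Set.InjOn u ((g t : Set (Fin k))) := by
    intro t
    induction t with
    | zero =>
      constructor
      · have he : u '' ((g 0 : Set (Fin k))) = ∅ := by rw [hg0]; simp
        rw [he]
        exact linearIndependent_empty_type
      · rw [hg0]; exact fun x hx => by simp at hx
    | succ n ih =>
      by_cases h : n < k
      · by_cases hns : u (σ ⟨n, h⟩) ∈ Submodule.span F (u '' ((g n : Set (Fin k))))
        · rw [hgstep n h, if_pos hns]; exact ih
        · rw [hgstep n h, if_neg hns]
          have hnotim : u (σ ⟨n, h⟩) ∉ u '' ((g n : Set (Fin k))) := fun hmem =>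
            hns (Submodule.subset_span hmem)
          constructor
          · rw [Finset.coe_insert, Set.image_insert_eq]
            exact (linearIndepOn_id_insert hnotim).mpr ⟨ih.1, hns⟩
          · rw [Finset.coe_insert]
            intro x hx y hy hxy
            rcases Set.mem_insert_iff.mp hx with rfl | hx
            · rcases Set.mem_insert_iff.mp hy with rfl | hy
              · rfl
              · exact absurd ⟨y, hy, hxy.symm⟩ hnotim
            · rcases Set.mem_insert_iff.mp hy with rfl | hy
              · exact absurd ⟨x, hx, hxy⟩ hnotim
              · exact ih.2 hx hy hxy
      · have : g (n+1) = g n := by simp [hgdef, greedySet, h]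
        rw [this]; exact ih
  -- weights in sorted order
  set mu : ℕ → ℝ := fun t => if h : t < k then lam (σ ⟨t, h⟩) else 0 with hmu
  have hmu0 : ∀ t, 0 ≤ mu t := by
    intro t; simp only [hmu]; split
    · exact (hlam _).1
    · exact le_refl 0
  have hmuM : ∀ t, mu t ≤ M := by
    intro t; simp only [hmu]; split
    · exact (hlam _).2
    · exact hM.le
  have hmustep : ∀ t, mu (t+1) ≤ mu t := by
    intro t
    by_cases h : t + 1 < k
    · have ht : t < k := by omega
      simp only [hmu, dif_pos h, dif_pos ht]
      have := Tuple.monotone_sort (fun i => -lam i)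
        (a := (⟨t, ht⟩ : Fin k)) (b := ⟨t+1, h⟩) (by simp [Fin.le_def])
      simpa [hσdef] using this
    · simp only [hmu, dif_neg h]
      exact hmu0 t
  -- main numeric invariant
  have key : ∀ t, t ≤ k →
      (∑ s ∈ Finset.range t, mu s) + ((d * (g t).card + m - t : ℝ)) * mu t
        ≤ d * (∑ j ∈ g t, lam j) + m * M := by
    intro t ht
    induction t with
    | zero =>
      simp only [Finset.range_zero, Finset.sum_empty, hg0, Finset.card_empty, zero_add,
        Nat.cast_zero, mul_zero, sub_zero, add_zero]
      have : (m : ℝ) * mu 0 ≤ m * M :=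
        mul_le_mul_of_nonneg_left (hmuM 0) (Nat.cast_nonneg m)
      linarith [this]
    | succ n ih =>
      have hnk : n < k := ht
      have ihn := ih (Nat.le_of_succ_le ht)
      have hcoef : (0:ℝ) ≤ d * (g n).card + m - n := by
        have := fact4 n (Nat.le_of_succ_le ht)
        push_cast
        have : (n:ℝ) ≤ d * (g n).card + m := by exact_mod_cast this
        linarith
      have hcoef' : (0:ℝ) ≤ d * (g (n+1)).card + m - (n+1) := by
        have := fact4 (n+1) ht
        have : ((n:ℝ)+1) ≤ d * (g (n+1)).card + m := by exact_mod_cast this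
        linarith
      have hsumr : ∑ s ∈ Finset.range (n+1), mu s = (∑ s ∈ Finset.range n, mu s) + mu n :=
        Finset.sum_range_succ mu n
      have hmun : mu n = lam (σ ⟨n, hnk⟩) := by simp [hmu, hnk]
      by_cases hns : u (σ ⟨n, hnk⟩) ∈ Submodule.span F (u '' ((g n : Set (Fin k))))
      · -- skip case
        have hgeq : g (n+1) = g n := by rw [hgstep n hnk, if_pos hns]
        rw [hgeq, hsumr]
        rw [hgeq] at hcoef'
        have hstep := hmustep n
        push_cast at ihn hcoef hcoef' ⊢
        nlinarith [mul_le_mul_of_nonneg_left hstep hcoef', hmu0 n, hmu0 (n+1)]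
      · -- add case
        have hgeq : g (n+1) = insert (σ ⟨n, hnk⟩) (g n) := by rw [hgstep n hnk, if_neg hns]
        have hnm := hnotmem n hnk
        have hcard : (g (n+1)).card = (g n).card + 1 := by
          rw [hgeq, Finset.card_insert_of_notMem hnm]
        have hsum : ∑ j ∈ g (n+1), lam j = lam (σ ⟨n, hnk⟩) + ∑ j ∈ g n, lam j := by
          rw [hgeq, Finset.sum_insert hnm]
        rw [hsumr, hcard, hsum]
        have hstep := hmustep n
        have hd1 : (1:ℝ) ≤ d := by exact_mod_cast hd
        push_cast at ihn hcoef ⊢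
        have hc2 : (0:ℝ) ≤ (d:ℝ) * (g n).card + m - n + ((d:ℝ) - 1) := by linarith
        nlinarith [mul_le_mul_of_nonneg_left hstep hc2, hmu0 n, hmu0 (n+1), hmun]
  -- conclude
  refine ⟨g k, ?_, ?_⟩
  · have hli := (hLI k).1
    have hinj := (hLI k).2
    exact (linearIndepOn_iff_image hinj).mpr hli
  · have hkey := key k le_rfl
    have hsum : ∑ s ∈ Finset.range k, mu s = ∑ i, lam i := by
      rw [← Fin.sum_univ_eq_sum_range]
      have : ∀ s : Fin k, mu s = lam (σ s) := by
        intro s; simp [hmu, s.isLt]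
      rw [Finset.sum_congr rfl (fun s _ => this s)]
      exact Equiv.sum_comp σ lam
    have hcoefk : (0:ℝ) ≤ d * (g k).card + m - k := by
      have := fact4 k le_rfl
      have : (k:ℝ) ≤ d * (g k).card + m := by exact_mod_cast this
      linarith
    have hdpos : (0:ℝ) < d := by exact_mod_cast hd
    rw [div_le_iff₀ hdpos]
    have h2 : (0:ℝ) ≤ ((d * (g k).card + m - k : ℝ)) * mu k :=
      mul_nonneg hcoefk (hmu0 k)
    rw [hsum] at hkey
    nlinarith [hkey, h2]
end

section
/- Let d, ℓ, h ≥ 1 be integers, let o₁, …, o_h ∈ ℝ^d be fixed vectors, and let A = (a_{ji}) be a fixed (dℓ+1) × ℓ matrix with rational entries. Call a tuple (t₁, …, t_h) ∈ ℝ^h achievable if there exist an injective map φ : {1, …, dℓ+1} → {1, …, h} and vectors u₁, …, u_{dℓ+1} ∈ ℝ^d such that u_j = Σ_{i=1}^{ℓ} a_{ji}·u_i for all j ∈ {1, …, dℓ+1} and |⟨o_{φ(j)}, u_j⟩| = t_{φ(j)} for all j ∈ {1, …, dℓ+1}. Then there exists a finite set Φ of nonzero linear functionals on ℝ^h such that every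 achievable tuple lies in ⋃_{f ∈ Φ} ker f; that is, the set of achievable tuples is covered by finitely many (h−1)-dimensional linear hyperplanes in ℝ^h. -/
open Finset

/-- For any map `φ`, there is a nonzero coefficient vector `c` annihilating all
tuples of inner products arising from the linear parametrization. -/
private lemma aux_exists_c {d ℓ h : ℕ} (o : Fin h → EuclideanSpace ℝ (Fin d))
    (A : Matrix (Fin (d * ℓ + 1)) (Fin ℓ) ℚ) (φ : Fin (d * ℓ + 1) → Fin h) :
    ∃ c : Fin (d * ℓ + 1) → ℝ, c ≠ 0 ∧
      ∀ v : Fin ℓ → EuclideanSpace ℝ (Fin d),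
        ∑ j, c j * (inner ℝ (o (φ j)) (∑ i, (A j i : ℝ) • v i) : ℝ) = 0 := by
  set T : (Fin ℓ → EuclideanSpace ℝ (Fin d)) →ₗ[ℝ] (Fin (d * ℓ + 1) → ℝ) :=
    LinearMap.pi fun j => ((innerSL ℝ (o (φ j))).toLinearMap).comp
      (∑ i, (A j i : ℝ) • LinearMap.proj i) with hTdef
  have hT : ∀ (v : Fin ℓ → EuclideanSpace ℝ (Fin d)) j,
      T v j = (inner ℝ (o (φ j)) (∑ i, (A j i : ℝ) • v i) : ℝ) := by
    intro v j
    simp [hTdef, LinearMap.pi_apply, LinearMap.sum_apply, LinearMap.smul_apply]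
  have hrange : LinearMap.range T < ⊤ := by
    rw [lt_top_iff_ne_top]
    intro htop
    have h1 : Module.finrank ℝ (LinearMap.range T) ≤ ℓ * d := by
      refine (LinearMap.finrank_range_le T).trans_eq ?_
      rw [Module.finrank_pi_fintype]
      simp [finrank_euclideanSpace_fin]
    have h2 : Module.finrank ℝ (LinearMap.range T) = d * ℓ + 1 := by
      rw [htop, finrank_top, Module.finrank_fintype_fun_eq_card, Fintype.card_fin]
    have h3 : ℓ * d = d * ℓ := Nat.mul_comm ℓ d
    omega
  obtain ⟨g, hg0, hker⟩ := (LinearMap.range T).exists_le_ker_of_lt_top hrange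
  refine ⟨fun j => g (Pi.single j 1), ?_, ?_⟩
  · intro hc
    apply hg0
    apply LinearMap.ext
    intro x
    have hx : x = ∑ j, x j • (Pi.single j 1 : Fin (d * ℓ + 1) → ℝ) := by
      ext k; simp [Pi.single_apply, eq_comm]
    rw [hx, map_sum]
    simp only [map_smul, smul_eq_mul]
    have hz : ∀ j, g (Pi.single j (1 : ℝ)) = 0 := fun j => congrFun hc j
    simp [hz]
  · intro v
    have hgv : g (T v) = 0 := hker (LinearMap.mem_range_self T v)
    have hx : T v = ∑ j, (T v) j • (Pi.single j 1 : Fin (d * ℓ + 1) → ℝ) := by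
      ext k; simp [Pi.single_apply, eq_comm]
    rw [hx, map_sum] at hgv
    simp only [map_smul, smul_eq_mul] at hgv
    rw [← hgv]
    refine Finset.sum_congr rfl fun j _ => ?_
    rw [hT, mul_comm]

/-- The set of "achievable" tuples `(t₁, …, t_h)` — those for which there are an
injective `φ : {1, …, dℓ+1} → {1, …, h}` and vectors `u₁, …, u_{dℓ+1} ∈ ℝ^d` with
`u_j = Σᵢ a_{ji}·uᵢ` and `|⟨o_{φ(j)}, u_j⟩| = t_{φ(j)}` for all `j` — is covered by
finitely many linear hyperplanes of `ℝ^h`. -/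
theorem thm_achievable_tuples_in_hyperplanes (d ℓ h : ℕ)
    (hd : 1 ≤ d) (hℓ : 1 ≤ ℓ) (hh : 1 ≤ h)
    (o : Fin h → EuclideanSpace ℝ (Fin d))
    (A : Matrix (Fin (d * ℓ + 1)) (Fin ℓ) ℚ) :
    ∃ Φ : Finset (EuclideanSpace ℝ (Fin h) →ₗ[ℝ] ℝ),
      (∀ f ∈ Φ, f ≠ 0) ∧
      ∀ t : EuclideanSpace ℝ (Fin h),
        (∃ φ : Fin (d * ℓ + 1) → Fin h, Function.Injective φ ∧
          ∃ u : Fin (d * ℓ + 1) → EuclideanSpace ℝ (Fin d),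
            (∀ j, u j = ∑ i : Fin ℓ,
              (A j i : ℝ) • u (Fin.castLE (by nlinarith) i)) ∧
            (∀ j, |(inner ℝ (o (φ j)) (u j) : ℝ)| = t (φ j))) →
        ∃ f ∈ Φ, f t = 0 := by
  classical
  set c : (Fin (d * ℓ + 1) → Fin h) → (Fin (d * ℓ + 1) → ℝ) :=
    fun φ => (aux_exists_c o A φ).choose with hc
  have hc0 : ∀ φ, c φ ≠ 0 := fun φ => (aux_exists_c o A φ).choose_spec.1
  have hcs : ∀ φ (v : Fin ℓ → EuclideanSpace ℝ (Fin d)),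
      ∑ j, c φ j * (inner ℝ (o (φ j)) (∑ i, (A j i : ℝ) • v i) : ℝ) = 0 :=
    fun φ => (aux_exists_c o A φ).choose_spec.2
  set mkF : (Fin (d * ℓ + 1) → Fin h) → (Fin (d * ℓ + 1) → Bool) →
      (EuclideanSpace ℝ (Fin h) →ₗ[ℝ] ℝ) :=
    fun φ ε =>
      { toFun := fun t => ∑ j, ((if ε j then (1 : ℝ) else -1) * c φ j) * t (φ j)
        map_add' := by
          intro x y
          simp only [PiLp.add_apply, mul_add]
          rw [Finset.sum_add_distrib]
        map_smul' := by
          intro r x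
          simp only [PiLp.smul_apply, smul_eq_mul, RingHom.id_apply, Finset.mul_sum]
          exact Finset.sum_congr rfl fun j _ => by ring } with hmkF
  have hmkF_apply : ∀ φ ε (t : EuclideanSpace ℝ (Fin h)),
      mkF φ ε t = ∑ j, ((if ε j then (1 : ℝ) else -1) * c φ j) * t (φ j) :=
    fun φ ε t => rfl
  refine ⟨Finset.image (fun p : (Fin (d * ℓ + 1) → Fin h) × (Fin (d * ℓ + 1) → Bool) =>
      mkF p.1 p.2)
    (Finset.univ.filter fun p : (Fin (d * ℓ + 1) → Fin h) × (Fin (d * ℓ + 1) → Bool) =>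
      Function.Injective p.1), ?_, ?_⟩
  · intro f hf
    rw [Finset.mem_image] at hf
    obtain ⟨⟨φ, ε⟩, hp, rfl⟩ := hf
    rw [Finset.mem_filter] at hp
    have hinj : Function.Injective φ := hp.2
    obtain ⟨j₀, hj₀⟩ := Function.ne_iff.mp (hc0 φ)
    intro h0
    apply hj₀
    show c φ j₀ = 0
    have hval : mkF φ ε (EuclideanSpace.single (φ j₀) 1)
        = (if ε j₀ then (1 : ℝ) else -1) * c φ j₀ := by
      rw [hmkF_apply, Finset.sum_eq_single j₀]
      · simp [EuclideanSpace.single_apply]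
      · intro j _ hjne
        have hne : φ j ≠ φ j₀ := fun e => hjne (hinj e)
        simp [EuclideanSpace.single_apply, hne]
      · simp
    rw [h0] at hval
    simp only [LinearMap.zero_apply] at hval
    cases hεj : ε j₀ <;> rw [hεj] at hval <;> simp at hval <;> linarith
  · rintro t ⟨φ, hinj, u, h1, h2⟩
    set v : Fin ℓ → EuclideanSpace ℝ (Fin d) :=
      fun i => u (Fin.castLE (by nlinarith) i) with hv
    set s : Fin (d * ℓ + 1) → ℝ := fun j => (inner ℝ (o (φ j)) (u j) : ℝ) with hs
    set ε : Fin (d * ℓ + 1) → Bool := fun j => decide (0 ≤ s j) with hε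
    refine ⟨mkF φ ε, Finset.mem_image.mpr ⟨⟨φ, ε⟩,
      Finset.mem_filter.mpr ⟨Finset.mem_univ _, hinj⟩, rfl⟩, ?_⟩
    have key : ∑ j, c φ j * s j = 0 := by
      rw [← hcs φ v]
      refine Finset.sum_congr rfl fun j _ => ?_
      exact congrArg (fun w : EuclideanSpace ℝ (Fin d) =>
        c φ j * (inner ℝ (o (φ j)) w : ℝ)) (h1 j)
    have hsign : ∀ j, ((if ε j then (1 : ℝ) else -1)) * t (φ j) = s j := by
      intro j
      have habs : |s j| = t (φ j) := h2 j
      by_cases hsj : 0 ≤ s j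
      · have he : ε j = true := by simp [hε, hsj]
        rw [he, if_pos rfl, one_mul, ← habs, abs_of_nonneg hsj]
      · have he : ε j = false := by simp [hε, hsj]
        rw [he, if_neg (by simp), ← habs, abs_of_neg (not_le.mp hsj)]
        ring
    rw [hmkF_apply, ← key]
    refine Finset.sum_congr rfl fun j _ => ?_
    rw [mul_assoc, mul_comm, ← hsign j]
    ring
end

section
/- Let N be a norm on ℝ². Then for every integer k ≥ 1 there exists an injective map p : Fin (2^k) → EuclideanSpace ℝ (Fin 2) such that the number of unordered pairs {x, y} of distinct indices with N (p x − p y) = 1 is at least k·2^{k−1}. (Consequently, for every norm on ℝ² one can find n points with at least (1/2 − o(1))·n·log₂ n unit distances.) -/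
open Finset

lemma isNorm_nonneg {d : ℕ} {N : EuclideanSpace ℝ (Fin d) → ℝ} (hN : IsNorm N) (x) :
    0 ≤ N x := by
  obtain ⟨h0, hsmul, hadd⟩ := hN
  have h1 : N (-x) = N x := by
    have := hsmul (-1) x; simpa using this
  have h2 : N (x + (-x)) ≤ N x + N (-x) := hadd _ _
  rw [add_neg_cancel, (h0 0).mpr rfl, h1] at h2
  linarith

lemma isNorm_neg {d : ℕ} {N : EuclideanSpace ℝ (Fin d) → ℝ} (hN : IsNorm N) (x) :
    N (-x) = N x := by
  have := hN.2.1 (-1) x; simpa using this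

lemma sphere_infinite {N : EuclideanSpace ℝ (Fin 2) → ℝ} (hN : IsNorm N) :
    {x : EuclideanSpace ℝ (Fin 2) | N x = 1}.Infinite := by
  obtain ⟨h0, hsmul, hadd⟩ := hN
  set u : ℝ → EuclideanSpace ℝ (Fin 2) := fun t => WithLp.toLp 2 (fun j : Fin 2 => if j = 0 then 1 else t) with hu
  have hune : ∀ t, u t ≠ 0 := by
    intro t h
    have : u t 0 = 0 := by rw [h]; rfl
    simp [hu] at this
  have hpos : ∀ t, 0 < N (u t) := by
    intro t
    have hnn := isNorm_nonneg ⟨h0, hsmul, hadd⟩ (u t)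
    rcases lt_or_eq_of_le hnn with h | h
    · exact h
    · exact absurd ((h0 _).mp h.symm) (hune t)
  set f : ℝ → EuclideanSpace ℝ (Fin 2) := fun t => (N (u t))⁻¹ • u t with hf
  have hmem : ∀ t, f t ∈ {x : EuclideanSpace ℝ (Fin 2) | N x = 1} := by
    intro t
    simp only [Set.mem_setOf_eq, hf, hsmul]
    rw [abs_of_pos (inv_pos.mpr (hpos t)), inv_mul_cancel₀ (hpos t).ne']
  have hinj : Function.Injective f := by
    intro s t h
    have h0' : f s 0 = f t 0 := by rw [h]
    have h1' : f s 1 = f t 1 := by rw [h]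
    have e0 : ∀ r, f r 0 = (N (u r))⁻¹ := by intro r; simp [hf, hu, PiLp.smul_apply]
    have e1 : ∀ r, f r 1 = (N (u r))⁻¹ * r := by intro r; simp [hf, hu, PiLp.smul_apply]
    rw [e0, e0] at h0'
    rw [e1, e1, h0'] at h1'
    exact mul_left_cancel₀ (inv_pos.mpr (hpos t)).ne' h1'
  exact Set.infinite_of_injective_forall_mem hinj hmem


lemma card_false (k : ℕ) (i : Fin k) (hk : 1 ≤ k) :
    (univ.filter fun f : Fin k → Bool => f i = false).card = 2 ^ (k - 1) := by
  classical
  have hcard : (univ.filter fun f : Fin k → Bool => f i = false).card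
      = (univ.filter fun f : Fin k → Bool => f i = true).card := by
    apply Finset.card_bij' (fun f _ => Function.update f i true)
      (fun f _ => Function.update f i false)
    · intro f hf
      simp only [mem_filter, mem_univ, true_and] at hf
      funext x
      rcases eq_or_ne x i with rfl | h
      · simp [hf]
      · simp [Function.update_of_ne h]
    · intro f hf
      simp only [mem_filter, mem_univ, true_and] at hf
      funext x
      rcases eq_or_ne x i with rfl | h
      · simp [hf]
      · simp [Function.update_of_ne h]
    · intro f _; simp
    · intro f _; simp
  have htot : (univ.filter fun f : Fin k → Bool => f i = false).card
      + (univ.filter fun f : Fin k → Bool => f i = true).card = 2 ^ k := by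
    have := Finset.card_filter_add_card_filter_not
      (s := (univ : Finset (Fin k → Bool))) (p := fun f => f i = false)
    simp only [Bool.not_eq_false] at this
    rw [this]
    · simp [Finset.card_univ]
  rw [← hcard] at htot
  have h2 : 2 ^ k = 2 * 2 ^ (k - 1) := by
    conv_lhs => rw [← Nat.sub_add_cancel hk]
    rw [pow_succ]
    ring
  rw [h2, ← two_mul] at htot
  exact Nat.eq_of_mul_eq_mul_left (by norm_num) htot

lemma card_D (k : ℕ) (hk : 1 ≤ k) :
    (univ.filter fun q : Fin k × (Fin k → Bool) => q.2 q.1 = false).card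
      = k * 2 ^ (k - 1) := by
  classical
  rw [Finset.card_filter, Fintype.sum_prod_type]
  have h : ∀ i : Fin k, (∑ f : Fin k → Bool, if f i = false then 1 else 0)
      = 2 ^ (k - 1) := by
    intro i
    rw [← Finset.card_filter]
    exact card_false k i hk
  rw [Finset.sum_congr rfl fun i _ => h i, Finset.sum_const, Finset.card_univ]
  simp [mul_comm]

section
variable {N : EuclideanSpace ℝ (Fin 2) → ℝ}

lemma exists_good (hN : IsNorm N) (k : ℕ) :
    ∃ v : Fin k → EuclideanSpace ℝ (Fin 2),
      (∀ i, N (v i) = 1) ∧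
      ∀ A B : Finset (Fin k), Disjoint A B → A ≠ B →
        ∑ i ∈ A, v i ≠ ∑ i ∈ B, v i := by
  classical
  obtain ⟨u0, hu0⟩ := (sphere_infinite hN).nonempty
  suffices h : ∀ I : Finset (Fin k), ∃ v : Fin k → EuclideanSpace ℝ (Fin 2),
      (∀ i, N (v i) = 1) ∧
      ∀ A B : Finset (Fin k), A ⊆ I → B ⊆ I → Disjoint A B → A ≠ B →
        ∑ i ∈ A, v i ≠ ∑ i ∈ B, v i by
    obtain ⟨v, hv1, hv2⟩ := h univ
    exact ⟨v, hv1, fun A B hd hne => hv2 A B (subset_univ _) (subset_univ _) hd hne⟩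
  intro I
  induction I using Finset.induction_on with
  | empty =>
    refine ⟨fun _ => u0, fun _ => hu0, ?_⟩
    intro A B hA hB _ hne
    exact absurd (by rw [subset_empty.mp hA, subset_empty.mp hB]) hne
  | @insert j I hjI ih =>
    obtain ⟨v, hv1, hv2⟩ := ih
    set W : Set (EuclideanSpace ℝ (Fin 2)) :=
      (fun AB : Finset (Fin k) × Finset (Fin k) => ∑ i ∈ AB.1, v i - ∑ i ∈ AB.2, v i) ''
        Set.univ with hW
    have hWfin : W.Finite := Set.Finite.image _ Set.finite_univ
    obtain ⟨w, hw⟩ := ((sphere_infinite hN).diff hWfin).nonempty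
    obtain ⟨hw1, hw2⟩ := hw
    refine ⟨Function.update v j w, ?_, ?_⟩
    · intro i
      rcases eq_or_ne i j with rfl | h
      · rw [Function.update_self]; exact hw1
      · rw [Function.update_of_ne h]; exact hv1 i
    · intro A B hA hB hd hne heq
      have hsum : ∀ C : Finset (Fin k), j ∉ C →
          ∑ i ∈ C, Function.update v j w i = ∑ i ∈ C, v i := by
        intro C hjC
        exact Finset.sum_congr rfl fun x hx =>
          Function.update_of_ne (fun h => hjC (by rwa [← h])) _ _
      have hsum2 : ∀ C : Finset (Fin k), j ∈ C →
          ∑ i ∈ C, Function.update v j w i = w + ∑ i ∈ C.erase j, v i := by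
        intro C hjC
        rw [← Finset.add_sum_erase _ _ hjC, Function.update_self,
          hsum _ (Finset.notMem_erase _ _)]
      by_cases hjA : j ∈ A <;> by_cases hjB : j ∈ B
      · exact (Finset.disjoint_left.mp hd hjA) hjB
      · rw [hsum2 A hjA, hsum B hjB] at heq
        apply hw2
        refine ⟨(B, A.erase j), Set.mem_univ _, ?_⟩
        simp only
        rw [← heq]; abel
      · rw [hsum A hjA, hsum2 B hjB] at heq
        apply hw2
        refine ⟨(A, B.erase j), Set.mem_univ _, ?_⟩
        simp only
        rw [heq]; abel
      · rw [hsum A hjA, hsum B hjB] at heq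
        have hA' : A ⊆ I := fun x hx => (Finset.mem_insert.mp (hA hx)).resolve_left
          (fun h => hjA (h ▸ hx))
        have hB' : B ⊆ I := fun x hx => (Finset.mem_insert.mp (hB hx)).resolve_left
          (fun h => hjB (h ▸ hx))
        exact hv2 A B hA' hB' hd hne heq

end

/-- For every norm `N` on `ℝ²` and every `k ≥ 1`, there are `2^k` points in `ℝ²`
determining at least `k·2^(k-1)` unit distances according to `N` (a hypercube
embedding). -/
theorem thm_hypercube_unit_distances (N : EuclideanSpace ℝ (Fin 2) → ℝ)
    (hN : IsNorm N) (k : ℕ) (hk : 1 ≤ k) :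
    ∃ p : Fin (2 ^ k) → EuclideanSpace ℝ (Fin 2), Function.Injective p ∧
      k * 2 ^ (k - 1) ≤
        Set.ncard {q : Fin (2 ^ k) × Fin (2 ^ k) |
          q.1 < q.2 ∧ N (p q.1 - p q.2) = 1} := by
  classical
  obtain ⟨v, hv1, hv2⟩ := exists_good hN k
  have hcard : Fintype.card (Fin k → Bool) = 2 ^ k := by simp
  set E : (Fin k → Bool) ≃ Fin (2 ^ k) := Fintype.equivFinOfCardEq hcard with hE
  set P : (Fin k → Bool) → EuclideanSpace ℝ (Fin 2) :=
    fun f => ∑ i ∈ univ.filter (fun i => f i = true), v i with hP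
  have hPinj : Function.Injective P := by
    intro f g heq
    by_contra hne
    set A := univ.filter (fun i => f i = true) with hA
    set B := univ.filter (fun i => g i = true) with hB
    have hAB : A ≠ B := by
      intro h
      apply hne
      funext x
      have := Finset.ext_iff.mp h x
      simp only [hA, hB, mem_filter, mem_univ, true_and] at this
      cases hfx : f x <;> cases hgx : g x <;> simp_all
    have hsub : ∑ i ∈ A \ B, v i = ∑ i ∈ B \ A, v i := by
      have hsumAB : ∑ i ∈ A, v i = ∑ i ∈ B, v i := heq
      have h := Finset.sum_sdiff_sub_sum_sdiff (s₁ := B) (s₂ := A) (f := v)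
      rw [hsumAB, sub_self] at h
      exact sub_eq_zero.mp h
    exact hv2 (A \ B) (B \ A) disjoint_sdiff_sdiff (sdiff_ne_sdiff_iff.mpr hAB) hsub
  set p : Fin (2 ^ k) → EuclideanSpace ℝ (Fin 2) := fun n => P (E.symm n) with hp
  have hpinj : Function.Injective p := hPinj.comp E.symm.injective
  refine ⟨p, hpinj, ?_⟩
  -- the update lemma
  have hupd : ∀ (f : Fin k → Bool) (i : Fin k), f i = false →
      P (Function.update f i true) = v i + P f := by
    intro f i hfi
    have hfilter : univ.filter (fun j => Function.update f i true j = true)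
        = insert i (univ.filter (fun j => f j = true)) := by
      ext x
      simp only [mem_filter, mem_univ, true_and, mem_insert]
      rcases eq_or_ne x i with rfl | h
      · simp
      · simp [Function.update_of_ne h, h]
    have hi : i ∉ univ.filter (fun j => f j = true) := by simp [hfi]
    rw [hP]
    simp only
    rw [hfilter, Finset.sum_insert hi]
  set S := {q : Fin (2 ^ k) × Fin (2 ^ k) | q.1 < q.2 ∧ N (p q.1 - p q.2) = 1} with hS
  have hSfin : S.Finite := Set.toFinite _
  rw [Set.ncard_eq_toFinset_card S hSfin]
  rw [← card_D k hk]
  set D := univ.filter (fun q : Fin k × (Fin k → Bool) => q.2 q.1 = false) with hD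
  set g : Fin k × (Fin k → Bool) → Fin (2 ^ k) × Fin (2 ^ k) := fun q =>
    let a := E q.2
    let b := E (Function.update q.2 q.1 true)
    if a < b then (a, b) else (b, a) with hg
  apply Finset.card_le_card_of_injOn g
  · intro q hq
    simp only [hD, Finset.mem_coe, mem_filter, mem_univ, true_and] at hq
    rw [Finset.mem_coe, Set.Finite.mem_toFinset]
    obtain ⟨i, f⟩ := q
    have hfi : f i = false := hq
    have hne : f ≠ Function.update f i true := by
      intro h
      have := congrFun h i
      rw [Function.update_self, hfi] at this
      exact absurd this (by simp)
    have hne' : E f ≠ E (Function.update f i true) := fun h => hne (E.injective h)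
    have hdiff : p (E f) - p (E (Function.update f i true)) = - v i := by
      rw [hp]
      simp only [Equiv.symm_apply_apply]
      rw [hupd f i hfi]
      abel
    rw [hS, hg]
    simp only
    split_ifs with hlt
    · refine ⟨hlt, ?_⟩
      rw [hdiff, isNorm_neg hN]
      exact hv1 i
    · refine ⟨lt_of_le_of_ne (le_of_not_gt hlt) (Ne.symm hne'), ?_⟩
      rw [show p (E (Function.update f i true)) - p (E f) = v i by
        rw [hp]
        simp only [Equiv.symm_apply_apply]
        rw [hupd f i hfi]
        abel]
      exact hv1 i
  · intro q1 hq1 q2 hq2 heq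
    simp only [hD, coe_filter, Set.mem_setOf_eq, mem_univ, true_and] at hq1 hq2
    obtain ⟨i, f⟩ := q1
    obtain ⟨j, h⟩ := q2
    have hfi : f i = false := hq1
    have hhj : h j = false := hq2
    -- from heq derive the two cases
    have key : (f = h ∧ Function.update f i true = Function.update h j true) ∨
        (f = Function.update h j true ∧ Function.update f i true = h) := by
      rw [hg] at heq
      simp only at heq
      split_ifs at heq with h1 h2 h2 <;>
        [ left; right; right; left ] <;>
        (obtain ⟨e1, e2⟩ := Prod.mk.injEq .. ▸ heq) <;>
        exact ⟨E.injective (by assumption), E.injective (by assumption)⟩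
    rcases key with ⟨e1, e2⟩ | ⟨e1, e2⟩
    · subst e1
      have : i = j := by
        by_contra hij
        have := congrFun e2 i
        rw [Function.update_self, Function.update_of_ne hij, hfi] at this
        exact absurd this (by simp)
      simp [this]
    · exfalso
      rcases eq_or_ne i j with rfl | hij
      · have := congrFun e1 i
        rw [Function.update_self, hfi] at this
        exact absurd this (by simp)
      · have h1 : f j = true := by
          have := congrFun e1 j
          rwa [Function.update_self] at this
        have := congrFun e2 j
        rw [Function.update_of_ne (Ne.symm hij), h1, hhj] at this
        exact absurd this (by simp)
end
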